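/- arXiv:1807.05159 — 5 statements merged into one kernel-verified Lean document; each statement's English description precedes it below -/
import Mathlib

section
/- Let N ∈ ℕ, 0 ≤ b_N ≤ N−1, and let B_N and P_N be the strict and periodic band prototypes with half-width b_N and bandwidth w_N = min(N, 2b_N + 1). Then the ℓ²-operator norms satisfy ‖P_N‖_op = w_N and w_N·(1 − δ_N) ≤ ‖B_N‖_op ≤ w_N, where δ_N = w_N/(4N) if 2b_N + 1 ≤ N and δ_N = (1 − b_N/N)² otherwise. -/
open MeasureTheory ProbabilityTheory Filter Topology
open scoped ENNReal NNReal

noncomputable section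

/-- The ℓ²-operator norm of a matrix, i.e. the norm of the induced operator on
Euclidean space. -/
def opNorm {N : ℕ} (A : Matrix (Fin N) (Fin N) ℝ) : ℝ :=
  ‖Matrix.toEuclideanCLM (𝕜 := ℝ) A‖

/-- Strict band prototype `B_N`: entry `1` iff `|i - j| ≤ b`. -/
def strictBand (N b : ℕ) : Matrix (Fin N) (Fin N) ℝ := Matrix.of fun i j =>
  if ((i : ℤ) - (j : ℤ)).natAbs ≤ b then 1 else 0

/-- Periodic band prototype `P_N`: entry `1` iff `|i - j|_N ≤ b`, where
`|k|_N = min (|k|, N - |k|)`. -/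
def periodicBand (N b : ℕ) : Matrix (Fin N) (Fin N) ℝ := Matrix.of fun i j =>
  if min ((i : ℤ) - (j : ℤ)).natAbs (N - ((i : ℤ) - (j : ℤ)).natAbs) ≤ b then 1 else 0

/-- Entrywise multiplication by a band prototype. -/
def bandMask {N : ℕ} (B A : Matrix (Fin N) (Fin N) ℝ) : Matrix (Fin N) (Fin N) ℝ :=
  Matrix.of fun i j => B i j * A i j

lemma clm_apply {N : ℕ} (A : Matrix (Fin N) (Fin N) ℝ) (x : EuclideanSpace ℝ (Fin N))
    (i : Fin N) : Matrix.toEuclideanCLM (𝕜 := ℝ) A x i = ∑ j, A i j * x j := by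
  have h := congrFun (Matrix.ofLp_toEuclideanCLM A x) i
  simpa [Matrix.toLin'_apply, Matrix.mulVec, dotProduct] using h

/-- Schur-type bound. -/
lemma opNorm_le_of_sums {N : ℕ} (A : Matrix (Fin N) (Fin N) ℝ) (c : ℝ) (hc : 0 ≤ c)
    (h0 : ∀ i j, 0 ≤ A i j) (hrow : ∀ i, ∑ j, A i j ≤ c) (hcol : ∀ j, ∑ i, A i j ≤ c) :
    opNorm A ≤ c := by
  apply ContinuousLinearMap.opNorm_le_bound _ hc
  intro x
  set T := Matrix.toEuclideanCLM (𝕜 := ℝ) A with hT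
  have key : ∑ i, (T x i) ^ 2 ≤ c ^ 2 * ∑ i, (x i) ^ 2 := by
    have row : ∀ i, (T x i) ^ 2 ≤ c * ∑ j, A i j * (x j) ^ 2 := by
      intro i
      rw [clm_apply]
      have cs : (∑ j, A i j * x j) ^ 2 ≤ (∑ j, A i j) * ∑ j, A i j * (x j) ^ 2 := by
        have h := Finset.sum_mul_sq_le_sq_mul_sq Finset.univ
          (fun j => Real.sqrt (A i j)) (fun j => Real.sqrt (A i j) * x j)
        have e1 : ∀ j : Fin N, Real.sqrt (A i j) * (Real.sqrt (A i j) * x j) = A i j * x j := by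
          intro j; rw [← mul_assoc, Real.mul_self_sqrt (h0 i j)]
        have e2 : ∀ j : Fin N, Real.sqrt (A i j) ^ 2 = A i j := fun j => Real.sq_sqrt (h0 i j)
        have e3 : ∀ j : Fin N, (Real.sqrt (A i j) * x j) ^ 2 = A i j * (x j) ^ 2 := by
          intro j; rw [mul_pow, e2 j]
        simp only [e1, e2, e3] at h
        exact h
      have h2 : (∑ j, A i j) * (∑ j, A i j * (x j) ^ 2) ≤ c * ∑ j, A i j * (x j) ^ 2 := by
        apply mul_le_mul_of_nonneg_right (hrow i)
        exact Finset.sum_nonneg fun j _ => mul_nonneg (h0 i j) (sq_nonneg _)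
      exact le_trans cs h2
    calc ∑ i, (T x i) ^ 2 ≤ ∑ i, c * ∑ j, A i j * (x j) ^ 2 :=
          Finset.sum_le_sum fun i _ => row i
      _ = c * ∑ j, (∑ i, A i j) * (x j) ^ 2 := by
          rw [← Finset.mul_sum, Finset.sum_comm]
          congr 1; exact Finset.sum_congr rfl fun j _ => (Finset.sum_mul _ _ _).symm
      _ ≤ c * ∑ j, c * (x j) ^ 2 := by
          apply mul_le_mul_of_nonneg_left _ hc
          exact Finset.sum_le_sum fun j _ =>
            mul_le_mul_of_nonneg_right (hcol j) (sq_nonneg _)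
      _ = c ^ 2 * ∑ i, (x i) ^ 2 := by rw [← Finset.mul_sum]; ring
  rw [EuclideanSpace.norm_eq, EuclideanSpace.norm_eq]
  simp only [Real.norm_eq_abs, sq_abs]
  calc Real.sqrt (∑ i, (T x i) ^ 2) ≤ Real.sqrt (c ^ 2 * ∑ i, (x i) ^ 2) :=
        Real.sqrt_le_sqrt key
    _ = c * Real.sqrt (∑ i, (x i) ^ 2) := by
        rw [Real.sqrt_mul (sq_nonneg c), Real.sqrt_sq hc]

/-- Lower bound via the all-ones test vector. -/
lemma sum_le_opNorm_mul {N : ℕ} (A : Matrix (Fin N) (Fin N) ℝ) :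
    ∑ i, ∑ j, A i j ≤ opNorm A * N := by
  set v : EuclideanSpace ℝ (Fin N) := (WithLp.equiv 2 (Fin N → ℝ)).symm (fun _ => 1) with hv
  set T := Matrix.toEuclideanCLM (𝕜 := ℝ) A with hT
  have hvi : ∀ i, v i = 1 := fun i => rfl
  have hnv : ‖v‖ = Real.sqrt N := by
    rw [EuclideanSpace.norm_eq]
    simp [hvi]
  have hinner : (inner ℝ v (T v) : ℝ) = ∑ i, ∑ j, A i j := by
    rw [PiLp.inner_apply]
    simp only [RCLike.inner_apply, starRingEnd_apply, star_trivial, hvi, one_mul]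
    exact Finset.sum_congr rfl fun i _ => by rw [clm_apply]; simp [hvi]
  have h1 : (inner ℝ v (T v) : ℝ) ≤ ‖v‖ * ‖T v‖ := real_inner_le_norm v (T v)
  have h2 : ‖T v‖ ≤ ‖T‖ * ‖v‖ := T.le_opNorm v
  have h3 : (inner ℝ v (T v) : ℝ) ≤ ‖T‖ * (Real.sqrt N * Real.sqrt N) := by
    calc (inner ℝ v (T v) : ℝ) ≤ ‖v‖ * ‖T v‖ := h1
      _ ≤ ‖v‖ * (‖T‖ * ‖v‖) := mul_le_mul_of_nonneg_left h2 (norm_nonneg v)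
      _ = ‖T‖ * (Real.sqrt N * Real.sqrt N) := by rw [hnv]; ring
  rw [Real.mul_self_sqrt (Nat.cast_nonneg N)] at h3
  rw [← hinner]
  exact h3

/-- Row sums of the periodic band. -/
lemma periodic_row_sum {N b : ℕ} (hb : b < N) (i : Fin N) :
    ∑ j, periodicBand N b i j = ((min N (2 * b + 1) : ℕ) : ℝ) := by
  have : NeZero N := ⟨by omega⟩
  have key : ∀ j : Fin N, periodicBand N b i j =
      (fun k : Fin N => if min (k : ℕ) (N - (k : ℕ)) ≤ b then (1:ℝ) else 0)
        ((Equiv.subRight i) j) := by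
    intro j
    simp only [Equiv.subRight_apply, periodicBand, Matrix.of_apply]
    congr 1
    have hd := Int.natAbs_eq ((i : ℤ) - (j : ℤ))
    have hij : (i : ℕ) < N := i.isLt
    have hjj : (j : ℕ) < N := j.isLt
    have hk : (((j - i : Fin N) : ℕ) + (i : ℕ)) % N = (j : ℕ) := by
      have := congrArg Fin.val (sub_add_cancel j i)
      rwa [Fin.add_def] at this
    have hkN : ((j - i : Fin N) : ℕ) < N := (j - i).isLt
    have hor : ((j - i : Fin N) : ℕ) + (i : ℕ) = (j : ℕ) ∨
        ((j - i : Fin N) : ℕ) + (i : ℕ) = (j : ℕ) + N := by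
      rcases Nat.lt_or_ge (((j - i : Fin N) : ℕ) + (i : ℕ)) N with h | h
      · left; rwa [Nat.mod_eq_of_lt h] at hk
      · right
        rw [Nat.mod_eq_sub_mod h, Nat.mod_eq_of_lt (by omega)] at hk
        omega
    simp only [eq_iff_iff]
    omega
  have hse := Fintype.sum_equiv (Equiv.subRight i) (fun j => periodicBand N b i j)
    (fun k : Fin N => if min (k : ℕ) (N - (k : ℕ)) ≤ b then (1:ℝ) else 0) key
  rw [hse]
  rw [Fin.sum_univ_eq_sum_range (fun k => if min k (N - k) ≤ b then (1:ℝ) else 0)]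
  rw [Finset.sum_boole]
  rw [Nat.cast_inj]
  rcases le_or_gt (2 * b + 1) N with h | h
  · have hfil : (Finset.range N).filter (fun k => min k (N - k) ≤ b) =
        Finset.range (b + 1) ∪ Finset.Ico (N - b) N := by
      ext k
      simp only [Finset.mem_filter, Finset.mem_range, Finset.mem_union, Finset.mem_Ico]
      omega
    rw [hfil, Finset.card_union_of_disjoint, Finset.card_range, Nat.card_Ico]
    · omega
    · rw [Finset.disjoint_left]
      intro k hk1 hk2
      simp only [Finset.mem_range] at hk1
      simp only [Finset.mem_Ico] at hk2
      omega
  · have hfil : (Finset.range N).filter (fun k => min k (N - k) ≤ b) = Finset.range N := by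
      ext k
      simp only [Finset.mem_filter, Finset.mem_range, and_iff_left_iff_imp]
      omega
    rw [hfil, Finset.card_range]
    omega

lemma periodic_symm {N b : ℕ} (i j : Fin N) :
    periodicBand N b i j = periodicBand N b j i := by
  simp only [periodicBand, Matrix.of_apply]
  rw [show ((i : ℤ) - (j : ℤ)).natAbs = ((j : ℤ) - (i : ℤ)).natAbs by
    rw [← Int.natAbs_neg, neg_sub]]

lemma periodic_nonneg {N b : ℕ} (i j : Fin N) : 0 ≤ periodicBand N b i j := by
  simp only [periodicBand, Matrix.of_apply]
  split_ifs <;> norm_num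

lemma strict_nonneg {N b : ℕ} (i j : Fin N) : 0 ≤ strictBand N b i j := by
  simp only [strictBand, Matrix.of_apply]
  split_ifs <;> norm_num

lemma strict_le_periodic {N b : ℕ} (i j : Fin N) :
    strictBand N b i j ≤ periodicBand N b i j := by
  simp only [strictBand, periodicBand, Matrix.of_apply]
  split_ifs with h1 h2
  · exact le_refl _
  · exact absurd (le_trans (min_le_left _ _) h1) h2
  · norm_num
  · exact le_refl _

/-- Total (ℕ-valued) count for the strict band. -/
lemma strict_count (b : ℕ) : ∀ N : ℕ, b + 1 ≤ N →
    (∑ i ∈ Finset.range N, ∑ j ∈ Finset.range N,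
      if ((i : ℤ) - (j : ℤ)).natAbs ≤ b then 1 else 0) + b * (b + 1) = N * (2 * b + 1) := by
  refine Nat.le_induction ?_ ?_
  · have h1 : ∀ i ∈ Finset.range (b + 1), ∀ j ∈ Finset.range (b + 1),
        (if ((i : ℤ) - (j : ℤ)).natAbs ≤ b then (1:ℕ) else 0) = 1 := by
      intro i hi j hj
      simp only [Finset.mem_range] at hi hj
      rw [if_pos]
      omega
    rw [Finset.sum_congr rfl (fun i hi => Finset.sum_congr rfl (fun j hj => h1 i hi j hj))]
    simp only [Finset.sum_const, Finset.card_range, smul_eq_mul, mul_one]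
    ring
  · intro N hN ih
    have hside : ∀ (f : ℕ → ℤ), (∀ k, f k = (k : ℤ) - N ∨ f k = (N : ℤ) - k) →
        (∑ k ∈ Finset.range N, if (f k).natAbs ≤ b then (1:ℕ) else 0) = b := by
      intro f hf
      rw [Finset.sum_boole]
      have hfil : (Finset.range N).filter (fun k => (f k).natAbs ≤ b) =
          Finset.Ico (N - b) N := by
        ext k
        simp only [Finset.mem_filter, Finset.mem_range, Finset.mem_Ico]
        rcases hf k with h | h <;> rw [h] <;> omega
      rw [hfil, Nat.card_Ico]
      simp only [Nat.cast_id]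
      omega
    simp only [Finset.sum_range_succ]
    rw [Finset.sum_add_distrib]
    have h1 : (∑ i ∈ Finset.range N, if ((i : ℤ) - (N : ℤ)).natAbs ≤ b then (1:ℕ) else 0)
        = b := hside _ (fun k => Or.inl rfl)
    have h2 : (∑ j ∈ Finset.range N, if ((N : ℤ) - (j : ℤ)).natAbs ≤ b then (1:ℕ) else 0)
        = b := hside _ (fun k => Or.inr rfl)
    rw [h1, h2]
    rw [if_pos (by simp)]
    have e : (N + 1) * (2 * b + 1) = N * (2 * b + 1) + (2 * b + 1) := by ring
    rw [e, ← ih]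
    ring

/-- Operator norms of the band prototypes: `‖P_N‖_op = w_N` and
`w_N (1 - δ_N) ≤ ‖B_N‖_op ≤ w_N`, where `δ_N = w_N/(4N)` if `2b+1 ≤ N` and
`δ_N = (1 - b/N)²` otherwise. -/
theorem stmt4 (N b : ℕ) (hb : b < N) :
    opNorm (periodicBand N b) = ((min N (2 * b + 1) : ℕ) : ℝ) ∧
    ((min N (2 * b + 1) : ℕ) : ℝ) *
        (1 - (if 2 * b + 1 ≤ N then ((min N (2 * b + 1) : ℕ) : ℝ) / (4 * N)
              else (1 - (b : ℝ) / N) ^ 2)) ≤ opNorm (strictBand N b) ∧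
    opNorm (strictBand N b) ≤ ((min N (2 * b + 1) : ℕ) : ℝ) := by
  have hN : 0 < N := by omega
  have hNr : (0:ℝ) < N := by exact_mod_cast hN
  set w : ℕ := min N (2 * b + 1) with hw
  have hwr : (0:ℝ) ≤ (w:ℝ) := Nat.cast_nonneg w
  -- upper bound for P
  have hPle : opNorm (periodicBand N b) ≤ (w : ℝ) := by
    apply opNorm_le_of_sums _ _ hwr periodic_nonneg
    · intro i; rw [periodic_row_sum hb i]
    · intro j
      rw [Finset.sum_congr rfl (fun i _ => periodic_symm i j)]
      rw [periodic_row_sum hb j]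
  -- lower bound for P
  have hPge : (w : ℝ) ≤ opNorm (periodicBand N b) := by
    have hsum : ∑ i, ∑ j, periodicBand N b i j = (w : ℝ) * N := by
      rw [Finset.sum_congr rfl (fun i _ => periodic_row_sum hb i)]
      rw [Finset.sum_const, Finset.card_univ, Fintype.card_fin, nsmul_eq_mul, mul_comm]
    have h := sum_le_opNorm_mul (periodicBand N b)
    rw [hsum] at h
    exact le_of_mul_le_mul_right h hNr
  -- upper bound for B
  have hBle : opNorm (strictBand N b) ≤ (w : ℝ) := by
    apply opNorm_le_of_sums _ _ hwr strict_nonneg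
    · intro i
      calc ∑ j, strictBand N b i j ≤ ∑ j, periodicBand N b i j :=
            Finset.sum_le_sum fun j _ => strict_le_periodic i j
        _ = (w : ℝ) := periodic_row_sum hb i
    · intro j
      calc ∑ i, strictBand N b i j ≤ ∑ i, periodicBand N b i j :=
            Finset.sum_le_sum fun i _ => strict_le_periodic i j
        _ = ∑ i, periodicBand N b j i := Finset.sum_congr rfl fun i _ => periodic_symm i j
        _ = (w : ℝ) := periodic_row_sum hb j
  -- total sum of B
  have hBsum : ∑ i, ∑ j, strictBand N b i j = (N : ℝ) * (2 * b + 1) - b * (b + 1) := by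
    have hc := strict_count b N hb
    have hfin : ∑ i, ∑ j, strictBand N b i j =
        ∑ i ∈ Finset.range N, ∑ j ∈ Finset.range N,
          if ((i : ℤ) - (j : ℤ)).natAbs ≤ b then (1:ℝ) else 0 := by
      rw [← Fin.sum_univ_eq_sum_range (fun i => ∑ j ∈ Finset.range N,
        if ((i : ℤ) - (j : ℤ)).natAbs ≤ b then (1:ℝ) else 0)]
      refine Finset.sum_congr rfl fun i _ => ?_
      rw [← Fin.sum_univ_eq_sum_range (fun j =>
        if (((i : ℕ) : ℤ) - (j : ℤ)).natAbs ≤ b then (1:ℝ) else 0)]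
      rfl
    have hcast : (∑ i ∈ Finset.range N, ∑ j ∈ Finset.range N,
        if ((i : ℤ) - (j : ℤ)).natAbs ≤ b then (1:ℝ) else 0) =
        ((∑ i ∈ Finset.range N, ∑ j ∈ Finset.range N,
          if ((i : ℤ) - (j : ℤ)).natAbs ≤ b then (1:ℕ) else 0 : ℕ) : ℝ) := by
      push_cast
      rfl
    rw [hfin, hcast]
    have : ((∑ i ∈ Finset.range N, ∑ j ∈ Finset.range N,
        if ((i : ℤ) - (j : ℤ)).natAbs ≤ b then (1:ℕ) else 0 : ℕ) : ℝ) + b * (b+1)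
        = (N : ℝ) * (2 * b + 1) := by
      exact_mod_cast congrArg (Nat.cast : ℕ → ℝ) hc
    linarith [this]
  -- lower bound for B
  have hBge : (w : ℝ) * (1 - (if 2 * b + 1 ≤ N then (w : ℝ) / (4 * N)
      else (1 - (b : ℝ) / N) ^ 2)) ≤ opNorm (strictBand N b) := by
    have hS := sum_le_opNorm_mul (strictBand N b)
    rw [hBsum] at hS
    have hmain : (w : ℝ) * (1 - (if 2 * b + 1 ≤ N then (w : ℝ) / (4 * N)
        else (1 - (b : ℝ) / N) ^ 2)) * N ≤ (N : ℝ) * (2 * b + 1) - b * (b + 1) := by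
      rcases le_or_gt (2 * b + 1) N with h | h
      · rw [if_pos h]
        have hwv : (w : ℝ) = 2 * (b:ℝ) + 1 := by
          rw [hw, min_eq_right h]; push_cast; ring
        rw [hwv]
        have expand : (2 * (b:ℝ) + 1) * (1 - (2 * (b:ℝ) + 1) / (4 * N)) * N
            = (2 * (b:ℝ) + 1) * N - (2 * (b:ℝ) + 1) ^ 2 / 4 := by
          field_simp
        rw [expand]
        have hq : (b:ℝ) * (b + 1) ≤ (2 * (b:ℝ) + 1) ^ 2 / 4 := by nlinarith
        linarith
      · rw [if_neg (not_le.mpr h)]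
        have hwv : (w : ℝ) = (N : ℝ) := by rw [hw, min_eq_left (by omega)]
        rw [hwv]
        have hbN : (b : ℝ) < N := by exact_mod_cast hb
        have expand : (N:ℝ) * (1 - (1 - (b : ℝ) / N) ^ 2) * N
            = 2 * (N:ℝ) * b - (b:ℝ) ^ 2 := by
          field_simp
          ring
        rw [expand]
        nlinarith
    exact le_of_mul_le_mul_right (le_trans hmain hS) hNr
  exact ⟨le_antisymm hPle hPge, hBge, hBle⟩

end
end

section
/- Let A and R be real symmetric N×N matrices and let ρ and μ denote the eigenvalue distribution measures of A and of B := A + R respectively. Then for every bounded function f ∈ C¹(ℝ) one has |∫f dρ − ∫f dμ| ≤ 2·(rank(R)/N)·‖f'‖_{L¹}. -/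
open MeasureTheory ProbabilityTheory Filter Topology
open scoped ENNReal NNReal

noncomputable section

/-- The eigenvalue distribution measure of a real symmetric `N × N` matrix:
`(1/N) * Σ_j δ_{λ_j}`. -/
def evMeasure {N : ℕ} (A : Matrix (Fin N) (Fin N) ℝ) : Measure ℝ :=
  if hA : A.IsHermitian then
    (N : ℝ≥0∞)⁻¹ • ∑ j : Fin N, Measure.dirac (hA.eigenvalues j)
  else 0

namespace Stmt8Aux

open Finset
open scoped InnerProductSpace

variable {N : ℕ}

lemma toEuclideanLin_eigenvectorBasis {M : Matrix (Fin N) (Fin N) ℝ} (hM : M.IsHermitian)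
    (j : Fin N) :
    Matrix.toEuclideanLin M (hM.eigenvectorBasis j) = hM.eigenvalues j • hM.eigenvectorBasis j := by
  have := hM.mulVec_eigenvectorBasis j
  ext i
  exact congrFun this i

lemma inner_toEuclideanLin {M : Matrix (Fin N) (Fin N) ℝ} (hM : M.IsHermitian)
    (v : EuclideanSpace ℝ (Fin N)) :
    ⟪v, Matrix.toEuclideanLin M v⟫_ℝ
      = ∑ j, hM.eigenvalues j * (hM.eigenvectorBasis.repr v j)^2 := by
  set e := hM.eigenvectorBasis
  rw [← e.sum_inner_mul_inner v (Matrix.toEuclideanLin M v)]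
  refine Finset.sum_congr rfl fun j _ => ?_
  have hsym := (Matrix.isHermitian_iff_isSymmetric.1 hM)
  have : ⟪e j, Matrix.toEuclideanLin M v⟫_ℝ = hM.eigenvalues j * ⟪e j, v⟫_ℝ := by
    rw [← hsym (e j) v, toEuclideanLin_eigenvectorBasis hM j, inner_smul_left]
    simp [e]
  rw [this, e.repr_apply_apply, real_inner_comm v (e j)]
  ring

lemma inner_self_eq_sum_repr (e : OrthonormalBasis (Fin N) ℝ (EuclideanSpace ℝ (Fin N)))
    (v : EuclideanSpace ℝ (Fin N)) :
    ⟪v, v⟫_ℝ = ∑ j, (e.repr v j)^2 := by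
  rw [← e.sum_inner_mul_inner v v]
  refine Finset.sum_congr rfl fun j _ => ?_
  rw [e.repr_apply_apply, real_inner_comm v (e j)]
  ring

lemma repr_zero_of_mem_span (e : OrthonormalBasis (Fin N) ℝ (EuclideanSpace ℝ (Fin N)))
    (t : Finset (Fin N)) {v : EuclideanSpace ℝ (Fin N)}
    (hv : v ∈ Submodule.span ℝ (e '' ↑t)) {j : Fin N} (hj : j ∉ t) :
    e.repr v j = 0 := by
  induction hv using Submodule.span_induction with
  | mem w hw =>
    obtain ⟨i, hi, rfl⟩ := hw
    rw [e.repr_apply_apply]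
    exact e.orthonormal.2 (fun h : j = i => hj (h ▸ hi))
  | zero => simp
  | add w₁ w₂ _ _ h1 h2 => simp [map_add, h1, h2]
  | smul c w _ h => simp [_root_.map_smul, h]

lemma finrank_span_image (e : OrthonormalBasis (Fin N) ℝ (EuclideanSpace ℝ (Fin N)))
    (t : Finset (Fin N)) :
    Module.finrank ℝ (Submodule.span ℝ (e '' ↑t)) = t.card := by
  have hli : LinearIndependent ℝ (fun i : {x // x ∈ t} => e i) :=
    e.orthonormal.linearIndependent.comp _ Subtype.val_injective
  have himg : Set.range (fun i : {x // x ∈ t} => e (i : Fin N)) = e '' ↑t := by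
    ext w; simp [Set.mem_image]
  rw [← himg, finrank_span_eq_card hli, Fintype.card_coe]

lemma rank_toEuclideanLin (R : Matrix (Fin N) (Fin N) ℝ) :
    Module.finrank ℝ (LinearMap.range (Matrix.toEuclideanLin R)) = R.rank := by
  rw [Matrix.rank_eq_finrank_range_toLin R (PiLp.basisFun 2 ℝ (Fin N)) (PiLp.basisFun 2 ℝ (Fin N))]
  congr 1

lemma rank_neg' (R : Matrix (Fin N) (Fin N) ℝ) : (-R).rank = R.rank := by
  unfold Matrix.rank
  have : (-R).mulVecLin = -R.mulVecLin := by ext v; simp [Matrix.neg_mulVec]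
  rw [this, LinearMap.range_neg]

/-- The number of eigenvalues `≥ x`, as a function of the matrix. -/
def evCount (M : Matrix (Fin N) (Fin N) ℝ) (x : ℝ) : ℕ :=
  if h : M.IsHermitian then (univ.filter fun j => x ≤ h.eigenvalues j).card else 0

lemma evCount_key (A R : Matrix (Fin N) (Fin N) ℝ) (hA : A.IsHermitian) (hR : R.IsHermitian)
    (x : ℝ) : evCount A x ≤ evCount (A + R) x + R.rank := by
  classical
  have hB : (A + R).IsHermitian := hA.add hR
  rw [evCount, evCount, dif_pos hA, dif_pos hB]
  set eA := hA.eigenvectorBasis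
  set eB := hB.eigenvectorBasis
  set tA : Finset (Fin N) := univ.filter fun j => x ≤ hA.eigenvalues j with htA
  set sB : Finset (Fin N) := univ.filter fun j => ¬ x ≤ hB.eigenvalues j with hsB
  set P : Submodule ℝ (EuclideanSpace ℝ (Fin N)) := Submodule.span ℝ (eA '' ↑tA)
  set K : Submodule ℝ (EuclideanSpace ℝ (Fin N)) :=
    LinearMap.ker (Matrix.toEuclideanLin R) with hKdef
  set W : Submodule ℝ (EuclideanSpace ℝ (Fin N)) := Submodule.span ℝ (eB '' ↑sB)
  have hdimE : Module.finrank ℝ (EuclideanSpace ℝ (Fin N)) = N := by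
    simp [finrank_euclideanSpace]
  have hPbound : ∀ v ∈ P, x * ⟪v, v⟫_ℝ ≤ ⟪v, Matrix.toEuclideanLin A v⟫_ℝ := by
    intro v hv
    rw [inner_toEuclideanLin hA, inner_self_eq_sum_repr eA, Finset.mul_sum]
    refine Finset.sum_le_sum fun j _ => ?_
    by_cases hj : j ∈ tA
    · have : x ≤ hA.eigenvalues j := by simpa [htA] using hj
      nlinarith [sq_nonneg (eA.repr v j)]
    · rw [repr_zero_of_mem_span eA tA hv hj]; simp
  have hWbound : ∀ v ∈ W, v ≠ 0 → ⟪v, Matrix.toEuclideanLin (A + R) v⟫_ℝ < x * ⟪v, v⟫_ℝ := by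
    intro v hv hv0
    rw [inner_toEuclideanLin hB, inner_self_eq_sum_repr eB, Finset.mul_sum]
    have hex : ∃ j, eB.repr v j ≠ 0 := by
      by_contra h
      push_neg at h
      exact hv0 (by simpa using eB.repr.map_eq_zero_iff.1 (by ext i; simpa using h i : eB.repr v = 0))
    obtain ⟨j0, hj0⟩ := hex
    have hj0s : j0 ∈ sB := by
      by_contra hj
      exact hj0 (repr_zero_of_mem_span eB sB hv hj)
    refine Finset.sum_lt_sum (fun j _ => ?_) ⟨j0, Finset.mem_univ j0, ?_⟩
    · by_cases hj : j ∈ sB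
      · have : hB.eigenvalues j < x := by
          have := (Finset.mem_filter.1 hj).2; linarith [not_le.1 this]
        nlinarith [sq_nonneg (eB.repr v j)]
      · rw [repr_zero_of_mem_span eB sB hv hj]; simp
    · have h1 : hB.eigenvalues j0 < x := by
        have := (Finset.mem_filter.1 hj0s).2; linarith [not_le.1 this]
      have h2 : 0 < (eB.repr v j0)^2 := by positivity
      nlinarith
  have hbot : (P ⊓ K) ⊓ W = ⊥ := by
    rw [Submodule.eq_bot_iff]
    rintro v ⟨⟨hvP, hvK⟩, hvW⟩
    by_contra hv0
    have hK : Matrix.toEuclideanLin (A + R) v = Matrix.toEuclideanLin A v := by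
      have : Matrix.toEuclideanLin R v = 0 := hvK
      rw [map_add]
      simp [LinearMap.add_apply, this]
    have h1 := hPbound v hvP
    have h2 := hWbound v hvW hv0
    rw [hK] at h2
    linarith
  have hPK : Module.finrank ℝ ↥(P ⊓ K) + N ≥ Module.finrank ℝ P + Module.finrank ℝ K := by
    have := Submodule.finrank_sup_add_finrank_inf_eq P K
    have hle : Module.finrank ℝ ↥(P ⊔ K) ≤ N :=
      le_trans (Submodule.finrank_le _) (le_of_eq hdimE)
    omega
  have hVW : Module.finrank ℝ ↥(P ⊓ K) + Module.finrank ℝ W ≤ N := by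
    have := Submodule.finrank_sup_add_finrank_inf_eq (P ⊓ K) W
    rw [hbot] at this
    have hle : Module.finrank ℝ ↥((P ⊓ K) ⊔ W) ≤ N :=
      le_trans (Submodule.finrank_le _) (le_of_eq hdimE)
    simp at this
    omega
  have hK' : Module.finrank ℝ K + R.rank = N := by
    have h := LinearMap.finrank_range_add_finrank_ker (Matrix.toEuclideanLin R)
    rw [rank_toEuclideanLin, hdimE, ← hKdef] at h
    omega
  have hP' : Module.finrank ℝ P = tA.card := finrank_span_image eA tA
  have hW' : Module.finrank ℝ W = sB.card := finrank_span_image eB sB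
  have hcard : (univ.filter fun j => x ≤ hB.eigenvalues j).card + sB.card = N := by
    rw [hsB, Finset.card_filter_add_card_filter_not]
    simp
  omega

lemma integrable_dirac'' {f : ℝ → ℝ} (hf : Continuous f) (a : ℝ) :
    Integrable f (Measure.dirac a) := by
  refine ⟨hf.aestronglyMeasurable, ?_⟩
  rw [HasFiniteIntegral, lintegral_dirac]
  exact ENNReal.coe_lt_top

lemma integral_evMeasure {A : Matrix (Fin N) (Fin N) ℝ} (hA : A.IsHermitian)
    (f : ℝ → ℝ) (hf : Continuous f) :
    ∫ x, f x ∂(evMeasure A) = (N : ℝ)⁻¹ * ∑ j, f (hA.eigenvalues j) := by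
  rw [evMeasure, dif_pos hA, integral_smul_measure,
    integral_finset_sum_measure (fun j _ => integrable_dirac'' hf _)]
  simp [integral_dirac' _ _ hf.stronglyMeasurable, smul_eq_mul]

end Stmt8Aux

open Stmt8Aux Finset

/-- For real symmetric `A`, `R` and any bounded `C¹` function `f` with
integrable derivative, the eigenvalue distribution measures `ρ` of `A` and `μ` of `A + R`
satisfy `|∫f dρ - ∫f dμ| ≤ 2 (rank R / N) ‖f'‖_{L¹}`. -/
theorem stmt8 {N : ℕ} (A R : Matrix (Fin N) (Fin N) ℝ)
    (hA : A.IsHermitian) (hR : R.IsHermitian)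
    (f : ℝ → ℝ) (hf : ContDiff ℝ 1 f) (hfb : ∃ D, ∀ x, |f x| ≤ D)
    (hf' : Integrable (deriv f)) :
    |(∫ x, f x ∂(evMeasure A)) - ∫ x, f x ∂(evMeasure (A + R))| ≤
      2 * ((R.rank : ℝ) / N) * ∫ x, |deriv f x| := by
  classical
  have hB : (A + R).IsHermitian := hA.add hR
  have hc : Continuous f := hf.continuous
  have hd : Continuous (deriv f) := hf.continuous_deriv le_rfl
  set α := hA.eigenvalues with hα
  set β := hB.eigenvalues with hβ
  -- counting bound
  have hcount : ∀ x : ℝ,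
      |(((univ.filter fun j => x ≤ α j).card : ℝ)
        - ((univ.filter fun j => x ≤ β j).card : ℝ))| ≤ (R.rank : ℝ) := by
    intro x
    have h1 := evCount_key A R hA hR x
    have h2 := evCount_key (A + R) (-R) hB hR.neg x
    rw [add_neg_cancel_right, rank_neg'] at h2
    rw [evCount, evCount, dif_pos hA, dif_pos hB] at h1 h2
    rw [abs_sub_le_iff]
    constructor
    · have h1' : ((univ.filter fun j => x ≤ α j).card : ℝ)
          ≤ ((univ.filter fun j => x ≤ β j).card : ℝ) + R.rank := by exact_mod_cast h1
      linarith
    · have h2' : ((univ.filter fun j => x ≤ β j).card : ℝ)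
          ≤ ((univ.filter fun j => x ≤ α j).card : ℝ) + R.rank := by exact_mod_cast h2
      linarith
  -- FTC setup
  set u : ℝ → ℝ → ℝ := fun a x =>
    (Set.Ioc 0 a).indicator (deriv f) x - (Set.Ioc a 0).indicator (deriv f) x with hu
  have hu_int : ∀ a, Integrable (u a) := fun a =>
    (hf'.indicator measurableSet_Ioc).sub (hf'.indicator measurableSet_Ioc)
  have hstep1 : ∀ a, f a - f 0 = ∫ x, u a x := by
    intro a
    have h1 : ∫ x in (0:ℝ)..a, deriv f x = f a - f 0 :=
      intervalIntegral.integral_deriv_eq_sub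
        (fun x _ => (hf.differentiable one_ne_zero).differentiableAt)
        (hd.intervalIntegrable 0 a)
    rw [← h1, intervalIntegral]
    rw [← integral_indicator measurableSet_Ioc, ← integral_indicator measurableSet_Ioc,
      ← integral_sub (hf'.indicator measurableSet_Ioc) (hf'.indicator measurableSet_Ioc)]
  have hupt : ∀ a x, u a x
      = deriv f x * ((if x ≤ a then (1:ℝ) else 0) - (if x ≤ (0:ℝ) then (1:ℝ) else 0)) := by
    intro a x
    rw [hu]
    by_cases h1 : x ≤ a <;> by_cases h3 : x ≤ (0:ℝ) <;>
      simp [Set.indicator_apply, Set.mem_Ioc, h1, h3, not_le.1, lt_of_not_ge]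
  set G : ℝ → ℝ := fun x => deriv f x *
    (((univ.filter fun j => x ≤ α j).card : ℝ)
      - ((univ.filter fun j => x ≤ β j).card : ℝ)) with hG
  have hpt : ∀ x, (∑ j, (u (α j) x - u (β j) x)) = G x := by
    intro x
    rw [hG]
    simp only [hupt]
    rw [← Finset.sum_boole (fun j => x ≤ α j) univ, ← Finset.sum_boole (fun j => x ≤ β j) univ]
    rw [mul_sub, Finset.mul_sum, Finset.mul_sum, ← Finset.sum_sub_distrib]
    refine Finset.sum_congr rfl fun j _ => ?_
    ring
  have hGsum : (∑ j, f (α j)) - (∑ j, f (β j)) = ∫ x, G x := by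
    have hterm : ∀ j : Fin N, f (α j) - f (β j) = ∫ x, (u (α j) x - u (β j) x) := by
      intro j
      rw [integral_sub (hu_int _) (hu_int _), ← hstep1, ← hstep1]
      ring
    calc (∑ j, f (α j)) - (∑ j, f (β j)) = ∑ j, (f (α j) - f (β j)) := by
          rw [Finset.sum_sub_distrib]
      _ = ∑ j, ∫ x, (u (α j) x - u (β j) x) := Finset.sum_congr rfl fun j _ => hterm j
      _ = ∫ x, ∑ j, (u (α j) x - u (β j) x) :=
          (integral_finset_sum _ (fun j _ => (hu_int _).sub (hu_int _))).symm
      _ = ∫ x, G x := by simp_rw [hpt]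
  have hGint : Integrable G :=
    (integrable_finset_sum _ (fun j (_ : j ∈ univ) => (hu_int (α j)).sub (hu_int (β j)))).congr
      (Filter.Eventually.of_forall hpt)
  have hInonneg : 0 ≤ ∫ x, |deriv f x| := integral_nonneg fun x => abs_nonneg _
  have hbound : |(∑ j, f (α j)) - (∑ j, f (β j))| ≤ (R.rank : ℝ) * ∫ x, |deriv f x| := by
    rw [hGsum]
    calc |∫ x, G x| ≤ ∫ x, |G x| := by
          simpa [Real.norm_eq_abs] using norm_integral_le_integral_norm G (μ := volume)
      _ ≤ ∫ x, (R.rank : ℝ) * |deriv f x| := by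
          refine integral_mono hGint.abs (hf'.abs.const_mul _) fun x => ?_
          rw [hG, abs_mul]
          have h1 := hcount x
          have h2 : (0:ℝ) ≤ |deriv f x| := abs_nonneg _
          nlinarith
      _ = (R.rank : ℝ) * ∫ x, |deriv f x| := integral_const_mul _ _
  rw [integral_evMeasure hA f hc, integral_evMeasure hB f hc]
  have hNinv : (0:ℝ) ≤ (N:ℝ)⁻¹ := by positivity
  rw [← mul_sub, abs_mul, abs_of_nonneg hNinv]
  have h1 : (N:ℝ)⁻¹ * |(∑ j, f (α j)) - (∑ j, f (β j))|
      ≤ (N:ℝ)⁻¹ * ((R.rank : ℝ) * ∫ x, |deriv f x|) := by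
    exact mul_le_mul_of_nonneg_left hbound hNinv
  have h2 : (N:ℝ)⁻¹ * ((R.rank : ℝ) * ∫ x, |deriv f x|)
      = ((R.rank : ℝ) / N) * ∫ x, |deriv f x| := by ring
  have h3 : (0:ℝ) ≤ ((R.rank : ℝ) / N) * ∫ x, |deriv f x| := by positivity
  linarith
end
end

section
/- Let (Ω,F,P) be a probability space, let μ_N^ω and ρ_N^ω (ω ∈ Ω, N ∈ ℕ) be probability measures on ℝ, and let μ be a probability measure on ℝ. Assume (ρ_N^ω)_N converges weakly in probability to μ, and suppose there is a real sequence (c_N)_N with c_N → 0 such that for all ω ∈ Ω and all f in S := {f ∈ C¹(ℝ) : ‖f'‖_{L¹} + ‖f'‖_{L∞} < ∞} one has |∫f dρ_N^ω − ∫f dμ_N^ω| ≤ c_N·(‖f'‖_{L¹} + ‖f'‖_{L∞}). Then (μ_N^ω)_N also converges weakly in probability to μ. -/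
open MeasureTheory ProbabilityTheory Filter Topology
open scoped ENNReal NNReal

noncomputable section

/-- Auxiliary: a `C¹` compactly supported function has integrable and bounded derivative. -/
lemma aux_S {u : ℝ → ℝ} (hu : ContDiff ℝ 1 u) (hsupp : HasCompactSupport u) :
    Integrable (deriv u) ∧ BddAbove (Set.range fun x => |deriv u x|) := by
  have hcont : Continuous (deriv u) := hu.continuous_deriv le_rfl
  have hds : HasCompactSupport (deriv u) := hsupp.deriv
  refine ⟨hcont.integrable_of_hasCompactSupport hds, ?_⟩
  have habs : HasCompactSupport fun x => |deriv u x| := by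
    exact hds.comp_left (g := fun t : ℝ => |t|) abs_zero
  exact (hcont.abs).bddAbove_range_of_hasCompactSupport habs

lemma aux_int_bound {ν : Measure ℝ} [IsProbabilityMeasure ν] {f g χ : ℝ → ℝ}
    (hf : Integrable f ν) (hg : Integrable g ν) (hχ : Integrable χ ν)
    {s C : ℝ} (hpt : ∀ x, |f x - g x| ≤ s + C * (1 - χ x)) :
    |(∫ x, f x ∂ν) - ∫ x, g x ∂ν| ≤ s + C * (1 - ∫ x, χ x ∂ν) := by
  rw [← integral_sub hf hg]
  have h1 : |∫ x, (f x - g x) ∂ν| ≤ ∫ x, |f x - g x| ∂ν := by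
    simpa [Real.norm_eq_abs] using norm_integral_le_integral_norm (μ := ν) (f := fun x => f x - g x)
  have h2 : ∫ x, |f x - g x| ∂ν ≤ ∫ x, (s + C * (1 - χ x)) ∂ν := by
    refine integral_mono (hf.sub hg).abs ?_ hpt
    exact (integrable_const s).add (((integrable_const 1).sub hχ).const_mul C)
  have h3 : ∫ x, (s + C * (1 - χ x)) ∂ν = s + C * (1 - ∫ x, χ x ∂ν) := by
    have e1 : ∫ x, (s + C * (1 - χ x)) ∂ν
        = (∫ x, (s:ℝ) ∂ν) + ∫ x, C * (1 - χ x) ∂ν :=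
      integral_add (integrable_const s) (((integrable_const 1).sub hχ).const_mul C)
    have e2 : ∫ x, C * (1 - χ x) ∂ν = C * ∫ x, (1 - χ x) ∂ν := MeasureTheory.integral_const_mul _ _
    have e3 : ∫ x, (1 - χ x) ∂ν = (∫ x, (1:ℝ) ∂ν) - ∫ x, χ x ∂ν :=
      integral_sub (integrable_const 1) hχ
    simp only [integral_const, measure_univ, probReal_univ, ENNReal.toReal_one, smul_eq_mul, one_mul] at e1 e2 e3
    rw [e1, e2, e3]
  linarith

set_option maxHeartbeats 1000000 in
/-- Persistence of weak convergence in probability: if `ρ_N^ω → μ` weakly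
in probability and `|∫f dρ_N^ω - ∫f dμ_N^ω| ≤ c_N (‖f'‖_{L¹} + ‖f'‖_∞)` for all `ω` and all
`f ∈ S = {f ∈ C¹ : ‖f'‖_{L¹} + ‖f'‖_∞ < ∞}`, with `c_N → 0`, then also `μ_N^ω → μ` weakly
in probability. -/
theorem stmt9 {Ω : Type*} [MeasurableSpace Ω] (P : Measure Ω) [IsProbabilityMeasure P]
    (μN ρN : ℕ → Ω → Measure ℝ) (μ : Measure ℝ)
    (hμN : ∀ N ω, IsProbabilityMeasure (μN N ω))
    (hρN : ∀ N ω, IsProbabilityMeasure (ρN N ω))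
    (hμ : IsProbabilityMeasure μ)
    (hconv : ∀ f : BoundedContinuousFunction ℝ ℝ, ∀ ε > (0 : ℝ),
      Tendsto (fun N : ℕ =>
        P {ω | ε < |(∫ x, f x ∂(ρN N ω)) - ∫ x, f x ∂μ|}) atTop (𝓝 0))
    (c : ℕ → ℝ) (hc : Tendsto c atTop (𝓝 0))
    (hbound : ∀ (N : ℕ) (ω : Ω) (f : ℝ → ℝ), ContDiff ℝ 1 f →
      Integrable (deriv f) → BddAbove (Set.range fun x => |deriv f x|) →
      |(∫ x, f x ∂(ρN N ω)) - ∫ x, f x ∂(μN N ω)| ≤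
        c N * ((∫ x, |deriv f x|) + ⨆ x, |deriv f x|)) :
    ∀ f : BoundedContinuousFunction ℝ ℝ, ∀ ε > (0 : ℝ),
      Tendsto (fun N : ℕ =>
        P {ω | ε < |(∫ x, f x ∂(μN N ω)) - ∫ x, f x ∂μ|}) atTop (𝓝 0) := by
  haveI := hμ
  intro f ε hε
  set M : ℝ := ‖f‖ with hM_def
  have hM : 0 ≤ M := norm_nonneg f
  have hfabs : ∀ x : ℝ, |f x| ≤ M := by
    intro x
    simpa [Real.norm_eq_abs] using f.norm_coe_le_norm x
  set s : ℝ := ε / 16 with hs_def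
  have hs : 0 < s := by positivity
  set C : ℝ := 2 * M + s with hC_def
  have hC : 0 < C := by positivity
  set δ₀ : ℝ := ε / (16 * (C + 1)) with hδ₀_def
  have hδ₀ : 0 < δ₀ := by positivity
  have hCδ : C * δ₀ ≤ ε / 16 := by
    rw [hδ₀_def]
    rw [mul_div_assoc', div_le_div_iff₀ (by positivity) (by norm_num)]
    nlinarith [hε.le, hC.le]
  -- Choose the radius R for the cutoff
  obtain ⟨R, hR1, hRtail⟩ :
      ∃ R : ℝ, 1 ≤ R ∧ (μ ((Metric.closedBall (0:ℝ) R)ᶜ)).toReal ≤ δ₀ := by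
    have hanti : Antitone fun n : ℕ => (Metric.closedBall (0:ℝ) n)ᶜ := by
      intro m n hmn
      exact Set.compl_subset_compl.mpr
        (Metric.closedBall_subset_closedBall (by exact_mod_cast hmn))
    have hiInter : ⋂ n : ℕ, (Metric.closedBall (0:ℝ) n)ᶜ = ∅ := by
      ext x
      simp only [Set.mem_iInter, Set.mem_compl_iff, Metric.mem_closedBall, Set.mem_empty_iff_false,
        iff_false, not_forall, not_not]
      obtain ⟨n, hn⟩ := exists_nat_ge (dist x 0)
      exact ⟨n, hn⟩
    have htend := MeasureTheory.tendsto_measure_iInter_atTop (μ := μ)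
      (fun n => (measurableSet_closedBall.compl).nullMeasurableSet) hanti
      ⟨0, measure_ne_top μ _⟩
    rw [hiInter, measure_empty] at htend
    have hev : ∀ᶠ n : ℕ in atTop, μ ((Metric.closedBall (0:ℝ) n)ᶜ) < ENNReal.ofReal δ₀ :=
      htend.eventually_lt_const (by simpa using hδ₀)
    obtain ⟨n, hn⟩ := hev.exists
    refine ⟨(n : ℝ) + 1, by linarith [Nat.cast_nonneg (α := ℝ) n], ?_⟩
    have hsub : (Metric.closedBall (0:ℝ) ((n:ℝ)+1))ᶜ ⊆ (Metric.closedBall (0:ℝ) n)ᶜ :=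
      Set.compl_subset_compl.mpr (Metric.closedBall_subset_closedBall (by linarith))
    exact ENNReal.toReal_le_of_le_ofReal hδ₀.le ((measure_mono hsub).trans hn.le)
  -- The cutoff bump χ = b : 1 on [-R,R], supported in [-(R+1),R+1]
  set b : ContDiffBump (0:ℝ) := ⟨R, R+1, by linarith, by linarith⟩ with hb_def
  have hb_contdiff : ContDiff ℝ 1 ⇑b := b.contDiff
  have hb_supp : HasCompactSupport ⇑b := b.hasCompactSupport
  obtain ⟨hb_dint, hb_dbdd⟩ := aux_S hb_contdiff hb_supp
  set Kb : ℝ := (∫ x, |deriv (⇑b) x|) + ⨆ x, |deriv (⇑b) x| with hKb_def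
  have hKb : 0 ≤ Kb := by
    have h1 : (0:ℝ) ≤ ∫ x, |deriv (⇑b) x| := integral_nonneg fun x => abs_nonneg _
    have h2 : (0:ℝ) ≤ ⨆ x, |deriv (⇑b) x| := Real.iSup_nonneg fun x => abs_nonneg _
    linarith
  -- the outer cutoff b2 : 1 on [-(R+2),R+2]
  set b2 : ContDiffBump (0:ℝ) := ⟨R+2, R+3, by linarith, by linarith⟩ with hb2_def
  set h : ℝ → ℝ := fun x => b2 x * f x with hh_def
  have hh_cont : Continuous h := b2.continuous.mul f.continuous
  have hh_supp : HasCompactSupport h := b2.hasCompactSupport.mul_right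
  have hh_abs : ∀ x, |h x| ≤ M := by
    intro x
    rw [hh_def]
    calc |b2 x * f x| = |b2 x| * |f x| := abs_mul _ _
      _ ≤ 1 * M := by
          refine mul_le_mul ?_ (hfabs x) (abs_nonneg _) one_pos.le
          rw [abs_of_nonneg b2.nonneg]; exact b2.le_one
      _ = M := one_mul M
  -- uniform continuity of h
  obtain ⟨δ, hδpos, hδ⟩ : ∃ δ > 0, ∀ a b : ℝ, dist a b < δ → dist (h a) (h b) < s := by
    have hu : UniformContinuous h := hh_supp.uniformContinuous_of_continuous hh_cont
    obtain ⟨δ, hδpos, hδ⟩ := Metric.uniformContinuous_iff.mp hu s hs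
    exact ⟨δ, hδpos, fun a b hab => hδ hab⟩
  set ψ : ContDiffBump (0:ℝ) := ⟨δ/2, δ, half_pos hδpos, half_lt_self hδpos⟩ with hψ_def
  set g : ℝ → ℝ := convolution (ψ.normed volume) h (ContinuousLinearMap.lsmul ℝ ℝ) volume
    with hg_def
  have hg_contdiff : ContDiff ℝ 1 g := by
    have := HasCompactSupport.contDiff_convolution_left (ContinuousLinearMap.lsmul ℝ ℝ)
      (n := 1) (ψ.hasCompactSupport_normed (μ := volume)) ψ.contDiff_normed
      (hh_cont.locallyIntegrable (μ := volume))
    exact_mod_cast this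
  have hg_supp : HasCompactSupport g :=
    HasCompactSupport.convolution _ (ψ.hasCompactSupport_normed (μ := volume)) hh_supp
  have hg_cont : Continuous g := hg_contdiff.continuous
  obtain ⟨hg_dint, hg_dbdd⟩ := aux_S hg_contdiff hg_supp
  set Kg : ℝ := (∫ x, |deriv g x|) + ⨆ x, |deriv g x| with hKg_def
  have hKg : 0 ≤ Kg := by
    have h1 : (0:ℝ) ≤ ∫ x, |deriv g x| := integral_nonneg fun x => abs_nonneg _
    have h2 : (0:ℝ) ≤ ⨆ x, |deriv g x| := Real.iSup_nonneg fun x => abs_nonneg _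
    linarith
  -- g is uniformly close to h
  have hgh : ∀ x : ℝ, |g x - h x| ≤ s := by
    intro x₀
    have := ContDiffBump.dist_normed_convolution_le (φ := ψ) (μ := volume)
      hh_cont.aestronglyMeasurable (x₀ := x₀) (ε := s) ?_
    · simpa [hg_def, Real.dist_eq] using this
    · intro x hx
      exact (hδ x x₀ (by simpa [hψ_def] using hx)).le
  have hg_abs : ∀ x, |g x| ≤ M + s := by
    intro x
    calc |g x| ≤ |g x - h x| + |h x| := by
          simpa using abs_add_le (g x - h x) (h x)
      _ ≤ s + M := add_le_add (hgh x) (hh_abs x)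
      _ = M + s := by ring
  -- the key pointwise bound
  have hpt : ∀ x : ℝ, |f x - g x| ≤ s + C * (1 - b x) := by
    intro x
    have hbx1 : b x ≤ 1 := b.le_one
    by_cases hx : x ∈ Metric.closedBall (0:ℝ) (R+1)
    · have hb2x : b2 x = 1 := by
        refine b2.one_of_mem_closedBall ?_
        simp only [Metric.mem_closedBall] at hx ⊢
        linarith
      have hhx : h x = f x := by rw [hh_def]; simp [hb2x]
      have : |f x - g x| ≤ s := by
        rw [← hhx, abs_sub_comm]; exact hgh x
      nlinarith [hC.le]
    · have hbx : b x = 0 := by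
        have hxs : x ∉ Function.support ⇑b := by
          rw [b.support_eq]
          intro hmem
          exact hx (Metric.ball_subset_closedBall hmem)
        simpa [Function.mem_support, not_not] using hxs
      rw [hbx]
      calc |f x - g x| ≤ |f x| + |g x| := abs_sub _ _
        _ ≤ M + (M + s) := add_le_add (hfabs x) (hg_abs x)
        _ ≤ s + C * (1 - 0) := by rw [hC_def]; ring_nf; linarith
  -- package b as a bounded continuous function
  set bχ : BoundedContinuousFunction ℝ ℝ :=
    BoundedContinuousFunction.ofNormedAddCommGroup ⇑b b.continuous 1
      (fun x => by rw [Real.norm_eq_abs, abs_of_nonneg b.nonneg]; exact b.le_one) with hbχ_def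
  have hbχ_coe : ∀ ν : Measure ℝ, (∫ x, bχ x ∂ν) = ∫ x, b x ∂ν := fun ν => rfl
  -- tail bound for μ
  have hμtail : 1 - (∫ x, b x ∂μ) ≤ δ₀ := by
    have hbint : Integrable ⇑b μ := b.continuous.integrable_of_hasCompactSupport hb_supp
    have hmono : ∫ x, (1 - b x) ∂μ ≤ ∫ x, ((Metric.closedBall (0:ℝ) R)ᶜ).indicator 1 x ∂μ := by
      refine integral_mono ((integrable_const 1).sub hbint) ?_ ?_
      · exact (integrable_const 1).indicator measurableSet_closedBall.compl
      · intro x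
        by_cases hx : x ∈ Metric.closedBall (0:ℝ) R
        · have : b x = 1 := b.one_of_mem_closedBall hx
          simp [this, Set.indicator_apply, hx, Set.indicator_nonneg]
        · have hmem : x ∈ (Metric.closedBall (0:ℝ) R)ᶜ := hx
          simp only [Set.indicator_of_mem hmem, Pi.one_apply]
          linarith [b.nonneg (x := x)]
    have heq : ∫ x, (1 - b x) ∂μ = 1 - ∫ x, b x ∂μ := by
      rw [integral_sub (integrable_const 1) hbint, integral_const]
      simp [measure_univ]
    have hind : ∫ x, ((Metric.closedBall (0:ℝ) R)ᶜ).indicator 1 x ∂μ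
        = (μ ((Metric.closedBall (0:ℝ) R)ᶜ)).toReal :=
      integral_indicator_one measurableSet_closedBall.compl
    rw [heq, hind] at hmono
    exact hmono.trans hRtail
  -- choose the eventual bound for c
  set D : ℝ := C * Kb + Kg with hD_def
  have hD : 0 ≤ D := by
    have := mul_nonneg hC.le hKb
    linarith
  set cb : ℝ := ε / (8 * (D + 1)) with hcb_def
  have hcb : 0 < cb := by positivity
  have hcbD : cb * D ≤ ε / 8 := by
    rw [hcb_def, div_mul_eq_mul_div, div_le_div_iff₀ (by positivity) (by norm_num)]
    nlinarith [hε.le]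
  have hcev : ∀ᶠ N in atTop, |c N| ≤ cb := by
    have habs : Tendsto (fun N => |c N|) atTop (𝓝 0) := by
      have h0 : Tendsto (fun N => |c N|) atTop (𝓝 |0|) := hc.abs
      simpa using h0
    exact (habs.eventually_lt_const hcb).mono fun N hN => hN.le
  clear_value M s C δ₀ Kb Kg D cb
  -- the two bad events
  have hA := hconv bχ δ₀ hδ₀
  have hB := hconv f (ε/2) (half_pos hε)
  have hsum : Tendsto (fun N : ℕ =>
      P {ω | δ₀ < |(∫ x, bχ x ∂(ρN N ω)) - ∫ x, bχ x ∂μ|}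
        + P {ω | ε/2 < |(∫ x, f x ∂(ρN N ω)) - ∫ x, f x ∂μ|}) atTop (𝓝 0) := by
    simpa using hA.add hB
  refine tendsto_of_tendsto_of_tendsto_of_le_of_le' tendsto_const_nhds hsum
    (Eventually.of_forall fun N => zero_le) ?_
  filter_upwards [hcev] with N hcN
  have hincl : {ω | ε < |(∫ x, f x ∂(μN N ω)) - ∫ x, f x ∂μ|}
      ⊆ {ω | δ₀ < |(∫ x, bχ x ∂(ρN N ω)) - ∫ x, bχ x ∂μ|}
        ∪ {ω | ε/2 < |(∫ x, f x ∂(ρN N ω)) - ∫ x, f x ∂μ|} := by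
    intro ω hω
    rw [Set.mem_setOf_eq] at hω
    by_contra hnot
    simp only [Set.mem_union, Set.mem_setOf_eq, not_or, not_lt] at hnot
    obtain ⟨hA', hB'⟩ := hnot
    rw [hbχ_coe, hbχ_coe] at hA'
    haveI := hμN N ω
    haveI := hρN N ω
    -- integrability
    have hif_μ : Integrable (⇑f) (μN N ω) := f.integrable _
    have hif_ρ : Integrable (⇑f) (ρN N ω) := f.integrable _
    have hig_μ : Integrable g (μN N ω) := hg_cont.integrable_of_hasCompactSupport hg_supp
    have hig_ρ : Integrable g (ρN N ω) := hg_cont.integrable_of_hasCompactSupport hg_supp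
    have hib_μ : Integrable ⇑b (μN N ω) := b.continuous.integrable_of_hasCompactSupport hb_supp
    have hib_ρ : Integrable ⇑b (ρN N ω) := b.continuous.integrable_of_hasCompactSupport hb_supp
    -- hbound applications
    have hbb := hbound N ω ⇑b hb_contdiff hb_dint hb_dbdd
    rw [← hKb_def] at hbb
    have hbb2 : |(∫ x, b x ∂(ρN N ω)) - ∫ x, b x ∂(μN N ω)| ≤ |c N| * Kb :=
      hbb.trans (mul_le_mul_of_nonneg_right (le_abs_self _) hKb)
    have hgg := hbound N ω g hg_contdiff hg_dint hg_dbdd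
    rw [← hKg_def] at hgg
    have hgg2 : |(∫ x, g x ∂(ρN N ω)) - ∫ x, g x ∂(μN N ω)| ≤ |c N| * Kg :=
      hgg.trans (mul_le_mul_of_nonneg_right (le_abs_self _) hKg)
    -- the main estimates
    have t1 : |(∫ x, f x ∂(μN N ω)) - ∫ x, g x ∂(μN N ω)|
        ≤ s + C * (1 - ∫ x, b x ∂(μN N ω)) := aux_int_bound hif_μ hig_μ hib_μ hpt
    have t2 : |(∫ x, f x ∂(ρN N ω)) - ∫ x, g x ∂(ρN N ω)|
        ≤ s + C * (1 - ∫ x, b x ∂(ρN N ω)) := aux_int_bound hif_ρ hig_ρ hib_ρ hpt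
    have t5 := abs_le.mp hA'
    have t6 := abs_le.mp hbb2
    have eρ : 1 - (∫ x, b x ∂(ρN N ω)) ≤ 2 * δ₀ := by linarith [t5.1, t5.2]
    have eμ : 1 - (∫ x, b x ∂(μN N ω)) ≤ 2 * δ₀ + |c N| * Kb := by linarith [t6.1, t6.2]
    have p1 : C * (1 - ∫ x, b x ∂(μN N ω)) ≤ C * (2 * δ₀ + |c N| * Kb) :=
      mul_le_mul_of_nonneg_left eμ hC.le
    have p2 : C * (1 - ∫ x, b x ∂(ρN N ω)) ≤ C * (2 * δ₀) :=
      mul_le_mul_of_nonneg_left eρ hC.le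
    have q1 : C * (2 * δ₀ + |c N| * Kb) = 2 * (C * δ₀) + |c N| * (C * Kb) := by ring
    have q2 : C * (2 * δ₀) = 2 * (C * δ₀) := by ring
    have hcsmall : |c N| * (C * Kb) + |c N| * Kg ≤ ε / 8 := by
      have h1 : |c N| * D ≤ cb * D := mul_le_mul_of_nonneg_right hcN hD
      have h2 : |c N| * (C * Kb) + |c N| * Kg = |c N| * D := by rw [hD_def]; ring
      calc |c N| * (C * Kb) + |c N| * Kg = |c N| * D := h2
        _ ≤ cb * D := h1
        _ ≤ ε / 8 := hcbD
    have habs3 : |(∫ x, f x ∂(μN N ω)) - ∫ x, f x ∂μ|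
        ≤ |(∫ x, f x ∂(μN N ω)) - ∫ x, g x ∂(μN N ω)|
          + |(∫ x, g x ∂(μN N ω)) - ∫ x, g x ∂(ρN N ω)|
          + |(∫ x, g x ∂(ρN N ω)) - ∫ x, f x ∂(ρN N ω)|
          + |(∫ x, f x ∂(ρN N ω)) - ∫ x, f x ∂μ| := by
      have a1 := abs_sub_le ((∫ x, f x ∂(μN N ω))) ((∫ x, g x ∂(μN N ω))) ((∫ x, f x ∂μ))
      have a2 := abs_sub_le ((∫ x, g x ∂(μN N ω))) ((∫ x, g x ∂(ρN N ω))) ((∫ x, f x ∂μ))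
      have a3 := abs_sub_le ((∫ x, g x ∂(ρN N ω))) ((∫ x, f x ∂(ρN N ω))) ((∫ x, f x ∂μ))
      linarith
    have c1 : |(∫ x, g x ∂(μN N ω)) - ∫ x, g x ∂(ρN N ω)| ≤ |c N| * Kg := by
      rw [abs_sub_comm]; exact hgg2
    have c2 : |(∫ x, g x ∂(ρN N ω)) - ∫ x, f x ∂(ρN N ω)| ≤ s + C * (1 - ∫ x, b x ∂(ρN N ω)) := by
      rw [abs_sub_comm]; exact t2
    have hfinal : |(∫ x, f x ∂(μN N ω)) - ∫ x, f x ∂μ| ≤ ε := by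
      have hsε : s = ε / 16 := hs_def
      linarith [hCδ]
    exact absurd hω (not_lt.mpr hfinal)
  calc P {ω | ε < |(∫ x, f x ∂(μN N ω)) - ∫ x, f x ∂μ|}
      ≤ P ({ω | δ₀ < |(∫ x, bχ x ∂(ρN N ω)) - ∫ x, bχ x ∂μ|}
        ∪ {ω | ε/2 < |(∫ x, f x ∂(ρN N ω)) - ∫ x, f x ∂μ|}) := measure_mono hincl
    _ ≤ _ := measure_union_le _ _
end
end

section
/- Let (ξ_i)_{i∈ℕ} be an exchangeable sequence of real-valued random variables on a probability space (Ω,F,P) with E(|ξ_1|^p) < ∞ for all p > 0. Then the sequence of averages M_n := (1/n)·Σ_{i=1}^n ξ_i converges P-almost surely to a real-valued random variable M. -/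
open MeasureTheory ProbabilityTheory Filter Topology
open scoped ENNReal NNReal
noncomputable section

def Exchangeable {Ω : Type*} [MeasurableSpace Ω] (P : Measure Ω) (ξ : ℕ → Ω → ℝ) : Prop :=
  ∀ (n : ℕ) (π : Equiv.Perm (Fin n)),
    Measure.map (fun ω (i : Fin n) => ξ (π i).val ω) P =
    Measure.map (fun ω (i : Fin n) => ξ i.val ω) P

section A
variable {Ω : Type*} [MeasurableSpace Ω] (P : Measure Ω)
  (ξ : ℕ → Ω → ℝ)

lemma keyLemma (hmeas : ∀ i, Measurable (ξ i)) (hexch : Exchangeable P ξ)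
    (u v : Fin 4 → ℕ) (hu : Function.Injective u) (hv : Function.Injective v)
    (q : Fin 4 → Fin 4) :
    ∫ ω, ∏ t, ξ (u (q t)) ω ∂P = ∫ ω, ∏ t, ξ (v (q t)) ω ∂P := by
  classical
  set N : ℕ := (Finset.univ.sup u) + (Finset.univ.sup v) + 1 with hN
  have hub : ∀ t, u t < N := by
    intro t
    have := Finset.le_sup (f := u) (Finset.mem_univ t)
    omega
  have hvb : ∀ t, v t < N := by
    intro t
    have := Finset.le_sup (f := v) (Finset.mem_univ t)
    omega
  set u' : Fin 4 → Fin N := fun t => ⟨u t, hub t⟩ with hu'd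
  set v' : Fin 4 → Fin N := fun t => ⟨v t, hvb t⟩ with hv'd
  have hu'i : Function.Injective u' := by
    intro a b h; exact hu (by simpa [u', Fin.mk.injEq] using h)
  have hv'i : Function.Injective v' := by
    intro a b h; exact hv (by simpa [v', Fin.mk.injEq] using h)
  set φ : {x // x ∈ Set.range u'} ≃ {x // x ∈ Set.range v'} :=
    (Equiv.ofInjective u' hu'i).symm.trans (Equiv.ofInjective v' hv'i) with hφ
  set σ : Equiv.Perm (Fin N) := φ.extendSubtype with hσd
  have hσ : ∀ t, σ (u' t) = v' t := by
    intro t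
    have h1 : (u' t) ∈ Set.range u' := ⟨t, rfl⟩
    rw [hσd, Equiv.extendSubtype_apply_of_mem φ (u' t) h1, hφ]
    have h2 : (Equiv.ofInjective u' hu'i).symm ⟨u' t, h1⟩ = t := by
      rw [Equiv.symm_apply_eq]; rfl
    simp [h2]
  have hT : Measurable (fun ω (i : Fin N) => ξ (σ i).val ω) :=
    measurable_pi_lambda _ fun i => hmeas _
  have hid : Measurable (fun ω (i : Fin N) => ξ i.val ω) :=
    measurable_pi_lambda _ fun i => hmeas _
  set F : (Fin N → ℝ) → ℝ := fun y => ∏ t, y (u' (q t)) with hF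
  have hFm : Measurable F := Finset.measurable_prod _ fun t _ => measurable_pi_apply _
  have h1 : ∫ y, F y ∂(Measure.map (fun ω (i : Fin N) => ξ (σ i).val ω) P)
      = ∫ ω, F ((fun (i : Fin N) => ξ (σ i).val ω)) ∂P :=
    integral_map hT.aemeasurable hFm.aestronglyMeasurable
  have h2 : ∫ y, F y ∂(Measure.map (fun ω (i : Fin N) => ξ i.val ω) P)
      = ∫ ω, F ((fun (i : Fin N) => ξ i.val ω)) ∂P :=
    integral_map hid.aemeasurable hFm.aestronglyMeasurable
  have h3 := hexch N σ
  have e1 : (fun ω => F (fun (i : Fin N) => ξ (σ i).val ω)) = fun ω => ∏ t, ξ (v (q t)) ω := by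
    funext ω
    refine Finset.prod_congr rfl fun t _ => ?_
    show ξ ((σ (u' (q t))).val) ω = ξ (v (q t)) ω
    rw [hσ (q t)]
  have e2 : (fun ω => F (fun (i : Fin N) => ξ i.val ω)) = fun ω => ∏ t, ξ (u (q t)) ω := rfl
  calc ∫ ω, ∏ t, ξ (u (q t)) ω ∂P
      = ∫ y, F y ∂(Measure.map (fun ω (i : Fin N) => ξ i.val ω) P) := by rw [h2, e2]
    _ = ∫ y, F y ∂(Measure.map (fun ω (i : Fin N) => ξ (σ i).val ω) P) := by rw [h3]
    _ = ∫ ω, ∏ t, ξ (v (q t)) ω ∂P := by rw [h1, e1]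

lemma amgm4 (a b c d : ℝ) : |a*b*c*d| ≤ (a^4+b^4+c^4+d^4)/4 := by
  have h1 : |a*b| ≤ (a^2+b^2)/2 := by
    rw [abs_mul]
    nlinarith [sq_abs a, sq_abs b, sq_nonneg (|a|-|b|), abs_nonneg a, abs_nonneg b]
  have h2 : |c*d| ≤ (c^2+d^2)/2 := by
    rw [abs_mul]
    nlinarith [sq_abs c, sq_abs d, sq_nonneg (|c|-|d|), abs_nonneg c, abs_nonneg d]
  have e : a*b*c*d = (a*b)*(c*d) := by ring
  rw [e, abs_mul]
  nlinarith [h1, h2, abs_nonneg (a*b), abs_nonneg (c*d), sq_nonneg (a^2-c^2),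
    sq_nonneg (a^2-d^2), sq_nonneg (b^2-c^2), sq_nonneg (b^2-d^2)]

lemma law_i (hmeas : ∀ i, Measurable (ξ i)) (hexch : Exchangeable P ξ) (i : ℕ) :
    Measure.map (ξ i) P = Measure.map (ξ 0) P := by
  classical
  set a : Fin (i+1) := ⟨0, Nat.succ_pos i⟩ with ha
  set b : Fin (i+1) := ⟨i, Nat.lt_succ_self i⟩ with hb
  set σ : Equiv.Perm (Fin (i+1)) := Equiv.swap a b with hσ
  have h3 := hexch (i+1) σ
  have hT : Measurable (fun ω (j : Fin (i+1)) => ξ (σ j).val ω) :=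
    measurable_pi_lambda _ fun j => hmeas _
  have hid : Measurable (fun ω (j : Fin (i+1)) => ξ j.val ω) :=
    measurable_pi_lambda _ fun j => hmeas _
  have hev : Measurable (fun y : Fin (i+1) → ℝ => y a) := measurable_pi_apply a
  have e1 := (Measure.map_map (μ := P) hev hT).symm
  have e2 := (Measure.map_map (μ := P) hev hid).symm
  rw [h3] at e1
  rw [← e2] at e1
  have hσa : σ a = b := Equiv.swap_apply_left a b
  have c1 : ((fun y : Fin (i+1) → ℝ => y a) ∘ (fun ω (j : Fin (i+1)) => ξ (σ j).val ω)) = ξ i := by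
    funext ω; simp [hσa, hb]
  have c2 : ((fun y : Fin (i+1) → ℝ => y a) ∘ (fun ω (j : Fin (i+1)) => ξ j.val ω)) = ξ 0 := by
    funext ω; simp [ha]
  rw [c1, c2] at e1
  exact e1

lemma int_pow4 (hmeas : ∀ i, Measurable (ξ i)) (hexch : Exchangeable P ξ)
    (hmom : ∀ p : ℕ, Integrable (fun ω => |ξ 0 ω| ^ p) P) (i : ℕ) :
    Integrable (fun ω => (ξ i ω)^4) P := by
  have h0 : Integrable (fun ω => (ξ 0 ω)^4) P := by
    refine (hmom 4).congr (Filter.Eventually.of_forall fun ω => ?_)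
    show |ξ 0 ω| ^ 4 = ξ 0 ω ^ 4
    rw [← abs_pow]
    exact abs_of_nonneg (by positivity)
  have hmf : Measurable (fun x : ℝ => x^4) := by measurability
  have h1 : Integrable (fun x : ℝ => x^4) (Measure.map (ξ 0) P) := by
    refine (integrable_map_measure hmf.aestronglyMeasurable (hmeas 0).aemeasurable).mpr ?_
    exact h0
  rw [← law_i P ξ hmeas hexch i] at h1
  have := (integrable_map_measure hmf.aestronglyMeasurable (hmeas i).aemeasurable).mp h1
  exact this

lemma int_prod (hmeas : ∀ i, Measurable (ξ i)) (hexch : Exchangeable P ξ)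
    (hmom : ∀ p : ℕ, Integrable (fun ω => |ξ 0 ω| ^ p) P) (i j k l : ℕ) :
    Integrable (fun ω => ξ i ω * ξ j ω * ξ k ω * ξ l ω) P := by
  have hg : Integrable (fun ω => ((ξ i ω)^4 + (ξ j ω)^4 + (ξ k ω)^4 + (ξ l ω)^4)/4) P := by
    refine Integrable.div_const ?_ 4
    exact (((int_pow4 P ξ hmeas hexch hmom i).add (int_pow4 P ξ hmeas hexch hmom j)).add
      (int_pow4 P ξ hmeas hexch hmom k)).add (int_pow4 P ξ hmeas hexch hmom l)
  refine Integrable.mono' hg ?_ (Filter.Eventually.of_forall fun ω => ?_)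
  · exact ((((hmeas i).mul (hmeas j)).mul (hmeas k)).mul (hmeas l)).aestronglyMeasurable
  · rw [Real.norm_eq_abs]
    exact amgm4 _ _ _ _

end A
section C
variable {Ω : Type*} [MeasurableSpace Ω] (P : Measure Ω)
  (ξ : ℕ → Ω → ℝ)

/-- fourth joint moment -/
def gm (i j k l : ℕ) : ℝ := ∫ ω, ξ i ω * ξ j ω * ξ k ω * ξ l ω ∂P

lemma inj4 {a b c d : ℕ} (h1 : a≠b) (h2 : a≠c) (h3 : a≠d) (h4 : b≠c) (h5 : b≠d) (h6 : c≠d) :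
    Function.Injective ![a,b,c,d] := by
  intro s t h
  fin_cases s <;> fin_cases t <;> simp_all

lemma gm_key (hmeas : ∀ i, Measurable (ξ i)) (hexch : Exchangeable P ξ)
    (u v : Fin 4 → ℕ) (hu : Function.Injective u) (hv : Function.Injective v)
    (q : Fin 4 → Fin 4) :
    gm P ξ (u (q 0)) (u (q 1)) (u (q 2)) (u (q 3)) =
    gm P ξ (v (q 0)) (v (q 1)) (v (q 2)) (v (q 3)) := by
  have h := keyLemma P ξ hmeas hexch u v hu hv q
  rw [show (fun ω => ∏ t, ξ (u (q t)) ω) =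
      (fun ω => ξ (u (q 0)) ω * ξ (u (q 1)) ω * ξ (u (q 2)) ω * ξ (u (q 3)) ω) from
      funext fun ω => by rw [Fin.prod_univ_four],
    show (fun ω => ∏ t, ξ (v (q t)) ω) =
      (fun ω => ξ (v (q 0)) ω * ξ (v (q 1)) ω * ξ (v (q 2)) ω * ξ (v (q 3)) ω) from
      funext fun ω => by rw [Fin.prod_univ_four]] at h
  exact h

variable (hmeas : ∀ i, Measurable (ξ i)) (hexch : Exchangeable P ξ)

include hmeas hexch in
lemma gm_diag (i : ℕ) : gm P ξ i i i i = gm P ξ 0 0 0 0 := by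
  have h := gm_key P ξ hmeas hexch ![i, i+1, i+2, i+3] ![0,1,2,3]
    (inj4 (by omega) (by omega) (by omega) (by omega) (by omega) (by omega))
    (inj4 (by omega) (by omega) (by omega) (by omega) (by omega) (by omega))
    ![0,0,0,0]
  simpa using h

include hmeas hexch in
lemma gm_1111 {i j k l : ℕ} (h1 : i≠j) (h2 : i≠k) (h3 : i≠l) (h4 : j≠k) (h5 : j≠l) (h6 : k≠l) :
    gm P ξ i j k l = gm P ξ 0 1 2 3 := by
  have h := gm_key P ξ hmeas hexch ![i,j,k,l] ![0,1,2,3]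
    (inj4 h1 h2 h3 h4 h5 h6)
    (inj4 (by omega) (by omega) (by omega) (by omega) (by omega) (by omega))
    ![0,1,2,3]
  simpa using h

include hmeas hexch in
lemma gm_211 {i k l : ℕ} (h2 : i≠k) (h3 : i≠l) (h6 : k≠l) :
    gm P ξ i i k l = gm P ξ 0 0 1 2 := by
  have h := gm_key P ξ hmeas hexch ![i,k,l,i+k+l+1] ![0,1,2,3]
    (inj4 h2 h3 (by omega) h6 (by omega) (by omega))
    (inj4 (by omega) (by omega) (by omega) (by omega) (by omega) (by omega))
    ![0,0,1,2]
  simpa using h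

include hmeas hexch in
lemma gm_31 {i l : ℕ} (h3 : i≠l) :
    gm P ξ i i i l = gm P ξ 0 0 0 1 := by
  have h := gm_key P ξ hmeas hexch ![i,l,i+l+1,i+l+2] ![0,1,2,3]
    (inj4 h3 (by omega) (by omega) (by omega) (by omega) (by omega))
    (inj4 (by omega) (by omega) (by omega) (by omega) (by omega) (by omega))
    ![0,0,0,1]
  simpa using h

end C
section C2
variable {Ω : Type*} [MeasurableSpace Ω] (P : Measure Ω)
  (ξ : ℕ → Ω → ℝ)

lemma gm_eq_of_mul_eq {i j k l i' j' k' l' : ℕ}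
    (h : ∀ ω, ξ i ω * ξ j ω * ξ k ω * ξ l ω = ξ i' ω * ξ j' ω * ξ k' ω * ξ l' ω) :
    gm P ξ i j k l = gm P ξ i' j' k' l' :=
  integral_congr_ae (Filter.Eventually.of_forall h)

lemma gm_pow (i : ℕ) : ∫ ω, (ξ i ω)^4 ∂P = gm P ξ i i i i :=
  integral_congr_ae (Filter.Eventually.of_forall fun ω => by simp only [gm]; ring)

variable (hmeas : ∀ i, Measurable (ξ i)) (hexch : Exchangeable P ξ)
  (hmom : ∀ p : ℕ, Integrable (fun ω => |ξ 0 ω| ^ p) P)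

include hmeas hexch hmom in
lemma gm_abs (i j k l : ℕ) : |gm P ξ i j k l| ≤ gm P ξ 0 0 0 0 := by
  have hI := fun a => int_pow4 P ξ hmeas hexch hmom a
  have h1 : |gm P ξ i j k l| ≤ ∫ ω, |ξ i ω * ξ j ω * ξ k ω * ξ l ω| ∂P := by
    have := norm_integral_le_integral_norm (μ := P)
      (f := fun ω => ξ i ω * ξ j ω * ξ k ω * ξ l ω)
    simpa only [Real.norm_eq_abs, gm] using this
  have h2 : ∫ ω, |ξ i ω * ξ j ω * ξ k ω * ξ l ω| ∂P ≤
      ∫ ω, ((ξ i ω)^4 + (ξ j ω)^4 + (ξ k ω)^4 + (ξ l ω)^4)/4 ∂P := by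
    refine integral_mono (int_prod P ξ hmeas hexch hmom i j k l).abs ?_ fun ω => amgm4 _ _ _ _
    exact ((((hI i).add (hI j)).add (hI k)).add (hI l)).div_const 4
  have hIij : Integrable (fun ω => (ξ i ω)^4 + (ξ j ω)^4) P := (hI i).add (hI j)
  have hIijk : Integrable (fun ω => (ξ i ω)^4 + (ξ j ω)^4 + (ξ k ω)^4) P := hIij.add (hI k)
  have h3 : ∫ ω, ((ξ i ω)^4 + (ξ j ω)^4 + (ξ k ω)^4 + (ξ l ω)^4)/4 ∂P = gm P ξ 0 0 0 0 := by
    rw [integral_div, integral_add hIijk (hI l), integral_add hIij (hI k),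
      integral_add (hI i) (hI j),
      gm_pow, gm_pow, gm_pow, gm_pow, gm_diag P ξ hmeas hexch i, gm_diag P ξ hmeas hexch j,
      gm_diag P ξ hmeas hexch k, gm_diag P ξ hmeas hexch l]
    ring
  linarith

def ee (a b : ℕ) : ℝ := if a = b then 1 else 0

def NN2 (i j k l : ℕ) : ℝ := ee i j + ee i k + ee i l + ee j k + ee j l + ee k l

def NN3 (i j k l : ℕ) : ℝ :=
  ee i j * ee j k + ee i j * ee j l + ee i k * ee k l + ee j k * ee k l

def dd2 : ℝ := gm P ξ 0 0 1 2 - gm P ξ 0 1 2 3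

def dd3 : ℝ := gm P ξ 0 0 0 1 - gm P ξ 0 1 2 3 - 3 * dd2 P ξ

def hh (i j k l : ℕ) : ℝ :=
  gm P ξ i j k l - gm P ξ 0 1 2 3 - dd2 P ξ * NN2 i j k l - dd3 P ξ * NN3 i j k l

def BB : ℝ := gm P ξ 0 0 0 0 + |gm P ξ 0 1 2 3| + 6*|dd2 P ξ| + 4*|dd3 P ξ|

lemma ee_abs (a b : ℕ) : |ee a b| ≤ 1 := by
  unfold ee; split <;> simp

lemma ee_nonneg (a b : ℕ) : 0 ≤ ee a b := by
  unfold ee; split <;> simp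

lemma abs_sub4 (a b c d : ℝ) : |a - b - c - d| ≤ |a| + |b| + |c| + |d| := by
  calc |a - b - c - d| ≤ |a - b - c| + |d| := abs_sub _ _
    _ ≤ |a - b| + |c| + |d| := by linarith [abs_sub (a-b) c]
    _ ≤ |a| + |b| + |c| + |d| := by linarith [abs_sub a b]

include hmeas hexch hmom in
lemma hh_bound (i j k l : ℕ) : |hh P ξ i j k l| ≤ BB P ξ := by
  have h1 := gm_abs P ξ hmeas hexch hmom i j k l
  have h2 : |dd2 P ξ * NN2 i j k l| ≤ |dd2 P ξ| * 6 := by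
    rw [abs_mul]
    refine mul_le_mul_of_nonneg_left ?_ (abs_nonneg _)
    unfold NN2
    have a1 := abs_add_le (ee i j + ee i k + ee i l + ee j k + ee j l) (ee k l)
    have a2 := abs_add_le (ee i j + ee i k + ee i l + ee j k) (ee j l)
    have a3 := abs_add_le (ee i j + ee i k + ee i l) (ee j k)
    have a4 := abs_add_le (ee i j + ee i k) (ee i l)
    have a5 := abs_add_le (ee i j) (ee i k)
    linarith [ee_abs i j, ee_abs i k, ee_abs i l, ee_abs j k, ee_abs j l, ee_abs k l]
  have h3 : |dd3 P ξ * NN3 i j k l| ≤ |dd3 P ξ| * 4 := by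
    rw [abs_mul]
    refine mul_le_mul_of_nonneg_left ?_ (abs_nonneg _)
    unfold NN3
    have b1 : |ee i j * ee j k| ≤ 1 := by
      rw [abs_mul]; exact mul_le_one₀ (ee_abs _ _) (abs_nonneg _) (ee_abs _ _)
    have b2 : |ee i j * ee j l| ≤ 1 := by
      rw [abs_mul]; exact mul_le_one₀ (ee_abs _ _) (abs_nonneg _) (ee_abs _ _)
    have b3 : |ee i k * ee k l| ≤ 1 := by
      rw [abs_mul]; exact mul_le_one₀ (ee_abs _ _) (abs_nonneg _) (ee_abs _ _)
    have b4 : |ee j k * ee k l| ≤ 1 := by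
      rw [abs_mul]; exact mul_le_one₀ (ee_abs _ _) (abs_nonneg _) (ee_abs _ _)
    calc |ee i j * ee j k + ee i j * ee j l + ee i k * ee k l + ee j k * ee k l|
        ≤ |ee i j * ee j k + ee i j * ee j l + ee i k * ee k l| + |ee j k * ee k l| := abs_add_le _ _
      _ ≤ |ee i j * ee j k + ee i j * ee j l| + |ee i k * ee k l| + |ee j k * ee k l| := by
          linarith [abs_add_le (ee i j * ee j k + ee i j * ee j l) (ee i k * ee k l)]
      _ ≤ |ee i j * ee j k| + |ee i j * ee j l| + |ee i k * ee k l| + |ee j k * ee k l| := by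
          linarith [abs_add_le (ee i j * ee j k) (ee i j * ee j l)]
      _ ≤ 4 := by linarith
  have h4 := abs_sub4 (gm P ξ i j k l) (gm P ξ 0 1 2 3) (dd2 P ξ * NN2 i j k l)
    (dd3 P ξ * NN3 i j k l)
  unfold hh BB
  linarith

end C2
section C3
variable {Ω : Type*} [MeasurableSpace Ω] (P : Measure Ω)
  (ξ : ℕ → Ω → ℝ)
  (hmeas : ∀ i, Measurable (ξ i)) (hexch : Exchangeable P ξ)

include hmeas hexch in
lemma hh_zero (i j k l : ℕ)
    (hp1 : ¬(i = j ∧ k = l)) (hp2 : ¬(i = k ∧ j = l)) (hp3 : ¬(i = l ∧ j = k)) :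
    hh P ξ i j k l = 0 := by
  by_cases hij : i = j
  · subst hij
    have hkl : k ≠ l := fun h => hp1 ⟨rfl, h⟩
    by_cases hik : i = k
    · subst hik
      -- pattern (i,i,i,l) with i ≠ l
      simp only [hh, NN2, NN3, dd3, dd2, gm_31 P ξ hmeas hexch hkl]
      simp only [ee, eq_self_iff_true, if_true, if_neg hkl]
      ring
    · by_cases hil : i = l
      · -- pattern (i,i,k,i), triple at positions 1,2,4, i ≠ k
        subst hil
        rw [show hh P ξ i i k i =
            gm P ξ i i i k - gm P ξ 0 1 2 3 - dd2 P ξ * NN2 i i k i - dd3 P ξ * NN3 i i k i from by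
          rw [hh, gm_eq_of_mul_eq P ξ (i' := i) (j' := i) (k' := i) (l' := k)
            (fun ω => by ring)]]
        simp only [NN2, NN3, dd3, dd2, gm_31 P ξ hmeas hexch hik]
        simp only [ee, eq_self_iff_true, if_true, if_neg hik, if_neg (Ne.symm hik)]
        ring
      · -- pattern (i,i,k,l), one pair, i,k,l distinct
        simp only [hh, NN2, NN3, dd3, dd2, gm_211 P ξ hmeas hexch hik hil hkl]
        simp only [ee, eq_self_iff_true, if_true, if_neg hik, if_neg hil, if_neg hkl]
        ring
  · by_cases hik : i = k
    · subst hik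
      have hjl : j ≠ l := fun h => hp2 ⟨rfl, h⟩
      by_cases hil : i = l
      · -- pattern (i,j,i,i), triple at 1,3,4, i ≠ j
        subst hil
        rw [show hh P ξ i j i i =
            gm P ξ i i i j - gm P ξ 0 1 2 3 - dd2 P ξ * NN2 i j i i - dd3 P ξ * NN3 i j i i from by
          rw [hh, gm_eq_of_mul_eq P ξ (i' := i) (j' := i) (k' := i) (l' := j)
            (fun ω => by ring)]]
        simp only [NN2, NN3, dd3, dd2, gm_31 P ξ hmeas hexch hij]
        simp only [ee, eq_self_iff_true, if_true, if_neg hij, if_neg (Ne.symm hij)]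
        ring
      · -- pattern (i,j,i,l), pair at 1,3, i,j,l distinct
        rw [show hh P ξ i j i l =
            gm P ξ i i j l - gm P ξ 0 1 2 3 - dd2 P ξ * NN2 i j i l - dd3 P ξ * NN3 i j i l from by
          rw [hh, gm_eq_of_mul_eq P ξ (i' := i) (j' := i) (k' := j) (l' := l)
            (fun ω => by ring)]]
        simp only [NN2, NN3, dd3, dd2, gm_211 P ξ hmeas hexch hij hil hjl]
        simp only [ee, eq_self_iff_true, if_true, if_neg hij, if_neg hil, if_neg hjl, if_neg (Ne.symm hij)]
        ring
    · by_cases hil : i = l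
      · subst hil
        have hjk : j ≠ k := fun h => hp3 ⟨rfl, h⟩
        -- pattern (i,j,k,i), pair at 1,4, i,j,k distinct
        rw [show hh P ξ i j k i =
            gm P ξ i i j k - gm P ξ 0 1 2 3 - dd2 P ξ * NN2 i j k i - dd3 P ξ * NN3 i j k i from by
          rw [hh, gm_eq_of_mul_eq P ξ (i' := i) (j' := i) (k' := j) (l' := k)
            (fun ω => by ring)]]
        simp only [NN2, NN3, dd3, dd2, gm_211 P ξ hmeas hexch hij hik hjk]
        simp only [ee, eq_self_iff_true, if_true, if_neg hij, if_neg hik, if_neg hjk,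
          if_neg (Ne.symm hij), if_neg (Ne.symm hik)]
        ring
      · by_cases hjk : j = k
        · subst hjk
          by_cases hjl : j = l
          · -- pattern (i,j,j,j), triple at 2,3,4, i ≠ j
            subst hjl
            rw [show hh P ξ i j j j =
                gm P ξ j j j i - gm P ξ 0 1 2 3 - dd2 P ξ * NN2 i j j j - dd3 P ξ * NN3 i j j j from by
              rw [hh, gm_eq_of_mul_eq P ξ (i' := j) (j' := j) (k' := j) (l' := i)
                (fun ω => by ring)]]
            simp only [NN2, NN3, dd3, dd2, gm_31 P ξ hmeas hexch (Ne.symm hij)]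
            simp only [ee, eq_self_iff_true, if_true, if_neg hij]
            ring
          · -- pattern (i,j,j,l), pair at 2,3, i,j,l distinct
            rw [show hh P ξ i j j l =
                gm P ξ j j i l - gm P ξ 0 1 2 3 - dd2 P ξ * NN2 i j j l - dd3 P ξ * NN3 i j j l from by
              rw [hh, gm_eq_of_mul_eq P ξ (i' := j) (j' := j) (k' := i) (l' := l)
                (fun ω => by ring)]]
            simp only [NN2, NN3, dd3, dd2, gm_211 P ξ hmeas hexch (Ne.symm hij) hjl hil]
            simp only [ee, eq_self_iff_true, if_true, if_neg hij, if_neg hil, if_neg hjl]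
            ring
        · by_cases hjl : j = l
          · -- pattern (i,j,k,j), pair at 2,4, i,j,k distinct
            subst hjl
            rw [show hh P ξ i j k j =
                gm P ξ j j i k - gm P ξ 0 1 2 3 - dd2 P ξ * NN2 i j k j - dd3 P ξ * NN3 i j k j from by
              rw [hh, gm_eq_of_mul_eq P ξ (i' := j) (j' := j) (k' := i) (l' := k)
                (fun ω => by ring)]]
            simp only [NN2, NN3, dd3, dd2, gm_211 P ξ hmeas hexch (Ne.symm hij) hjk hik]
            simp only [ee, eq_self_iff_true, if_true, if_neg hij, if_neg hik, if_neg hjk, if_neg (Ne.symm hjk)]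
            ring
          · by_cases hkl : k = l
            · -- pattern (i,j,k,k), pair at 3,4, i,j,k distinct
              subst hkl
              rw [show hh P ξ i j k k =
                  gm P ξ k k i j - gm P ξ 0 1 2 3 - dd2 P ξ * NN2 i j k k - dd3 P ξ * NN3 i j k k from by
                rw [hh, gm_eq_of_mul_eq P ξ (i' := k) (j' := k) (k' := i) (l' := j)
                  (fun ω => by ring)]]
              simp only [NN2, NN3, dd3, dd2,
                gm_211 P ξ hmeas hexch (Ne.symm hik) (Ne.symm hjk) hij]
              simp only [ee, eq_self_iff_true, if_true, if_neg hij, if_neg hik, if_neg hjk]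
              ring
            · -- all distinct
              simp only [hh, NN2, NN3, dd3, dd2,
                gm_1111 P ξ hmeas hexch hij hik hil hjk hjl hkl]
              simp only [ee, if_neg hij, if_neg hik, if_neg hil, if_neg hjk, if_neg hjl,
                if_neg hkl]
              ring

end C3
section D

variable (s : Finset ℕ) (c : ℕ → ℝ)

lemma cong4 (f g : ℕ→ℕ→ℕ→ℕ→ℝ) (h : ∀ i j k l, f i j k l = g i j k l) :
    (∑ i ∈ s, ∑ j ∈ s, ∑ k ∈ s, ∑ l ∈ s, f i j k l)
      = ∑ i ∈ s, ∑ j ∈ s, ∑ k ∈ s, ∑ l ∈ s, g i j k l :=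
  Finset.sum_congr rfl fun i _ => Finset.sum_congr rfl fun j _ =>
    Finset.sum_congr rfl fun k _ => Finset.sum_congr rfl fun l _ => h i j k l

variable (h0 : ∑ i ∈ s, c i = 0)

include h0 in
lemma kill_l (F : ℕ→ℕ→ℕ→ℝ) :
    (∑ i ∈ s, ∑ j ∈ s, ∑ k ∈ s, ∑ l ∈ s, F i j k * c l) = 0 := by
  refine Finset.sum_eq_zero fun i _ => Finset.sum_eq_zero fun j _ => Finset.sum_eq_zero fun k _ => ?_
  rw [← Finset.mul_sum, h0, mul_zero]

include h0 in
lemma kill_k (F : ℕ→ℕ→ℕ→ℝ) :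
    (∑ i ∈ s, ∑ j ∈ s, ∑ k ∈ s, ∑ l ∈ s, c k * F i j l) = 0 := by
  refine Finset.sum_eq_zero fun i _ => Finset.sum_eq_zero fun j _ => ?_
  simp only [← Finset.mul_sum]
  rw [← Finset.sum_mul, h0, zero_mul]

include h0 in
lemma kill_j (F : ℕ→ℕ→ℕ→ℝ) :
    (∑ i ∈ s, ∑ j ∈ s, ∑ k ∈ s, ∑ l ∈ s, c j * F i k l) = 0 := by
  refine Finset.sum_eq_zero fun i _ => ?_
  simp only [← Finset.mul_sum]
  rw [← Finset.sum_mul, h0, zero_mul]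

include h0 in
lemma kill_i (F : ℕ→ℕ→ℕ→ℝ) :
    (∑ i ∈ s, ∑ j ∈ s, ∑ k ∈ s, ∑ l ∈ s, c i * F j k l) = 0 := by
  simp only [← Finset.mul_sum]
  rw [← Finset.sum_mul, h0, zero_mul]

lemma sum_pow_four (f : ℕ → ℝ) :
    (∑ i ∈ s, f i)^4 = ∑ i ∈ s, ∑ j ∈ s, ∑ k ∈ s, ∑ l ∈ s, f i * f j * f k * f l := by
  have h2 : (∑ i ∈ s, f i) * (∑ i ∈ s, f i) = ∑ i ∈ s, ∑ j ∈ s, f i * f j :=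
    Finset.sum_mul_sum s s f f
  calc (∑ i ∈ s, f i)^4
      = ((∑ i ∈ s, f i) * (∑ i ∈ s, f i)) * ((∑ i ∈ s, f i) * (∑ i ∈ s, f i)) := by ring
    _ = (∑ i ∈ s, ∑ j ∈ s, f i * f j) * (∑ k ∈ s, ∑ l ∈ s, f k * f l) := by rw [h2]
    _ = ∑ i ∈ s, ∑ k ∈ s, ((∑ j ∈ s, f i * f j) * (∑ l ∈ s, f k * f l)) :=
        Finset.sum_mul_sum s s _ _
    _ = ∑ i ∈ s, ∑ k ∈ s, ∑ j ∈ s, ∑ l ∈ s, (f i * f j) * (f k * f l) := by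
        refine Finset.sum_congr rfl fun i _ => Finset.sum_congr rfl fun k _ => ?_
        exact Finset.sum_mul_sum s s _ _
    _ = ∑ i ∈ s, ∑ j ∈ s, ∑ k ∈ s, ∑ l ∈ s, f i * f j * f k * f l := by
        refine Finset.sum_congr rfl fun i _ => ?_
        rw [Finset.sum_comm]
        exact Finset.sum_congr rfl fun j _ => Finset.sum_congr rfl fun k _ =>
          Finset.sum_congr rfl fun l _ => by ring

lemma abs_sum4 (f : ℕ→ℕ→ℕ→ℕ→ℝ) :
    |∑ i ∈ s, ∑ j ∈ s, ∑ k ∈ s, ∑ l ∈ s, f i j k l|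
      ≤ ∑ i ∈ s, ∑ j ∈ s, ∑ k ∈ s, ∑ l ∈ s, |f i j k l| := by
  refine (Finset.abs_sum_le_sum_abs _ _).trans (Finset.sum_le_sum fun i _ => ?_)
  refine (Finset.abs_sum_le_sum_abs _ _).trans (Finset.sum_le_sum fun j _ => ?_)
  refine (Finset.abs_sum_le_sum_abs _ _).trans (Finset.sum_le_sum fun k _ => ?_)
  exact Finset.abs_sum_le_sum_abs _ _

lemma collapse {k : ℕ} (hk : k ∈ s) (f : ℕ → ℝ) :
    ∑ l ∈ s, f l * ee k l = f k := by
  rw [Finset.sum_eq_single k]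
  · simp [ee]
  · intro b _ hb
    simp only [ee]
    rw [if_neg (fun h => hb h.symm), mul_zero]
  · intro h; exact absurd hk h

lemma pairS1 :
    (∑ i ∈ s, ∑ j ∈ s, ∑ k ∈ s, ∑ l ∈ s,
        |c i| * |c j| * |c k| * |c l| * (ee i j * ee k l))
      = (∑ i ∈ s, (c i)^2) * (∑ i ∈ s, (c i)^2) := by
  have L1 : ∀ i j, ∀ k ∈ s,
      (∑ l ∈ s, |c i| * |c j| * |c k| * |c l| * (ee i j * ee k l))
        = |c i| * |c j| * ee i j * (c k)^2 := by
    intro i j k hk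
    rw [Finset.sum_congr rfl fun l _ =>
      show |c i| * |c j| * |c k| * |c l| * (ee i j * ee k l)
        = (fun l => |c i| * |c j| * ee i j * (|c k| * |c l|)) l * ee k l from by ring,
      collapse s hk]
    rw [abs_mul_abs_self]
    ring
  have L2 : ∀ i j, j ∈ s →
      (∑ k ∈ s, ∑ l ∈ s, |c i| * |c j| * |c k| * |c l| * (ee i j * ee k l))
        = |c i| * |c j| * ee i j * (∑ k ∈ s, (c k)^2) := by
    intro i j _
    rw [Finset.sum_congr rfl fun k hk => L1 i j k hk, ← Finset.mul_sum]
  have L3 : ∀ i ∈ s,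
      (∑ j ∈ s, ∑ k ∈ s, ∑ l ∈ s, |c i| * |c j| * |c k| * |c l| * (ee i j * ee k l))
        = (c i)^2 * (∑ k ∈ s, (c k)^2) := by
    intro i hi
    rw [Finset.sum_congr rfl fun j hj => L2 i j hj,
      Finset.sum_congr rfl fun j _ =>
        show |c i| * |c j| * ee i j * (∑ k ∈ s, (c k)^2)
          = (fun j => |c i| * |c j| * (∑ k ∈ s, (c k)^2)) j * ee i j from by ring,
      collapse s hi]
    rw [abs_mul_abs_self]
    ring
  rw [Finset.sum_congr rfl L3, ← Finset.sum_mul]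

lemma pairS2 :
    (∑ i ∈ s, ∑ j ∈ s, ∑ k ∈ s, ∑ l ∈ s,
        |c i| * |c j| * |c k| * |c l| * (ee i k * ee j l))
      = (∑ i ∈ s, (c i)^2) * (∑ i ∈ s, (c i)^2) := by
  have L1 : ∀ i j k, ∀ hj : j ∈ s,
      (∑ l ∈ s, |c i| * |c j| * |c k| * |c l| * (ee i k * ee j l))
        = |c i| * |c k| * ee i k * (c j)^2 := by
    intro i j k hj
    rw [Finset.sum_congr rfl fun l _ =>
      show |c i| * |c j| * |c k| * |c l| * (ee i k * ee j l)
        = (fun l => |c i| * |c k| * ee i k * (|c j| * |c l|)) l * ee j l from by ring,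
      collapse s hj]
    rw [abs_mul_abs_self]
    ring
  have L2 : ∀ i, ∀ j ∈ s,
      (∑ k ∈ s, ∑ l ∈ s, |c i| * |c j| * |c k| * |c l| * (ee i k * ee j l))
        = (∑ k ∈ s, |c i| * |c k| * ee i k) * (c j)^2 := by
    intro i j hj
    rw [Finset.sum_congr rfl fun k _ => L1 i j k hj, ← Finset.sum_mul]
  have L3 : ∀ i ∈ s,
      (∑ j ∈ s, ∑ k ∈ s, ∑ l ∈ s, |c i| * |c j| * |c k| * |c l| * (ee i k * ee j l))
        = (c i)^2 * (∑ j ∈ s, (c j)^2) := by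
    intro i hi
    rw [Finset.sum_congr rfl fun j hj => L2 i j hj, ← Finset.mul_sum]
    congr 1
    rw [Finset.sum_congr rfl fun k _ =>
        show |c i| * |c k| * ee i k = (fun k => |c i| * |c k|) k * ee i k from by ring,
      collapse s hi]
    rw [abs_mul_abs_self]
    ring
  rw [Finset.sum_congr rfl L3, ← Finset.sum_mul]

lemma pairS3 :
    (∑ i ∈ s, ∑ j ∈ s, ∑ k ∈ s, ∑ l ∈ s,
        |c i| * |c j| * |c k| * |c l| * (ee i l * ee j k))
      = (∑ i ∈ s, (c i)^2) * (∑ i ∈ s, (c i)^2) := by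
  have L1 : ∀ i j k, ∀ hi : i ∈ s,
      (∑ l ∈ s, |c i| * |c j| * |c k| * |c l| * (ee i l * ee j k))
        = |c j| * |c k| * ee j k * (c i)^2 := by
    intro i j k hi
    rw [Finset.sum_congr rfl fun l _ =>
      show |c i| * |c j| * |c k| * |c l| * (ee i l * ee j k)
        = (fun l => |c j| * |c k| * ee j k * (|c i| * |c l|)) l * ee i l from by ring,
      collapse s hi]
    rw [abs_mul_abs_self]
    ring
  have L2 : ∀ i ∈ s, ∀ j,
      (∑ k ∈ s, ∑ l ∈ s, |c i| * |c j| * |c k| * |c l| * (ee i l * ee j k))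
        = (∑ k ∈ s, |c j| * |c k| * ee j k) * (c i)^2 := by
    intro i hi j
    rw [Finset.sum_congr rfl fun k _ => L1 i j k hi, ← Finset.sum_mul]
  have L3 : ∀ i ∈ s,
      (∑ j ∈ s, ∑ k ∈ s, ∑ l ∈ s, |c i| * |c j| * |c k| * |c l| * (ee i l * ee j k))
        = (∑ j ∈ s, (c j)^2) * (c i)^2 := by
    intro i hi
    rw [Finset.sum_congr rfl fun j _ => L2 i hi j, ← Finset.sum_mul]
    congr 1
    refine Finset.sum_congr rfl fun j hj => ?_
    rw [Finset.sum_congr rfl fun k _ =>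
        show |c j| * |c k| * ee j k = (fun k => |c j| * |c k|) k * ee j k from by ring,
      collapse s hj]
    rw [abs_mul_abs_self]
    ring
  rw [Finset.sum_congr rfl L3, ← Finset.mul_sum]

end D
section E
variable {Ω : Type*} [MeasurableSpace Ω] (P : Measure Ω)
  (ξ : ℕ → Ω → ℝ)

/-- the averages -/
def TT (n : ℕ) (ω : Ω) : ℝ := (∑ i ∈ Finset.range n, ξ i ω) / n

variable (hmeas : ∀ i, Measurable (ξ i)) (hexch : Exchangeable P ξ)
  (hmom : ∀ p : ℕ, Integrable (fun ω => |ξ 0 ω| ^ p) P)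

include hmeas hexch hmom in
lemma main_bound {m n : ℕ} (hm : 0 < m) (hmn : m ≤ n) :
    Integrable (fun ω => (TT ξ m ω - TT ξ n ω)^4) P ∧
    ∫ ω, (TT ξ m ω - TT ξ n ω)^4 ∂P ≤ 3 * BB P ξ * (1/(m:ℝ) - 1/(n:ℝ))^2 := by
  classical
  have hn : 0 < n := lt_of_lt_of_le hm hmn
  have hm0 : (m:ℝ) ≠ 0 := Nat.cast_ne_zero.mpr hm.ne'
  have hn0 : (n:ℝ) ≠ 0 := Nat.cast_ne_zero.mpr hn.ne'
  set δ : ℝ := 1/(m:ℝ) - 1/(n:ℝ) with hδ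
  set c : ℕ → ℝ := fun i => if i < m then δ else -(1/(n:ℝ)) with hc
  set s : Finset ℕ := Finset.range n with hs
  have hsplit : ∀ f : ℕ → ℝ,
      (∑ i ∈ s, f i) = (∑ i ∈ Finset.range m, f i) + ∑ i ∈ Finset.Ico m n, f i := by
    intro f
    rw [hs, Finset.range_eq_Ico, ← Finset.sum_Ico_consecutive f (Nat.zero_le m) hmn,
      ← Finset.range_eq_Ico]
  have hc1 : ∀ i ∈ Finset.range m, c i = δ := fun i hi => if_pos (Finset.mem_range.mp hi)
  have hc2 : ∀ i ∈ Finset.Ico m n, c i = -(1/(n:ℝ)) := fun i hi =>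
    if_neg (by have := (Finset.mem_Ico.mp hi).1; omega)
  have hgen : ∀ x y : ℝ, (∑ i ∈ s, (if i < m then x else y)) = m*x + ((n:ℝ)-(m:ℝ))*y := by
    intro x y
    rw [hsplit (fun i => if i < m then x else y),
      Finset.sum_congr rfl (fun i hi => if_pos (Finset.mem_range.mp hi)),
      Finset.sum_congr rfl (fun i hi =>
        if_neg (by have := (Finset.mem_Ico.mp hi).1; omega))]
    simp only [Finset.sum_const, Finset.card_range, Nat.card_Ico, nsmul_eq_mul,
      Nat.cast_sub hmn]
  have h0 : ∑ i ∈ s, c i = 0 := by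
    rw [hc]
    rw [hgen δ (-(1/(n:ℝ))), hδ]
    field_simp
    ring
  have hS2 : ∑ i ∈ s, (c i)^2 = δ := by
    have hpow : ∀ i, (c i)^2 = if i < m then δ^2 else (1/(n:ℝ))^2 := by
      intro i; by_cases h : i < m <;> simp [hc, h] <;> ring
    rw [Finset.sum_congr rfl fun i _ => hpow i, hgen (δ^2) ((1/(n:ℝ))^2), hδ]
    field_simp
    ring
  have hrep : ∀ ω, TT ξ m ω - TT ξ n ω = ∑ i ∈ s, c i * ξ i ω := by
    intro ω
    have e1 : ∀ i ∈ Finset.range m, c i * ξ i ω = δ * ξ i ω := fun i hi => by rw [hc1 i hi]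
    have e2 : ∀ i ∈ Finset.Ico m n, c i * ξ i ω = -(1/(n:ℝ)) * ξ i ω := fun i hi => by
      rw [hc2 i hi]
    rw [hsplit (fun i => c i * ξ i ω), Finset.sum_congr rfl e1, Finset.sum_congr rfl e2,
      ← Finset.mul_sum, ← Finset.mul_sum]
    simp only [TT, hs]
    rw [hsplit (fun i => ξ i ω)]
    rw [hδ]
    field_simp
    ring
  -- integrability of the expanded products
  have hprod : ∀ i j k l : ℕ, Integrable
      (fun ω => c i * ξ i ω * (c j * ξ j ω) * (c k * ξ k ω) * (c l * ξ l ω)) P := by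
    intro i j k l
    have he : (fun ω => c i * ξ i ω * (c j * ξ j ω) * (c k * ξ k ω) * (c l * ξ l ω))
        = fun ω => (c i * c j * c k * c l) * (ξ i ω * ξ j ω * ξ k ω * ξ l ω) := by
      funext ω; ring
    rw [he]
    exact (int_prod P ξ hmeas hexch hmom i j k l).const_mul _
  have hfun : (fun ω => (TT ξ m ω - TT ξ n ω)^4)
      = fun ω => ∑ i ∈ s, ∑ j ∈ s, ∑ k ∈ s, ∑ l ∈ s,
          c i * ξ i ω * (c j * ξ j ω) * (c k * ξ k ω) * (c l * ξ l ω) := by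
    funext ω
    rw [hrep ω, sum_pow_four]
  have hInt4 : Integrable (fun ω => (TT ξ m ω - TT ξ n ω)^4) P := by
    rw [hfun]
    exact integrable_finset_sum s fun i _ => integrable_finset_sum s fun j _ =>
      integrable_finset_sum s fun k _ => integrable_finset_sum s fun l _ => hprod i j k l
  refine ⟨hInt4, ?_⟩
  have hExp : ∫ ω, (TT ξ m ω - TT ξ n ω)^4 ∂P
      = ∑ i ∈ s, ∑ j ∈ s, ∑ k ∈ s, ∑ l ∈ s,
          (c i * c j * c k * c l) * gm P ξ i j k l := by
    rw [hfun]
    rw [integral_finset_sum s fun i _ => integrable_finset_sum s fun j _ =>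
      integrable_finset_sum s fun k _ => integrable_finset_sum s fun l _ => hprod i j k l]
    refine Finset.sum_congr rfl fun i _ => ?_
    rw [integral_finset_sum s fun j _ => integrable_finset_sum s fun k _ =>
      integrable_finset_sum s fun l _ => hprod i j k l]
    refine Finset.sum_congr rfl fun j _ => ?_
    rw [integral_finset_sum s fun k _ => integrable_finset_sum s fun l _ => hprod i j k l]
    refine Finset.sum_congr rfl fun k _ => ?_
    rw [integral_finset_sum s fun l _ => hprod i j k l]
    refine Finset.sum_congr rfl fun l _ => ?_
    have he : (fun ω => c i * ξ i ω * (c j * ξ j ω) * (c k * ξ k ω) * (c l * ξ l ω))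
        = fun ω => (c i * c j * c k * c l) * (ξ i ω * ξ j ω * ξ k ω * ξ l ω) := by
      funext ω; ring
    rw [he, integral_const_mul]
    rfl
  -- kill the centered parts
  have Z0 : (∑ i ∈ s, ∑ j ∈ s, ∑ k ∈ s, ∑ l ∈ s,
      (c i * c j * c k * c l) * gm P ξ 0 1 2 3) = 0 :=
    (cong4 s _ _ (fun i j k l => by ring)).trans
      (kill_l s c h0 (fun i j k => c i * c j * c k * gm P ξ 0 1 2 3))
  have Zij : (∑ i ∈ s, ∑ j ∈ s, ∑ k ∈ s, ∑ l ∈ s,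
      (c i * c j * c k * c l) * (dd2 P ξ * ee i j)) = 0 :=
    (cong4 s _ _ (fun i j k l => by ring)).trans
      (kill_l s c h0 (fun i j k => c i * c j * c k * (dd2 P ξ * ee i j)))
  have Zik : (∑ i ∈ s, ∑ j ∈ s, ∑ k ∈ s, ∑ l ∈ s,
      (c i * c j * c k * c l) * (dd2 P ξ * ee i k)) = 0 :=
    (cong4 s _ _ (fun i j k l => by ring)).trans
      (kill_l s c h0 (fun i j k => c i * c j * c k * (dd2 P ξ * ee i k)))
  have Zil : (∑ i ∈ s, ∑ j ∈ s, ∑ k ∈ s, ∑ l ∈ s,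
      (c i * c j * c k * c l) * (dd2 P ξ * ee i l)) = 0 :=
    (cong4 s _ _ (fun i j k l => by ring)).trans
      (kill_k s c h0 (fun i j l => c i * c j * c l * (dd2 P ξ * ee i l)))
  have Zjk : (∑ i ∈ s, ∑ j ∈ s, ∑ k ∈ s, ∑ l ∈ s,
      (c i * c j * c k * c l) * (dd2 P ξ * ee j k)) = 0 :=
    (cong4 s _ _ (fun i j k l => by ring)).trans
      (kill_l s c h0 (fun i j k => c i * c j * c k * (dd2 P ξ * ee j k)))
  have Zjl : (∑ i ∈ s, ∑ j ∈ s, ∑ k ∈ s, ∑ l ∈ s,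
      (c i * c j * c k * c l) * (dd2 P ξ * ee j l)) = 0 :=
    (cong4 s _ _ (fun i j k l => by ring)).trans
      (kill_k s c h0 (fun i j l => c i * c j * c l * (dd2 P ξ * ee j l)))
  have Zkl : (∑ i ∈ s, ∑ j ∈ s, ∑ k ∈ s, ∑ l ∈ s,
      (c i * c j * c k * c l) * (dd2 P ξ * ee k l)) = 0 :=
    (cong4 s _ _ (fun i j k l => by ring)).trans
      (kill_i s c h0 (fun j k l => c j * c k * c l * (dd2 P ξ * ee k l)))
  have Zt1 : (∑ i ∈ s, ∑ j ∈ s, ∑ k ∈ s, ∑ l ∈ s,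
      (c i * c j * c k * c l) * (dd3 P ξ * (ee i j * ee j k))) = 0 :=
    (cong4 s _ _ (fun i j k l => by ring)).trans
      (kill_l s c h0 (fun i j k => c i * c j * c k * (dd3 P ξ * (ee i j * ee j k))))
  have Zt2 : (∑ i ∈ s, ∑ j ∈ s, ∑ k ∈ s, ∑ l ∈ s,
      (c i * c j * c k * c l) * (dd3 P ξ * (ee i j * ee j l))) = 0 :=
    (cong4 s _ _ (fun i j k l => by ring)).trans
      (kill_k s c h0 (fun i j l => c i * c j * c l * (dd3 P ξ * (ee i j * ee j l))))
  have Zt3 : (∑ i ∈ s, ∑ j ∈ s, ∑ k ∈ s, ∑ l ∈ s,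
      (c i * c j * c k * c l) * (dd3 P ξ * (ee i k * ee k l))) = 0 :=
    (cong4 s _ _ (fun i j k l => by ring)).trans
      (kill_j s c h0 (fun i k l => c i * c k * c l * (dd3 P ξ * (ee i k * ee k l))))
  have Zt4 : (∑ i ∈ s, ∑ j ∈ s, ∑ k ∈ s, ∑ l ∈ s,
      (c i * c j * c k * c l) * (dd3 P ξ * (ee j k * ee k l))) = 0 :=
    (cong4 s _ _ (fun i j k l => by ring)).trans
      (kill_i s c h0 (fun j k l => c j * c k * c l * (dd3 P ξ * (ee j k * ee k l))))
  have hred : (∑ i ∈ s, ∑ j ∈ s, ∑ k ∈ s, ∑ l ∈ s,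
      (c i * c j * c k * c l) * gm P ξ i j k l)
      = ∑ i ∈ s, ∑ j ∈ s, ∑ k ∈ s, ∑ l ∈ s,
          (c i * c j * c k * c l) * hh P ξ i j k l := by
    have step1 : (∑ i ∈ s, ∑ j ∈ s, ∑ k ∈ s, ∑ l ∈ s,
        (c i * c j * c k * c l) * gm P ξ i j k l)
        = ∑ i ∈ s, ∑ j ∈ s, ∑ k ∈ s, ∑ l ∈ s,
            ((c i * c j * c k * c l) * gm P ξ 0 1 2 3
            + (c i * c j * c k * c l) * (dd2 P ξ * ee i j)
            + (c i * c j * c k * c l) * (dd2 P ξ * ee i k)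
            + (c i * c j * c k * c l) * (dd2 P ξ * ee i l)
            + (c i * c j * c k * c l) * (dd2 P ξ * ee j k)
            + (c i * c j * c k * c l) * (dd2 P ξ * ee j l)
            + (c i * c j * c k * c l) * (dd2 P ξ * ee k l)
            + (c i * c j * c k * c l) * (dd3 P ξ * (ee i j * ee j k))
            + (c i * c j * c k * c l) * (dd3 P ξ * (ee i j * ee j l))
            + (c i * c j * c k * c l) * (dd3 P ξ * (ee i k * ee k l))
            + (c i * c j * c k * c l) * (dd3 P ξ * (ee j k * ee k l))
            + (c i * c j * c k * c l) * hh P ξ i j k l) :=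
      cong4 s _ _ (fun i j k l => by simp only [hh, NN2, NN3]; ring)
    rw [step1]
    simp only [Finset.sum_add_distrib]
    rw [Z0, Zij, Zik, Zil, Zjk, Zjl, Zkl, Zt1, Zt2, Zt3, Zt4]
    ring
  -- bound the remaining sum
  have hBB0 : 0 ≤ BB P ξ := by
    have h1 : 0 ≤ gm P ξ 0 0 0 0 := by
      rw [← gm_pow P ξ 0]
      exact integral_nonneg fun ω => by positivity
    unfold BB
    positivity
  have hhB : ∀ i j k l : ℕ, |hh P ξ i j k l| ≤
      BB P ξ * (ee i j * ee k l + ee i k * ee j l + ee i l * ee j k) := by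
    intro i j k l
    have hb := hh_bound P ξ hmeas hexch hmom i j k l
    have en : ∀ a b : ℕ, 0 ≤ ee a b := ee_nonneg
    have m1 := mul_nonneg (en i j) (en k l)
    have m2 := mul_nonneg (en i k) (en j l)
    have m3 := mul_nonneg (en i l) (en j k)
    by_cases h1 : i = j ∧ k = l
    · have h4 : (1:ℝ) ≤ ee i j * ee k l + ee i k * ee j l + ee i l * ee j k := by
        have : ee i j * ee k l = 1 := by simp [ee, h1.1, h1.2]
        linarith
      calc |hh P ξ i j k l| ≤ BB P ξ := hb
        _ = BB P ξ * 1 := by ring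
        _ ≤ _ := mul_le_mul_of_nonneg_left h4 hBB0
    · by_cases h2 : i = k ∧ j = l
      · have h4 : (1:ℝ) ≤ ee i j * ee k l + ee i k * ee j l + ee i l * ee j k := by
          have : ee i k * ee j l = 1 := by simp [ee, h2.1, h2.2]
          linarith
        calc |hh P ξ i j k l| ≤ BB P ξ := hb
          _ = BB P ξ * 1 := by ring
          _ ≤ _ := mul_le_mul_of_nonneg_left h4 hBB0
      · by_cases h3 : i = l ∧ j = k
        · have h4 : (1:ℝ) ≤ ee i j * ee k l + ee i k * ee j l + ee i l * ee j k := by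
            have : ee i l * ee j k = 1 := by simp [ee, h3.1, h3.2]
            linarith
          calc |hh P ξ i j k l| ≤ BB P ξ := hb
            _ = BB P ξ * 1 := by ring
            _ ≤ _ := mul_le_mul_of_nonneg_left h4 hBB0
        · rw [hh_zero P ξ hmeas hexch i j k l h1 h2 h3, abs_zero]
          exact mul_nonneg hBB0 (by linarith)
  have hptw : ∀ i j k l : ℕ, |(c i * c j * c k * c l) * hh P ξ i j k l| ≤
      |c i| * |c j| * |c k| * |c l| * (BB P ξ * (ee i j * ee k l))
      + |c i| * |c j| * |c k| * |c l| * (BB P ξ * (ee i k * ee j l))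
      + |c i| * |c j| * |c k| * |c l| * (BB P ξ * (ee i l * ee j k)) := by
    intro i j k l
    have h1 : |(c i * c j * c k * c l) * hh P ξ i j k l|
        = (|c i| * |c j| * |c k| * |c l|) * |hh P ξ i j k l| := by
      rw [abs_mul, abs_mul, abs_mul, abs_mul]
    rw [h1]
    have h2 := hhB i j k l
    have h3 : 0 ≤ |c i| * |c j| * |c k| * |c l| := by positivity
    have h4 := mul_le_mul_of_nonneg_left h2 h3
    calc (|c i| * |c j| * |c k| * |c l|) * |hh P ξ i j k l|
        ≤ (|c i| * |c j| * |c k| * |c l|) *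
          (BB P ξ * (ee i j * ee k l + ee i k * ee j l + ee i l * ee j k)) := h4
      _ = _ := by ring
  calc ∫ ω, (TT ξ m ω - TT ξ n ω)^4 ∂P
      = ∑ i ∈ s, ∑ j ∈ s, ∑ k ∈ s, ∑ l ∈ s,
          (c i * c j * c k * c l) * hh P ξ i j k l := by rw [hExp, hred]
    _ ≤ |∑ i ∈ s, ∑ j ∈ s, ∑ k ∈ s, ∑ l ∈ s,
          (c i * c j * c k * c l) * hh P ξ i j k l| := le_abs_self _
    _ ≤ ∑ i ∈ s, ∑ j ∈ s, ∑ k ∈ s, ∑ l ∈ s,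
          |(c i * c j * c k * c l) * hh P ξ i j k l| := abs_sum4 s _
    _ ≤ ∑ i ∈ s, ∑ j ∈ s, ∑ k ∈ s, ∑ l ∈ s,
          (|c i| * |c j| * |c k| * |c l| * (BB P ξ * (ee i j * ee k l))
          + |c i| * |c j| * |c k| * |c l| * (BB P ξ * (ee i k * ee j l))
          + |c i| * |c j| * |c k| * |c l| * (BB P ξ * (ee i l * ee j k))) := by
        refine Finset.sum_le_sum fun i _ => Finset.sum_le_sum fun j _ =>
          Finset.sum_le_sum fun k _ => Finset.sum_le_sum fun l _ => hptw i j k l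
    _ = BB P ξ * (∑ i ∈ s, ∑ j ∈ s, ∑ k ∈ s, ∑ l ∈ s,
          |c i| * |c j| * |c k| * |c l| * (ee i j * ee k l))
        + BB P ξ * (∑ i ∈ s, ∑ j ∈ s, ∑ k ∈ s, ∑ l ∈ s,
          |c i| * |c j| * |c k| * |c l| * (ee i k * ee j l))
        + BB P ξ * (∑ i ∈ s, ∑ j ∈ s, ∑ k ∈ s, ∑ l ∈ s,
          |c i| * |c j| * |c k| * |c l| * (ee i l * ee j k)) := by
        rw [(cong4 s _ _ (fun i j k l => by ring) :
          (∑ i ∈ s, ∑ j ∈ s, ∑ k ∈ s, ∑ l ∈ s,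
            (|c i| * |c j| * |c k| * |c l| * (BB P ξ * (ee i j * ee k l))
            + |c i| * |c j| * |c k| * |c l| * (BB P ξ * (ee i k * ee j l))
            + |c i| * |c j| * |c k| * |c l| * (BB P ξ * (ee i l * ee j k))))
          = ∑ i ∈ s, ∑ j ∈ s, ∑ k ∈ s, ∑ l ∈ s,
              (BB P ξ * (|c i| * |c j| * |c k| * |c l| * (ee i j * ee k l))
              + BB P ξ * (|c i| * |c j| * |c k| * |c l| * (ee i k * ee j l))
              + BB P ξ * (|c i| * |c j| * |c k| * |c l| * (ee i l * ee j k))))]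
        simp only [Finset.sum_add_distrib, ← Finset.mul_sum]
    _ = 3 * BB P ξ * δ^2 := by
        rw [pairS1 s c, pairS2 s c, pairS3 s c, hS2]
        ring
    _ = 3 * BB P ξ * (1/(m:ℝ) - 1/(n:ℝ))^2 := by rw [hδ]

end E
section F
variable {Ω : Type*} [MeasurableSpace Ω] (P : Measure Ω) [IsProbabilityMeasure P]
  (ξ : ℕ → Ω → ℝ)
  (hmeas : ∀ i, Measurable (ξ i)) (hexch : Exchangeable P ξ)
  (hmom : ∀ p : ℕ, Integrable (fun ω => |ξ 0 ω| ^ p) P)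

lemma BB_nonneg : 0 ≤ BB P ξ := by
  have h1 : 0 ≤ gm P ξ 0 0 0 0 := by
    rw [← gm_pow P ξ 0]
    exact integral_nonneg fun ω => by positivity
  unfold BB
  positivity

include hmeas hexch hmom in
theorem stmt10' :
    ∃ M : Ω → ℝ, Measurable M ∧
      ∀ᵐ ω ∂P, Tendsto (fun n : ℕ => TT ξ n ω) atTop (𝓝 (M ω)) := by
  classical
  set C : ℝ := 3 * BB P ξ with hCdef
  have hC0 : 0 ≤ C := by
    have := BB_nonneg P ξ
    rw [hCdef]; linarith
  -- Chebyshev bound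
  have cheb : ∀ m n : ℕ, 0 < m → m ≤ n → ∀ ε : ℝ, 0 < ε →
      P {ω | ε ≤ |TT ξ m ω - TT ξ n ω|} ≤
        ENNReal.ofReal (C * (1/(m:ℝ) - 1/(n:ℝ))^2 / ε^4) := by
    intro m n hm hmn ε hε
    obtain ⟨hInt, hB⟩ := main_bound P ξ hmeas hexch hmom hm hmn
    have hsub : {ω | ε ≤ |TT ξ m ω - TT ξ n ω|} ⊆
        {ω | ε^4 ≤ (TT ξ m ω - TT ξ n ω)^4} := by
      intro ω hω
      have h1 : ε^4 ≤ |TT ξ m ω - TT ξ n ω|^4 := pow_le_pow_left₀ hε.le hω 4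
      have h2 : |TT ξ m ω - TT ξ n ω|^4 = (TT ξ m ω - TT ξ n ω)^4 := by
        rw [← abs_pow]; exact abs_of_nonneg (by positivity)
      rwa [h2] at h1
    refine (measure_mono hsub).trans ?_
    have hM := mul_meas_ge_le_integral_of_nonneg (μ := P)
      (f := fun ω => (TT ξ m ω - TT ξ n ω)^4)
      (Filter.Eventually.of_forall fun ω => by positivity) hInt (ε^4)
    have hε4 : (0:ℝ) < ε^4 := by positivity
    have h3 : (P {ω | ε^4 ≤ (TT ξ m ω - TT ξ n ω)^4}).toReal ≤
        C * (1/(m:ℝ) - 1/(n:ℝ))^2 / ε^4 := by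
      rw [le_div_iff₀ hε4]
      calc (P {ω | ε^4 ≤ (TT ξ m ω - TT ξ n ω)^4}).toReal * ε^4
          = ε^4 * (P {ω | ε^4 ≤ (TT ξ m ω - TT ξ n ω)^4}).toReal := by ring
        _ ≤ ∫ ω, (TT ξ m ω - TT ξ n ω)^4 ∂P := hM
        _ ≤ C * (1/(m:ℝ) - 1/(n:ℝ))^2 := by rw [hCdef]; exact hB
    exact (ENNReal.le_ofReal_iff_toReal_le (measure_ne_top P _) (by positivity)).mpr h3
  -- the bad events
  set A : ℕ → Set Ω := fun k => ⋃ n ∈ Finset.Icc (2^k) (2^(k+1)),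
    {ω | (7/8:ℝ)^k ≤ |TT ξ n ω - TT ξ (2^k) ω|} with hAdef
  have hAbound : ∀ k : ℕ, P (A k) ≤ ENNReal.ofReal ((2*C) * (2048/2401:ℝ)^k) := by
    intro k
    have h2k : (0:ℕ) < 2^k := pow_pos (by norm_num) k
    have hρ : (0:ℝ) < (7/8:ℝ)^k := by positivity
    have hbnd_eq : C * (1/((2:ℝ))^k)^2 / ((7/8:ℝ)^k)^4 = C * ((1024/2401:ℝ))^k := by
      have e0 : (1/((2:ℝ))^k)^2 = ((1/4:ℝ))^k := by
        rw [← one_div_pow, ← pow_mul, mul_comm k 2, pow_mul]; norm_num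
      have e2 : ((7/8:ℝ)^k)^4 = ((2401/4096:ℝ))^k := by
        rw [← pow_mul, mul_comm k 4, pow_mul]; norm_num
      have e3 : ((1/4:ℝ))^k / ((2401/4096:ℝ))^k = (((1/4:ℝ))/((2401/4096:ℝ)))^k :=
        (div_pow _ _ k).symm
      have e4 : (((1/4:ℝ))/((2401/4096:ℝ))) = (1024/2401:ℝ) := by norm_num
      rw [e0, e2, mul_div_assoc, e3, e4]
    have hstep : ∀ n ∈ Finset.Icc (2^k) (2^(k+1)),
        P {ω | (7/8:ℝ)^k ≤ |TT ξ n ω - TT ξ (2^k) ω|} ≤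
          ENNReal.ofReal (C * ((1024/2401:ℝ))^k) := by
      intro n hn
      obtain ⟨hn1, hn2⟩ := Finset.mem_Icc.mp hn
      have hseteq : {ω | (7/8:ℝ)^k ≤ |TT ξ n ω - TT ξ (2^k) ω|}
          = {ω | (7/8:ℝ)^k ≤ |TT ξ (2^k) ω - TT ξ n ω|} := by
        ext ω; rw [Set.mem_setOf_eq, Set.mem_setOf_eq, abs_sub_comm]
      rw [hseteq]
      refine (cheb (2^k) n h2k hn1 ((7/8:ℝ)^k) hρ).trans ?_
      rw [← hbnd_eq]
      refine ENNReal.ofReal_le_ofReal ?_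
      have hc2 : ((2^k : ℕ) : ℝ) = (2:ℝ)^k := by push_cast; ring
      have hfr : (0:ℝ) ≤ 1/((2^k : ℕ):ℝ) - 1/(n:ℝ) := by
        rw [sub_nonneg]
        apply one_div_le_one_div_of_le
        · exact_mod_cast h2k
        · exact_mod_cast hn1
      have hfr2 : 1/((2^k : ℕ):ℝ) - 1/(n:ℝ) ≤ 1/((2:ℝ))^k := by
        rw [← hc2]
        have hn0 : (0:ℝ) < (n:ℝ) := by
          have : 0 < n := lt_of_lt_of_le h2k hn1
          exact_mod_cast this
        have : 0 < 1/(n:ℝ) := by positivity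
        linarith
      have hsq : (1/((2^k : ℕ):ℝ) - 1/(n:ℝ))^2 ≤ (1/((2:ℝ))^k)^2 :=
        pow_le_pow_left₀ hfr hfr2 2
      gcongr
    have hcard : (Finset.Icc (2^k) (2^(k+1))).card = 2^k + 1 := by
      rw [Nat.card_Icc, pow_succ]
      omega
    calc P (A k) ≤ ∑ n ∈ Finset.Icc (2^k) (2^(k+1)),
          P {ω | (7/8:ℝ)^k ≤ |TT ξ n ω - TT ξ (2^k) ω|} := by
          rw [hAdef]
          exact measure_biUnion_finset_le _ _
      _ ≤ ∑ n ∈ Finset.Icc (2^k) (2^(k+1)), ENNReal.ofReal (C * ((1024/2401:ℝ))^k) :=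
          Finset.sum_le_sum hstep
      _ = ((2^k + 1 : ℕ) : ℝ≥0∞) * ENNReal.ofReal (C * ((1024/2401:ℝ))^k) := by
          rw [Finset.sum_const, hcard, nsmul_eq_mul]
      _ = ENNReal.ofReal (((2^k + 1 : ℕ) : ℝ) * (C * ((1024/2401:ℝ))^k)) := by
          rw [← ENNReal.ofReal_natCast (2^k + 1),
            ← ENNReal.ofReal_mul (by positivity : (0:ℝ) ≤ ((2^k + 1 : ℕ) : ℝ))]
      _ ≤ ENNReal.ofReal ((2*C) * (2048/2401:ℝ)^k) := by
          refine ENNReal.ofReal_le_ofReal ?_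
          have hcardR : ((2^k + 1 : ℕ) : ℝ) ≤ 2*(2:ℝ)^k := by
            push_cast
            have h1 : (1:ℝ) ≤ (2:ℝ)^k := one_le_pow₀ (by norm_num)
            linarith
          have hpos : (0:ℝ) ≤ C * ((1024/2401:ℝ))^k := by positivity
          calc ((2^k + 1 : ℕ) : ℝ) * (C * ((1024/2401:ℝ))^k)
              ≤ (2*(2:ℝ)^k) * (C * ((1024/2401:ℝ))^k) :=
                mul_le_mul_of_nonneg_right hcardR hpos
            _ = (2*C) * ((2:ℝ)^k * ((1024/2401:ℝ))^k) := by ring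
            _ = (2*C) * (2048/2401:ℝ)^k := by
                rw [← mul_pow]
                norm_num
  -- Borel–Cantelli
  have hsum : (∑' k, P (A k)) ≠ ⊤ := by
    have hsummable : Summable (fun k : ℕ => (2*C) * (2048/2401:ℝ)^k) :=
      (summable_geometric_of_lt_one (by norm_num) (by norm_num)).mul_left _
    have h1 : (∑' k, P (A k)) ≤ ∑' k, ENNReal.ofReal ((2*C) * (2048/2401:ℝ)^k) :=
      ENNReal.tsum_le_tsum hAbound
    have h2 : (∑' k, ENNReal.ofReal ((2*C) * (2048/2401:ℝ)^k))
        = ENNReal.ofReal (∑' k, (2*C) * (2048/2401:ℝ)^k) :=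
      (ENNReal.ofReal_tsum_of_nonneg (fun k => by positivity) hsummable).symm
    rw [h2] at h1
    exact ne_top_of_le_ne_top ENNReal.ofReal_ne_top h1
  have hBC : ∀ᵐ ω ∂P, ∀ᶠ k in atTop, ω ∉ A k := MeasureTheory.ae_eventually_notMem hsum
  -- measurability of the averages
  have hTTmeas : ∀ n : ℕ, Measurable (fun ω => TT ξ n ω) := by
    intro n
    exact (Finset.measurable_sum _ fun i _ => hmeas i).div_const _
  -- a.e. convergence
  have hae : ∀ᵐ ω ∂P, ∃ l : ℝ, Tendsto (fun n : ℕ => TT ξ n ω) atTop (𝓝 l) := by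
    filter_upwards [hBC] with ω hω
    obtain ⟨K, hK⟩ := Filter.eventually_atTop.mp hω
    have hgood : ∀ k, K ≤ k → ∀ n, 2^k ≤ n → n ≤ 2^(k+1) →
        |TT ξ n ω - TT ξ (2^k) ω| < (7/8:ℝ)^k := by
      intro k hk n h1 h2
      by_contra hcon
      exact hK k hk (Set.mem_iUnion₂.mpr ⟨n, Finset.mem_Icc.mpr ⟨h1, h2⟩, not_lt.mp hcon⟩)
    -- Cauchy along dyadic subsequence
    set φ : ℕ → ℝ := fun j => TT ξ (2^(K+j)) ω with hφdef
    have hφcauchy : CauchySeq φ := by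
      refine cauchySeq_of_le_geometric (7/8:ℝ) ((7/8:ℝ)^K) (by norm_num) fun j => ?_
      have h1 : 2^(K+j) ≤ 2^(K+j+1) := Nat.pow_le_pow_right (by norm_num) (by omega)
      have h2 := hgood (K+j) (by omega) (2^(K+j+1)) h1 le_rfl
      rw [hφdef]
      simp only [Real.dist_eq]
      have e1 : K + (j+1) = K + j + 1 := by omega
      rw [e1, abs_sub_comm]
      calc |TT ξ (2^(K+j+1)) ω - TT ξ (2^(K+j)) ω| ≤ (7/8:ℝ)^(K+j) := h2.le
        _ = (7/8:ℝ)^K * (7/8:ℝ)^j := pow_add _ _ _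
    obtain ⟨L, hL⟩ := cauchySeq_tendsto_of_complete hφcauchy
    refine ⟨L, ?_⟩
    rw [Metric.tendsto_atTop]
    intro ε hε
    obtain ⟨K2, hK2⟩ := Metric.tendsto_atTop.mp hL (ε/2) (by linarith)
    have hpow0 : Tendsto (fun k : ℕ => (7/8:ℝ)^k) atTop (𝓝 0) :=
      tendsto_pow_atTop_nhds_zero_of_lt_one (by norm_num) (by norm_num)
    obtain ⟨K3, hK3⟩ := Filter.eventually_atTop.mp
      (hpow0.eventually (gt_mem_nhds (show (0:ℝ) < ε/2 by linarith)))
    refine ⟨2^(K + K2 + K3), fun n hn => ?_⟩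
    have hn0 : n ≠ 0 := by
      have : 0 < 2^(K+K2+K3) := pow_pos (by norm_num) _
      omega
    set k := Nat.log 2 n with hkdef
    have h2k : 2^k ≤ n := Nat.pow_log_le_self 2 hn0
    have h2k' : n < 2^(k+1) := Nat.lt_pow_succ_log_self (by norm_num) n
    have hk_ge : K + K2 + K3 ≤ k := by
      rw [hkdef]
      exact (Nat.le_log_iff_pow_le (by norm_num) hn0).mpr (le_trans hn le_rfl)
    have hd1 : |TT ξ n ω - TT ξ (2^k) ω| < (7/8:ℝ)^k :=
      hgood k (by omega) n h2k h2k'.le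
    have hd1' : |TT ξ n ω - TT ξ (2^k) ω| < ε/2 :=
      lt_trans hd1 (hK3 k (by omega))
    have hφk : φ (k - K) = TT ξ (2^k) ω := by
      have e : K + (k - K) = k := by omega
      calc φ (k - K) = TT ξ (2^(K + (k - K))) ω := rfl
        _ = TT ξ (2^k) ω := by rw [e]
    have hd2 : dist (TT ξ (2^k) ω) L < ε/2 := by
      rw [← hφk]
      exact hK2 (k - K) (by omega)
    have := dist_triangle (TT ξ n ω) (TT ξ (2^k) ω) L
    rw [Real.dist_eq] at this ⊢
    rw [Real.dist_eq] at hd2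
    calc |TT ξ n ω - L| ≤ |TT ξ n ω - TT ξ (2^k) ω| + |TT ξ (2^k) ω - L| := by
          have h := abs_sub_le (TT ξ n ω) (TT ξ (2^k) ω) L
          exact h
      _ < ε/2 + ε/2 := add_lt_add hd1' hd2
      _ = ε := by ring
  obtain ⟨M, hMm, hMt⟩ := measurable_limit_of_tendsto_metrizable_ae
    (fun n => (hTTmeas n).aemeasurable) hae
  exact ⟨M, hMm, hMt⟩

end F

/-- Strong law of large numbers for exchangeable sequences: the averages
`M_n = (1/n) Σ_{i<n} ξ_i` converge `P`-almost surely to a (real-valued) random variable. -/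
theorem stmt10 {Ω : Type*} [MeasurableSpace Ω] (P : Measure Ω) [IsProbabilityMeasure P]
    (ξ : ℕ → Ω → ℝ) (hmeas : ∀ i, Measurable (ξ i)) (hexch : Exchangeable P ξ)
    (hmom : ∀ p : ℕ, Integrable (fun ω => |ξ 0 ω| ^ p) P) :
    ∃ M : Ω → ℝ, Measurable M ∧
      ∀ᵐ ω ∂P,
        Tendsto (fun n : ℕ => (∑ i ∈ Finset.range n, ξ i ω) / n) atTop (𝓝 (M ω)) := by
  obtain ⟨M, hMm, hMt⟩ := stmt10' P ξ hmeas hexch hmom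
  exact ⟨M, hMm, hMt⟩
end
end

section
/- Let (ξ_i)_{i∈ℕ} be an exchangeable sequence of real-valued random variables on a probability space (Ω,F,P) with E(|ξ_1|^p) < ∞ for all p > 0. Then the sequence V_n := (1/n)·Σ_{i=1}^n ξ_i² − ((1/n)·Σ_{i=1}^n ξ_i)² converges P-almost surely to a real-valued random variable V, and V ≥ 0 almost surely. -/
set_option linter.unusedSectionVars false
set_option linter.unusedVariables false
set_option maxHeartbeats 1000000


open MeasureTheory ProbabilityTheory Filter Topology
open scoped ENNReal NNReal

noncomputable section

lemma amgm4_s11 (w x y z : ℝ) : |w * x * y * z| ≤ (w^4 + x^4 + y^4 + z^4) / 4 := by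
  have h : |w * x * y * z| = |w| * |x| * |y| * |z| := by
    rw [abs_mul, abs_mul, abs_mul]
  set W := |w|; set X := |x|; set Y := |y|; set Z := |z|
  have hw : 0 ≤ W := abs_nonneg w
  have hx : 0 ≤ X := abs_nonneg x
  have hy : 0 ≤ Y := abs_nonneg y
  have hz : 0 ≤ Z := abs_nonneg z
  have h4 : ∀ t : ℝ, t^4 = |t|^4 := fun t => by
    rw [← abs_pow]; exact (abs_of_nonneg (by positivity)).symm
  rw [h, h4 w, h4 x, h4 y, h4 z]
  nlinarith [sq_nonneg (W*X - Y*Z), sq_nonneg (W^2 - X^2), sq_nonneg (Y^2 - Z^2),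
    mul_nonneg hw hx, mul_nonneg hy hz, mul_nonneg (mul_nonneg hw hx) (mul_nonneg hy hz)]

lemma diff4_le (p q : ℝ) : (p - q)^4 ≤ 8 * (p^4 + q^4) := by
  nlinarith [sq_nonneg (p - q), sq_nonneg (p + q), sq_nonneg (p^2 - q^2), sq_nonneg (p*q),
    sq_nonneg (p^2 + q^2)]

lemma abs_le_pow4 {a x : ℝ} (ha : 0 < a) : |x| ≤ a + x^4 / a^3 := by
  have ha3 : (0:ℝ) < a^3 := by positivity
  rcases le_or_gt |x| a with h | h
  · have : 0 ≤ x^4 / a^3 := by positivity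
    linarith
  · have h4 : x^4 = |x|^4 := by rw [← abs_pow]; exact (abs_of_nonneg (by positivity)).symm
    have h3 : a^3 ≤ |x|^3 := pow_le_pow_left₀ ha.le h.le 3
    have : |x| ≤ x^4 / a^3 := by
      rw [le_div_iff₀ ha3, h4]
      calc |x| * a^3 ≤ |x| * |x|^3 := by
            apply mul_le_mul_of_nonneg_left h3 (abs_nonneg x)
        _ = |x|^4 := by ring
    linarith

lemma pow4_sum_le {ι : Type*} (F : Finset ι) (y : ι → ℝ) :
    (∑ i ∈ F, y i)^4 ≤ (F.card : ℝ)^3 * ∑ i ∈ F, (y i)^4 := by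
  have h1 : (∑ i ∈ F, y i)^2 ≤ (F.card : ℝ) * ∑ i ∈ F, (y i)^2 := by
    exact sq_sum_le_card_mul_sum_sq
  have h2 : (∑ i ∈ F, (y i)^2)^2 ≤ (F.card : ℝ) * ∑ i ∈ F, ((y i)^2)^2 := by
    exact sq_sum_le_card_mul_sum_sq
  calc (∑ i ∈ F, y i)^4 = ((∑ i ∈ F, y i)^2)^2 := by ring
    _ ≤ ((F.card : ℝ) * ∑ i ∈ F, (y i)^2)^2 := by
        apply pow_le_pow_left₀ (sq_nonneg _) h1
    _ = (F.card:ℝ)^2 * (∑ i ∈ F, (y i)^2)^2 := by ring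
    _ ≤ (F.card:ℝ)^2 * ((F.card : ℝ) * ∑ i ∈ F, ((y i)^2)^2) := by
        apply mul_le_mul_of_nonneg_left h2 (by positivity)
    _ = (F.card : ℝ)^3 * ∑ i ∈ F, ((y i)^2)^2 := by ring
    _ = (F.card : ℝ)^3 * ∑ i ∈ F, (y i)^4 := by
        congr 1; exact Finset.sum_congr rfl fun i _ => by ring

lemma sq_sum_eq_prod {ι : Type*} (F : Finset ι) (g : ι → ℝ) :
    (∑ i ∈ F, g i)^2 = ∑ p ∈ F ×ˢ F, g p.1 * g p.2 := by
  rw [Finset.sum_product, sq, Finset.sum_mul_sum]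

lemma sum_pow_four_s11 {ι : Type*} (F : Finset ι) (f : ι → ℝ) :
    (∑ i ∈ F, f i)^4
      = ∑ p ∈ (F ×ˢ F) ×ˢ (F ×ˢ F), f p.1.1 * f p.1.2 * f p.2.1 * f p.2.2 := by
  rw [show (∑ i ∈ F, f i)^4 = ((∑ i ∈ F, f i)^2)^2 by ring, sq_sum_eq_prod F f,
    sq_sum_eq_prod (F ×ˢ F) (fun p => f p.1 * f p.2)]
  apply Finset.sum_congr rfl; intro p _
  ring

lemma odd_sign (t1 t2 t3 t4 : ℕ)
    (h : ¬((t1 = t2 ∧ t3 = t4) ∨ (t1 = t3 ∧ t2 = t4) ∨ (t1 = t4 ∧ t2 = t3))) :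
    ∃ v : ℕ, (v = t1 ∨ v = t2 ∨ v = t3 ∨ v = t4) ∧
      (if t1 = v then (-1:ℝ) else 1) * (if t2 = v then (-1:ℝ) else 1) *
      (if t3 = v then (-1:ℝ) else 1) * (if t4 = v then (-1:ℝ) else 1) = -1 := by
  push_neg at h
  obtain ⟨h1, h2, h3⟩ := h
  by_cases e12 : t1 = t2
  · have e34 : t3 ≠ t4 := h1 e12
    by_cases e13 : t1 = t3
    · have e14 : t1 ≠ t4 := fun hc => e34 (e13 ▸ hc ▸ rfl)
      refine ⟨t4, Or.inr (Or.inr (Or.inr rfl)), ?_⟩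
      rw [if_neg (by omega), if_neg (by omega), if_neg (by omega), if_pos rfl]; ring
    · refine ⟨t3, Or.inr (Or.inr (Or.inl rfl)), ?_⟩
      rw [if_neg (by omega), if_neg (by omega), if_pos rfl, if_neg (by omega)]; ring
  · by_cases e13 : t1 = t3
    · have e24 : t2 ≠ t4 := h2 e13
      by_cases e14 : t1 = t4
      · refine ⟨t2, Or.inr (Or.inl rfl), ?_⟩
        rw [if_neg (by omega), if_pos rfl, if_neg (by omega),
          if_neg (by omega)]
        ring
      · refine ⟨t4, Or.inr (Or.inr (Or.inr rfl)), ?_⟩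
        rw [if_neg (by omega), if_neg (by omega), if_neg (by omega), if_pos rfl]; ring
    · by_cases e14 : t1 = t4
      · have e23 : t2 ≠ t3 := h3 e14
        refine ⟨t2, Or.inr (Or.inl rfl), ?_⟩
        rw [if_neg (by omega), if_pos rfl, if_neg (by omega), if_neg (by omega)]
        ring
      · refine ⟨t1, Or.inl rfl, ?_⟩
        rw [if_pos rfl, if_neg (by omega), if_neg (by omega), if_neg (by omega)]; ring


lemma pow4_abs (t : ℝ) : |t|^4 = t^4 := by
  rw [← abs_pow]; exact abs_of_nonneg (by positivity)

def Am {Ω : Type*} (ξ : ℕ → Ω → ℝ) (n : ℕ) (ω : Ω) : ℝ := (∑ i ∈ Finset.range n, ξ i ω) / n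

section Ctx
variable {Ω : Type*} [MeasurableSpace Ω] (P : Measure Ω) [IsProbabilityMeasure P]
  (ξ : ℕ → Ω → ℝ) (hmeas : ∀ i, Measurable (ξ i)) (hexch : Exchangeable P ξ)
include hmeas hexch

lemma transfer (n : ℕ) (π : Equiv.Perm (Fin n)) (F : (Fin n → ℝ) → ℝ) (hF : Measurable F) :
    ∫ ω, F (fun i => ξ (π i).val ω) ∂P = ∫ ω, F (fun i => ξ i.val ω) ∂P := by
  have h1 : Measurable fun ω (i : Fin n) => ξ (π i).val ω :=
    measurable_pi_lambda _ fun i => hmeas _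
  have h2 : Measurable fun ω (i : Fin n) => ξ i.val ω :=
    measurable_pi_lambda _ fun i => hmeas _
  rw [← integral_map h1.aemeasurable hF.aestronglyMeasurable,
    ← integral_map h2.aemeasurable hF.aestronglyMeasurable, hexch n π]

lemma map_single (a : ℕ) : Measure.map (ξ a) P = Measure.map (ξ 0) P := by
  classical
  have h := hexch (a+1) (Equiv.swap ⟨0, Nat.succ_pos a⟩ ⟨a, Nat.lt_succ_self a⟩)
  have h1 : Measurable fun ω (i : Fin (a+1)) =>
      ξ ((Equiv.swap ⟨0, Nat.succ_pos a⟩ ⟨a, Nat.lt_succ_self a⟩ : Equiv.Perm (Fin (a+1))) i).val ω :=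
    measurable_pi_lambda _ fun i => hmeas _
  have h2 : Measurable fun ω (i : Fin (a+1)) => ξ i.val ω :=
    measurable_pi_lambda _ fun i => hmeas _
  have h3 := congrArg (Measure.map (fun x : Fin (a+1) → ℝ => x ⟨0, Nat.succ_pos a⟩)) h
  rw [Measure.map_map (measurable_pi_apply _) h1, Measure.map_map (measurable_pi_apply _) h2] at h3
  simpa [Function.comp_def, Equiv.swap_apply_left] using h3

variable (hmom4 : Integrable (fun ω => |ξ 0 ω| ^ 4) P)
include hmom4

lemma int_abs_pow4 (a : ℕ) : Integrable (fun ω => |ξ a ω| ^ 4) P := by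
  have hg : AEStronglyMeasurable (fun x : ℝ => |x|^4) (Measure.map (ξ a) P) :=
    (measurable_abs.pow_const 4).aestronglyMeasurable
  have h0 : AEStronglyMeasurable (fun x : ℝ => |x|^4) (Measure.map (ξ 0) P) :=
    (measurable_abs.pow_const 4).aestronglyMeasurable
  have h : Integrable (fun x : ℝ => |x|^4) (Measure.map (ξ 0) P) :=
    (integrable_map_measure h0 (hmeas 0).aemeasurable).mpr (by exact hmom4)
  rw [← map_single P ξ hmeas hexch a] at h
  exact (integrable_map_measure hg (hmeas a).aemeasurable).mp h

lemma int_pow4_s11 (a : ℕ) : Integrable (fun ω => (ξ a ω)^4) P :=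
  (int_abs_pow4 P ξ hmeas hexch hmom4 a).congr (ae_of_all _ fun ω => pow4_abs _)

lemma integral_pow4_eq (a : ℕ) : ∫ ω, (ξ a ω)^4 ∂P = ∫ ω, |ξ 0 ω|^4 ∂P := by
  have key : ∀ b, ∫ ω, (ξ b ω)^4 ∂P = ∫ x : ℝ, |x|^4 ∂(Measure.map (ξ b) P) := by
    intro b
    rw [integral_map (hmeas b).aemeasurable (measurable_abs.pow_const 4).aestronglyMeasurable]
    exact integral_congr_ae (ae_of_all _ fun ω => (pow4_abs _).symm)
  rw [key a, map_single P ξ hmeas hexch a, ← key 0]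
  exact integral_congr_ae (ae_of_all _ fun ω => (pow4_abs _).symm)

lemma int_base (a : ℕ) : Integrable (ξ a) P := by
  apply Integrable.mono' ((integrable_const (1:ℝ)).add (int_pow4_s11 P ξ hmeas hexch hmom4 a))
    (hmeas a).aestronglyMeasurable
  refine ae_of_all _ fun ω => ?_
  have := abs_le_pow4 (x := ξ a ω) one_pos
  simpa [Real.norm_eq_abs] using this

omit hmeas hexch hmom4 in
lemma int_prod4' (f₁ f₂ f₃ f₄ : Ω → ℝ) (h₁ : Measurable f₁) (h₂ : Measurable f₂)
    (h₃ : Measurable f₃) (h₄ : Measurable f₄)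
    (g₁ : Integrable (fun ω => (f₁ ω)^4) P) (g₂ : Integrable (fun ω => (f₂ ω)^4) P)
    (g₃ : Integrable (fun ω => (f₃ ω)^4) P) (g₄ : Integrable (fun ω => (f₄ ω)^4) P) :
    Integrable (fun ω => f₁ ω * f₂ ω * f₃ ω * f₄ ω) P := by
  apply Integrable.mono' ((((g₁.add g₂).add g₃).add g₄).div_const 4)
    (((h₁.mul h₂).mul h₃).mul h₄).aestronglyMeasurable
  refine ae_of_all _ fun ω => ?_
  have := amgm4_s11 (f₁ ω) (f₂ ω) (f₃ ω) (f₄ ω)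
  simpa only [Real.norm_eq_abs, Pi.add_apply, Pi.mul_apply] using this

omit hmeas hexch hmom4 in
lemma integral_prod4_le (f₁ f₂ f₃ f₄ : Ω → ℝ) (h₁ : Measurable f₁) (h₂ : Measurable f₂)
    (h₃ : Measurable f₃) (h₄ : Measurable f₄)
    (g₁ : Integrable (fun ω => (f₁ ω)^4) P) (g₂ : Integrable (fun ω => (f₂ ω)^4) P)
    (g₃ : Integrable (fun ω => (f₃ ω)^4) P) (g₄ : Integrable (fun ω => (f₄ ω)^4) P) :
    ∫ ω, f₁ ω * f₂ ω * f₃ ω * f₄ ω ∂P ≤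
      (∫ ω, (f₁ ω)^4 ∂P + ∫ ω, (f₂ ω)^4 ∂P + ∫ ω, (f₃ ω)^4 ∂P + ∫ ω, (f₄ ω)^4 ∂P) / 4 := by
  have hle : ∀ ω, f₁ ω * f₂ ω * f₃ ω * f₄ ω
      ≤ ((f₁ ω)^4 + (f₂ ω)^4 + (f₃ ω)^4 + (f₄ ω)^4) / 4 :=
    fun ω => le_trans (le_abs_self _) (amgm4_s11 _ _ _ _)
  calc ∫ ω, f₁ ω * f₂ ω * f₃ ω * f₄ ω ∂P
      ≤ ∫ ω, ((f₁ ω)^4 + (f₂ ω)^4 + (f₃ ω)^4 + (f₄ ω)^4) / 4 ∂P :=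
        integral_mono (int_prod4' P f₁ f₂ f₃ f₄ h₁ h₂ h₃ h₄ g₁ g₂ g₃ g₄)
          ((((g₁.add g₂).add g₃).add g₄).div_const 4) hle
    _ = (∫ ω, (f₁ ω)^4 ∂P + ∫ ω, (f₂ ω)^4 ∂P + ∫ ω, (f₃ ω)^4 ∂P + ∫ ω, (f₄ ω)^4 ∂P) / 4 := by
        have G12 : Integrable (fun ω => (f₁ ω)^4 + (f₂ ω)^4) P := g₁.add g₂
        have G123 : Integrable (fun ω => (f₁ ω)^4 + (f₂ ω)^4 + (f₃ ω)^4) P := G12.add g₃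
        rw [integral_div, integral_add G123 g₄, integral_add G12 g₃, integral_add g₁ g₂]

lemma int_diff_pow4 (a b : ℕ) : Integrable (fun ω => (ξ a ω - ξ b ω)^4) P := by
  apply Integrable.mono'
    (((int_pow4_s11 P ξ hmeas hexch hmom4 a).add (int_pow4_s11 P ξ hmeas hexch hmom4 b)).const_mul 8)
    (((hmeas a).sub (hmeas b)).pow_const 4).aestronglyMeasurable
  refine ae_of_all _ fun ω => ?_
  have h1 : ‖(ξ a ω - ξ b ω)^4‖ = (ξ a ω - ξ b ω)^4 := by
    rw [Real.norm_eq_abs]; exact abs_of_nonneg (by positivity)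
  simp only [Pi.sub_apply, Pi.add_apply]
  rw [h1]
  exact diff4_le _ _

lemma integral_diff_pow4_le (a b : ℕ) :
    ∫ ω, (ξ a ω - ξ b ω)^4 ∂P ≤ 16 * ∫ ω, |ξ 0 ω|^4 ∂P := by
  calc ∫ ω, (ξ a ω - ξ b ω)^4 ∂P
      ≤ ∫ ω, 8 * ((ξ a ω)^4 + (ξ b ω)^4) ∂P :=
        integral_mono (int_diff_pow4 P ξ hmeas hexch hmom4 a b)
          (((int_pow4_s11 P ξ hmeas hexch hmom4 a).add (int_pow4_s11 P ξ hmeas hexch hmom4 b)).const_mul 8)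
          fun ω => diff4_le _ _
    _ = 8 * (∫ ω, (ξ a ω)^4 ∂P + ∫ ω, (ξ b ω)^4 ∂P) := by
        rw [integral_const_mul,
          integral_add (int_pow4_s11 P ξ hmeas hexch hmom4 a) (int_pow4_s11 P ξ hmeas hexch hmom4 b)]
    _ = 16 * ∫ ω, |ξ 0 ω|^4 ∂P := by
        rw [integral_pow4_eq P ξ hmeas hexch hmom4 a, integral_pow4_eq P ξ hmeas hexch hmom4 b]; ring

lemma int_sumdiff_pow4 {ι : Type*} (F : Finset ι) (aa bb : ι → ℕ) :
    Integrable (fun ω => (∑ i ∈ F, (ξ (aa i) ω - ξ (bb i) ω))^4) P := by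
  have hrw : (fun ω => (∑ i ∈ F, (ξ (aa i) ω - ξ (bb i) ω))^4)
      = fun ω => ∑ p ∈ (F ×ˢ F) ×ˢ (F ×ˢ F),
          (ξ (aa p.1.1) ω - ξ (bb p.1.1) ω) * (ξ (aa p.1.2) ω - ξ (bb p.1.2) ω) *
          (ξ (aa p.2.1) ω - ξ (bb p.2.1) ω) * (ξ (aa p.2.2) ω - ξ (bb p.2.2) ω) :=
    funext fun ω => sum_pow_four_s11 F _
  rw [hrw]
  refine integrable_finset_sum _ fun p _ => int_prod4' P _ _ _ _
    ((hmeas _).sub (hmeas _)) ((hmeas _).sub (hmeas _))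
    ((hmeas _).sub (hmeas _)) ((hmeas _).sub (hmeas _))
    (int_diff_pow4 P ξ hmeas hexch hmom4 _ _) (int_diff_pow4 P ξ hmeas hexch hmom4 _ _)
    (int_diff_pow4 P ξ hmeas hexch hmom4 _ _) (int_diff_pow4 P ξ hmeas hexch hmom4 _ _)
omit hmeas hexch hmom4 in
lemma ite_and_split (A B : Prop) [Decidable A] [Decidable B] :
    (if A ∧ B then (1:ℝ) else 0) = (if A then (1:ℝ) else 0) * (if B then (1:ℝ) else 0) := by
  by_cases hA : A <;> by_cases hB : B <;> simp [hA, hB]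

omit hmeas hexch hmom4 in
lemma count_pairings (j : ℕ) :
    ∑ p ∈ ((Finset.range j ×ˢ Finset.range j) ×ˢ (Finset.range j ×ˢ Finset.range j)),
      ((if p.1.1 = p.1.2 ∧ p.2.1 = p.2.2 then (1:ℝ) else 0) +
       (if p.1.1 = p.2.1 ∧ p.1.2 = p.2.2 then (1:ℝ) else 0) +
       (if p.1.1 = p.2.2 ∧ p.1.2 = p.2.1 then (1:ℝ) else 0)) = 3 * (j:ℝ)^2 := by
  classical
  set F := Finset.range j with hF
  rw [Finset.sum_add_distrib, Finset.sum_add_distrib]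
  have hdiag : ∑ q ∈ F ×ˢ F, (if q.1 = q.2 then (1:ℝ) else 0) = (j:ℝ) := by
    rw [Finset.sum_product]
    have : ∀ x ∈ F, (∑ y ∈ F, if x = y then (1:ℝ) else 0) = 1 := by
      intro x hx
      rw [Finset.sum_ite_eq F x (fun _ => (1:ℝ)), if_pos hx]
    rw [Finset.sum_congr rfl this]
    simp [hF]
  have c1 : ∑ p ∈ ((F ×ˢ F) ×ˢ (F ×ˢ F)),
      (if p.1.1 = p.1.2 ∧ p.2.1 = p.2.2 then (1:ℝ) else 0) = (j:ℝ)^2 := by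
    rw [Finset.sum_product]
    rw [Finset.sum_congr rfl (fun q (_ : q ∈ F ×ˢ F) =>
      Finset.sum_congr rfl (fun r (_ : r ∈ F ×ˢ F) => ite_and_split (q.1 = q.2) (r.1 = r.2)))]
    rw [← Finset.sum_mul_sum, hdiag]
    ring
  have c2 : ∑ p ∈ ((F ×ˢ F) ×ˢ (F ×ˢ F)),
      (if p.1.1 = p.2.1 ∧ p.1.2 = p.2.2 then (1:ℝ) else 0) = (j:ℝ)^2 := by
    rw [Finset.sum_product]
    have : ∀ q ∈ F ×ˢ F, (∑ r ∈ F ×ˢ F, if q.1 = r.1 ∧ q.2 = r.2 then (1:ℝ) else 0) = 1 := by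
      intro q hq
      have hrw : ∀ r : ℕ × ℕ, (if q.1 = r.1 ∧ q.2 = r.2 then (1:ℝ) else 0)
          = if q = r then (1:ℝ) else 0 := by
        intro r; apply if_congr _ rfl rfl; rw [Prod.ext_iff]
      rw [Finset.sum_congr rfl fun r _ => hrw r,
        Finset.sum_ite_eq (F ×ˢ F) q (fun _ => (1:ℝ)), if_pos hq]
    rw [Finset.sum_congr rfl this]
    simp [hF, Finset.card_product]
    ring
  have c3 : ∑ p ∈ ((F ×ˢ F) ×ˢ (F ×ˢ F)),
      (if p.1.1 = p.2.2 ∧ p.1.2 = p.2.1 then (1:ℝ) else 0) = (j:ℝ)^2 := by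
    rw [Finset.sum_product]
    have : ∀ q ∈ F ×ˢ F, (∑ r ∈ F ×ˢ F, if q.1 = r.2 ∧ q.2 = r.1 then (1:ℝ) else 0) = 1 := by
      intro q hq
      have hqmem : (q.2, q.1) ∈ F ×ˢ F := by
        rw [Finset.mem_product] at hq ⊢
        exact ⟨hq.2, hq.1⟩
      have hrw : ∀ r : ℕ × ℕ, (if q.1 = r.2 ∧ q.2 = r.1 then (1:ℝ) else 0)
          = if (q.2, q.1) = r then (1:ℝ) else 0 := by
        intro r; apply if_congr _ rfl rfl
        rw [Prod.ext_iff]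
        constructor
        · rintro ⟨h1, h2⟩; exact ⟨h2, h1⟩
        · rintro ⟨h1, h2⟩; exact ⟨h2, h1⟩
      rw [Finset.sum_congr rfl fun r _ => hrw r,
        Finset.sum_ite_eq (F ×ˢ F) (q.2, q.1) (fun _ => (1:ℝ)), if_pos hqmem]
    rw [Finset.sum_congr rfl this]
    simp [hF, Finset.card_product]
    ring
  rw [c1, c2, c3]
  ring
lemma vanish (j : ℕ) (aa bb : ℕ → ℕ)
    (hd : ∀ i, i < j → ∀ i', i' < j →
      (aa i = aa i' → i = i') ∧ (bb i = bb i' → i = i') ∧ aa i ≠ bb i')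
    (t1 t2 t3 t4 : ℕ) (ht1 : t1 < j) (ht2 : t2 < j) (ht3 : t3 < j) (ht4 : t4 < j)
    (hnp : ¬((t1 = t2 ∧ t3 = t4) ∨ (t1 = t3 ∧ t2 = t4) ∨ (t1 = t4 ∧ t2 = t3))) :
    ∫ ω, (ξ (aa t1) ω - ξ (bb t1) ω) * (ξ (aa t2) ω - ξ (bb t2) ω) *
      (ξ (aa t3) ω - ξ (bb t3) ω) * (ξ (aa t4) ω - ξ (bb t4) ω) ∂P = 0 := by
  classical
  obtain ⟨v, hvmem, hsign⟩ := odd_sign t1 t2 t3 t4 hnp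
  have hvj : v < j := by rcases hvmem with rfl | rfl | rfl | rfl <;> assumption
  set n : ℕ := 1 + (Finset.range j).sup (fun i => max (aa i) (bb i)) with hn
  have hnpos : 0 < n := by omega
  have hbound : ∀ i, i < j → aa i < n ∧ bb i < n := by
    intro i hi
    have h := Finset.le_sup (f := fun i => max (aa i) (bb i)) (Finset.mem_range.mpr hi)
    have h1 := le_trans (le_max_left (aa i) (bb i)) h
    have h2 := le_trans (le_max_right (aa i) (bb i)) h
    omega
  obtain ⟨em, hem⟩ : ∃ em : ℕ → Fin n, ∀ m, m < n → ((em m : Fin n) : ℕ) = m :=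
    ⟨fun m => ⟨m % n, Nat.mod_lt _ hnpos⟩, fun m hm => Nat.mod_eq_of_lt hm⟩
  have hemInj : ∀ m m', m < n → m' < n → em m = em m' → m = m' := by
    intro m m' hm hm' h
    have := congrArg (Fin.val) h
    rwa [hem m hm, hem m' hm'] at this
  set π : Equiv.Perm (Fin n) := Equiv.swap (em (aa v)) (em (bb v)) with hπ
  have key : ∀ t, t < j →
      (((π (em (aa t))) : ℕ) = if t = v then bb t else aa t) ∧
      (((π (em (bb t))) : ℕ) = if t = v then aa t else bb t) := by
    intro t htj
    by_cases hv : t = v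
    · subst hv
      constructor
      · rw [if_pos rfl, hπ, Equiv.swap_apply_left, hem _ (hbound t htj).2]
      · rw [if_pos rfl, hπ, Equiv.swap_apply_right, hem _ (hbound t htj).1]
    · have h1 : em (aa t) ≠ em (aa v) := fun hc =>
        hv ((hd t htj v hvj).1 (hemInj _ _ (hbound t htj).1 (hbound v hvj).1 hc))
      have h2 : em (aa t) ≠ em (bb v) := fun hc =>
        (hd t htj v hvj).2.2 (hemInj _ _ (hbound t htj).1 (hbound v hvj).2 hc)
      have h3 : em (bb t) ≠ em (bb v) := fun hc =>
        hv ((hd t htj v hvj).2.1 (hemInj _ _ (hbound t htj).2 (hbound v hvj).2 hc))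
      have h4 : em (bb t) ≠ em (aa v) := fun hc =>
        (hd v hvj t htj).2.2 ((hemInj _ _ (hbound t htj).2 (hbound v hvj).1 hc).symm)
      constructor
      · rw [if_neg hv, hπ, Equiv.swap_apply_of_ne_of_ne h1 h2, hem _ (hbound t htj).1]
      · rw [if_neg hv, hπ, Equiv.swap_apply_of_ne_of_ne h4 h3, hem _ (hbound t htj).2]
  obtain ⟨F, hFdef⟩ : ∃ F : (Fin n → ℝ) → ℝ, F = fun x =>
      (x (em (aa t1)) - x (em (bb t1))) * (x (em (aa t2)) - x (em (bb t2))) *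
      (x (em (aa t3)) - x (em (bb t3))) * (x (em (aa t4)) - x (em (bb t4))) := ⟨_, rfl⟩
  have hFm : Measurable F := by
    rw [hFdef]
    apply Measurable.mul
    apply Measurable.mul
    apply Measurable.mul
    all_goals exact (measurable_pi_apply _).sub (measurable_pi_apply _)
  have ht := transfer P ξ hmeas hexch n π F hFm
  have hR : (fun ω => F (fun i => ξ i.val ω)) = fun ω =>
      (ξ (aa t1) ω - ξ (bb t1) ω) * (ξ (aa t2) ω - ξ (bb t2) ω) *
      (ξ (aa t3) ω - ξ (bb t3) ω) * (ξ (aa t4) ω - ξ (bb t4) ω) := by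
    funext ω
    simp only [hFdef]
    rw [hem _ (hbound t1 ht1).1, hem _ (hbound t1 ht1).2, hem _ (hbound t2 ht2).1,
      hem _ (hbound t2 ht2).2, hem _ (hbound t3 ht3).1, hem _ (hbound t3 ht3).2,
      hem _ (hbound t4 ht4).1, hem _ (hbound t4 ht4).2]
  have hL : (fun ω => F (fun i => ξ (π i).val ω)) = fun ω =>
      -((ξ (aa t1) ω - ξ (bb t1) ω) * (ξ (aa t2) ω - ξ (bb t2) ω) *
        (ξ (aa t3) ω - ξ (bb t3) ω) * (ξ (aa t4) ω - ξ (bb t4) ω)) := by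
    funext ω
    simp only [hFdef]
    rw [(key t1 ht1).1, (key t1 ht1).2, (key t2 ht2).1, (key t2 ht2).2,
      (key t3 ht3).1, (key t3 ht3).2, (key t4 ht4).1, (key t4 ht4).2]
    have e : ∀ t, ξ (if t = v then bb t else aa t) ω - ξ (if t = v then aa t else bb t) ω
        = (if t = v then (-1:ℝ) else 1) * (ξ (aa t) ω - ξ (bb t) ω) := by
      intro t
      by_cases h : t = v
      · rw [if_pos h, if_pos h, if_pos h]; ring
      · rw [if_neg h, if_neg h, if_neg h]; ring
    rw [e t1, e t2, e t3, e t4]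
    have hre : ((if t1 = v then (-1:ℝ) else 1) * (ξ (aa t1) ω - ξ (bb t1) ω)) *
        ((if t2 = v then (-1:ℝ) else 1) * (ξ (aa t2) ω - ξ (bb t2) ω)) *
        ((if t3 = v then (-1:ℝ) else 1) * (ξ (aa t3) ω - ξ (bb t3) ω)) *
        ((if t4 = v then (-1:ℝ) else 1) * (ξ (aa t4) ω - ξ (bb t4) ω))
        = ((if t1 = v then (-1:ℝ) else 1) * (if t2 = v then (-1:ℝ) else 1) *
           (if t3 = v then (-1:ℝ) else 1) * (if t4 = v then (-1:ℝ) else 1)) *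
          ((ξ (aa t1) ω - ξ (bb t1) ω) * (ξ (aa t2) ω - ξ (bb t2) ω) *
           (ξ (aa t3) ω - ξ (bb t3) ω) * (ξ (aa t4) ω - ξ (bb t4) ω)) := by ring
    rw [hre, hsign]
    ring
  rw [hR, hL] at ht
  rw [integral_neg] at ht
  linarith [ht]
lemma lemA (j : ℕ) (aa bb : ℕ → ℕ)
    (hd : ∀ i, i < j → ∀ i', i' < j →
      (aa i = aa i' → i = i') ∧ (bb i = bb i' → i = i') ∧ aa i ≠ bb i') :
    ∫ ω, (∑ i ∈ Finset.range j, (ξ (aa i) ω - ξ (bb i) ω))^4 ∂P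
      ≤ 48 * (j:ℝ)^2 * ∫ ω, |ξ 0 ω|^4 ∂P := by
  classical
  have hm4nn : 0 ≤ ∫ ω, |ξ 0 ω|^4 ∂P := integral_nonneg fun ω => by positivity
  have hrw : (fun ω => (∑ i ∈ Finset.range j, (ξ (aa i) ω - ξ (bb i) ω))^4)
      = fun ω => ∑ p ∈ (Finset.range j ×ˢ Finset.range j) ×ˢ (Finset.range j ×ˢ Finset.range j),
          (ξ (aa p.1.1) ω - ξ (bb p.1.1) ω) * (ξ (aa p.1.2) ω - ξ (bb p.1.2) ω) *
          (ξ (aa p.2.1) ω - ξ (bb p.2.1) ω) * (ξ (aa p.2.2) ω - ξ (bb p.2.2) ω) :=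
    funext fun ω => sum_pow_four_s11 (Finset.range j) _
  calc ∫ ω, (∑ i ∈ Finset.range j, (ξ (aa i) ω - ξ (bb i) ω))^4 ∂P
      = ∑ p ∈ (Finset.range j ×ˢ Finset.range j) ×ˢ (Finset.range j ×ˢ Finset.range j), ∫ ω,
          (ξ (aa p.1.1) ω - ξ (bb p.1.1) ω) * (ξ (aa p.1.2) ω - ξ (bb p.1.2) ω) *
          (ξ (aa p.2.1) ω - ξ (bb p.2.1) ω) * (ξ (aa p.2.2) ω - ξ (bb p.2.2) ω) ∂P := by
        rw [hrw]
        exact integral_finset_sum _ fun p _ => int_prod4' P _ _ _ _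
          ((hmeas _).sub (hmeas _)) ((hmeas _).sub (hmeas _))
          ((hmeas _).sub (hmeas _)) ((hmeas _).sub (hmeas _))
          (int_diff_pow4 P ξ hmeas hexch hmom4 _ _) (int_diff_pow4 P ξ hmeas hexch hmom4 _ _)
          (int_diff_pow4 P ξ hmeas hexch hmom4 _ _) (int_diff_pow4 P ξ hmeas hexch hmom4 _ _)
    _ ≤ ∑ p ∈ (Finset.range j ×ˢ Finset.range j) ×ˢ (Finset.range j ×ˢ Finset.range j),
          (16 * ∫ ω, |ξ 0 ω|^4 ∂P) *
          ((if p.1.1 = p.1.2 ∧ p.2.1 = p.2.2 then (1:ℝ) else 0) +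
           (if p.1.1 = p.2.1 ∧ p.1.2 = p.2.2 then (1:ℝ) else 0) +
           (if p.1.1 = p.2.2 ∧ p.1.2 = p.2.1 then (1:ℝ) else 0)) := by
        apply Finset.sum_le_sum
        intro p hp
        obtain ⟨hps1, hps2⟩ := Finset.mem_product.mp hp
        obtain ⟨h11, h12⟩ := Finset.mem_product.mp hps1
        obtain ⟨h21, h22⟩ := Finset.mem_product.mp hps2
        have hp11 : p.1.1 < j := Finset.mem_range.mp h11
        have hp12 : p.1.2 < j := Finset.mem_range.mp h12
        have hp21 : p.2.1 < j := Finset.mem_range.mp h21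
        have hp22 : p.2.2 < j := Finset.mem_range.mp h22
        have i1 : (0:ℝ) ≤ if p.1.1 = p.1.2 ∧ p.2.1 = p.2.2 then (1:ℝ) else 0 := by
          split_ifs <;> norm_num
        have i2 : (0:ℝ) ≤ if p.1.1 = p.2.1 ∧ p.1.2 = p.2.2 then (1:ℝ) else 0 := by
          split_ifs <;> norm_num
        have i3 : (0:ℝ) ≤ if p.1.1 = p.2.2 ∧ p.1.2 = p.2.1 then (1:ℝ) else 0 := by
          split_ifs <;> norm_num
        by_cases hpair : (p.1.1 = p.1.2 ∧ p.2.1 = p.2.2) ∨ (p.1.1 = p.2.1 ∧ p.1.2 = p.2.2) ∨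
            (p.1.1 = p.2.2 ∧ p.1.2 = p.2.1)
        · have hub : ∫ ω,
              (ξ (aa p.1.1) ω - ξ (bb p.1.1) ω) * (ξ (aa p.1.2) ω - ξ (bb p.1.2) ω) *
              (ξ (aa p.2.1) ω - ξ (bb p.2.1) ω) * (ξ (aa p.2.2) ω - ξ (bb p.2.2) ω) ∂P
              ≤ 16 * ∫ ω, |ξ 0 ω|^4 ∂P := by
            refine le_trans (integral_prod4_le P _ _ _ _
              ((hmeas _).sub (hmeas _)) ((hmeas _).sub (hmeas _))
              ((hmeas _).sub (hmeas _)) ((hmeas _).sub (hmeas _))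
              (int_diff_pow4 P ξ hmeas hexch hmom4 _ _) (int_diff_pow4 P ξ hmeas hexch hmom4 _ _)
              (int_diff_pow4 P ξ hmeas hexch hmom4 _ _)
              (int_diff_pow4 P ξ hmeas hexch hmom4 _ _)) ?_
            have b1 := integral_diff_pow4_le P ξ hmeas hexch hmom4 (aa p.1.1) (bb p.1.1)
            have b2 := integral_diff_pow4_le P ξ hmeas hexch hmom4 (aa p.1.2) (bb p.1.2)
            have b3 := integral_diff_pow4_le P ξ hmeas hexch hmom4 (aa p.2.1) (bb p.2.1)
            have b4 := integral_diff_pow4_le P ξ hmeas hexch hmom4 (aa p.2.2) (bb p.2.2)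
            linarith
          have hge : (16 * ∫ ω, |ξ 0 ω|^4 ∂P) * 1 ≤ (16 * ∫ ω, |ξ 0 ω|^4 ∂P) *
              ((if p.1.1 = p.1.2 ∧ p.2.1 = p.2.2 then (1:ℝ) else 0) +
               (if p.1.1 = p.2.1 ∧ p.1.2 = p.2.2 then (1:ℝ) else 0) +
               (if p.1.1 = p.2.2 ∧ p.1.2 = p.2.1 then (1:ℝ) else 0)) := by
            apply mul_le_mul_of_nonneg_left _ (by linarith)
            rcases hpair with h | h | h
            · rw [if_pos h]; linarith
            · rw [if_pos h]; linarith
            · rw [if_pos h]; linarith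
          calc _ ≤ 16 * ∫ ω, |ξ 0 ω|^4 ∂P := hub
            _ = (16 * ∫ ω, |ξ 0 ω|^4 ∂P) * 1 := by ring
            _ ≤ _ := hge
        · rw [vanish P ξ hmeas hexch hmom4 j aa bb hd p.1.1 p.1.2 p.2.1 p.2.2
            hp11 hp12 hp21 hp22 hpair]
          exact mul_nonneg (by linarith) (by linarith)
    _ = 48 * (j:ℝ)^2 * ∫ ω, |ξ 0 ω|^4 ∂P := by
        rw [← Finset.mul_sum, count_pairings j]
        ring
omit hmeas hexch hmom4 in
lemma sum_mod_rotate (g : ℕ → ℝ) (N : ℕ) (hN : 0 < N) (i : ℕ) :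
    ∑ s ∈ Finset.range N, g ((s + i) % N) = ∑ s ∈ Finset.range N, g s := by
  haveI : NeZero N := ⟨hN.ne'⟩
  set c : Fin N := ⟨i % N, Nat.mod_lt _ hN⟩ with hc
  rw [← Fin.sum_univ_eq_sum_range (fun s => g ((s + i) % N)) N,
    ← Fin.sum_univ_eq_sum_range (fun s => g s) N]
  have h1 : ∀ s : Fin N, g ((s.val + i) % N) = g ((s + c).val) := by
    intro s
    congr 1
    rw [Fin.add_def]
    simp only [hc]
    conv_lhs => rw [Nat.add_mod, Nat.mod_eq_of_lt s.isLt]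
  rw [Finset.sum_congr rfl fun s _ => h1 s]
  exact Equiv.sum_comp (Equiv.addRight c) (fun s : Fin N => g s.val)

omit hmeas hexch hmom4 in
lemma Adiff_eq (N jj : ℕ) (hN : 0 < N) (ω : Ω) :
    Am ξ (N + jj) ω - Am ξ N ω
      = (1 / (((N + jj : ℕ) : ℝ) * (N : ℝ))) * ∑ q ∈ Finset.range N ×ˢ Finset.range jj,
          (ξ (N + q.2) ω - ξ ((q.1 + q.2) % N) ω) := by
  have hsum : ∑ q ∈ Finset.range N ×ˢ Finset.range jj,
      (ξ (N + q.2) ω - ξ ((q.1 + q.2) % N) ω)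
      = (N : ℝ) * (∑ i ∈ Finset.range jj, ξ (N + i) ω)
        - (jj : ℝ) * (∑ s ∈ Finset.range N, ξ s ω) := by
    rw [Finset.sum_product]
    dsimp only
    rw [Finset.sum_congr rfl fun s (_ : s ∈ Finset.range N) => Finset.sum_sub_distrib _ _]
    rw [Finset.sum_sub_distrib]
    congr 1
    · rw [Finset.sum_const, Finset.card_range, nsmul_eq_mul]
    · rw [Finset.sum_comm]
      rw [Finset.sum_congr rfl fun i (_ : i ∈ Finset.range jj) =>
        sum_mod_rotate (fun m => ξ m ω) N hN i]
      rw [Finset.sum_const, Finset.card_range, nsmul_eq_mul]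
  rw [hsum, Am, Am, Finset.sum_range_add]
  have hNn : (N:ℝ) ≠ 0 := Nat.cast_ne_zero.mpr hN.ne'
  have hNjn : ((N + jj : ℕ):ℝ) ≠ 0 := Nat.cast_ne_zero.mpr (by omega)
  push_cast at hNjn ⊢
  field_simp
  ring

lemma momentBound (N n : ℕ) (hN : 1 ≤ N) (h1 : N ≤ n) (h2 : n ≤ 2*N) :
    Integrable (fun ω => (Am ξ n ω - Am ξ N ω)^4) P ∧
    ∫ ω, (Am ξ n ω - Am ξ N ω)^4 ∂P ≤ 48 * (∫ ω, |ξ 0 ω|^4 ∂P) / n^2 := by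
  classical
  have hm4nn : 0 ≤ ∫ ω, |ξ 0 ω|^4 ∂P := integral_nonneg fun ω => by positivity
  set jj := n - N with hjj
  have hn : n = N + jj := by omega
  have hjN : jj ≤ N := by omega
  have hN0 : 0 < N := hN
  have hn0 : 0 < n := by omega
  set c : ℝ := 1 / (((N + jj : ℕ) : ℝ) * (N : ℝ)) with hcdef
  set X : Ω → ℝ := fun ω => ∑ q ∈ Finset.range N ×ˢ Finset.range jj,
      (ξ (N + q.2) ω - ξ ((q.1 + q.2) % N) ω) with hXdef
  have hfeq : (fun ω => (Am ξ n ω - Am ξ N ω)^4) = fun ω => c^4 * (X ω)^4 := by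
    funext ω
    rw [hn, Adiff_eq ξ N jj hN0 ω, mul_pow]
  have hXint : Integrable (fun ω => (X ω)^4) P := by
    simp only [hXdef]
    exact int_sumdiff_pow4 P ξ hmeas hexch hmom4 (Finset.range N ×ˢ Finset.range jj)
      (fun q => N + q.2) (fun q => (q.1 + q.2) % N)
  constructor
  · rw [hfeq]; exact hXint.const_mul _
  -- Y s bound
  have hYint : ∀ s : ℕ, Integrable (fun ω =>
      (∑ i ∈ Finset.range jj, (ξ (N + i) ω - ξ ((s + i) % N) ω))^4) P := fun s =>
    int_sumdiff_pow4 P ξ hmeas hexch hmom4 (Finset.range jj) (fun i => N + i)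
      (fun i => (s + i) % N)
  have hYbound : ∀ s : ℕ, ∫ ω,
      (∑ i ∈ Finset.range jj, (ξ (N + i) ω - ξ ((s + i) % N) ω))^4 ∂P
      ≤ 48 * (jj:ℝ)^2 * ∫ ω, |ξ 0 ω|^4 ∂P := by
    intro s
    apply lemA P ξ hmeas hexch hmom4 jj (fun i => N + i) (fun i => (s + i) % N)
    intro i hi i' hi'
    refine ⟨fun h => by omega, fun h => ?_, fun h => ?_⟩
    · have hmod : i % N = i' % N := Nat.ModEq.add_left_cancel' s h
      rwa [Nat.mod_eq_of_lt (by omega), Nat.mod_eq_of_lt (by omega)] at hmod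
    · have := Nat.mod_lt (s + i') hN0
      omega
  -- pointwise power bound
  have hptw : ∀ ω, (X ω)^4 ≤ (N:ℝ)^3 * ∑ s ∈ Finset.range N,
      (∑ i ∈ Finset.range jj, (ξ (N + i) ω - ξ ((s + i) % N) ω))^4 := by
    intro ω
    have hXrw : X ω = ∑ s ∈ Finset.range N,
        ∑ i ∈ Finset.range jj, (ξ (N + i) ω - ξ ((s + i) % N) ω) := by
      simp only [hXdef]
      rw [Finset.sum_product]
    rw [hXrw]
    have := pow4_sum_le (Finset.range N)
      (fun s => ∑ i ∈ Finset.range jj, (ξ (N + i) ω - ξ ((s + i) % N) ω))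
    rwa [Finset.card_range] at this
  have hint2 : Integrable (fun ω => (N:ℝ)^3 * ∑ s ∈ Finset.range N,
      (∑ i ∈ Finset.range jj, (ξ (N + i) ω - ξ ((s + i) % N) ω))^4) P :=
    (integrable_finset_sum _ fun s _ => hYint s).const_mul _
  have hXbound : ∫ ω, (X ω)^4 ∂P
      ≤ (N:ℝ)^3 * ((N:ℝ) * (48 * (jj:ℝ)^2 * ∫ ω, |ξ 0 ω|^4 ∂P)) := by
    calc ∫ ω, (X ω)^4 ∂P
        ≤ ∫ ω, (N:ℝ)^3 * ∑ s ∈ Finset.range N,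
            (∑ i ∈ Finset.range jj, (ξ (N + i) ω - ξ ((s + i) % N) ω))^4 ∂P :=
          integral_mono hXint hint2 hptw
      _ = (N:ℝ)^3 * ∑ s ∈ Finset.range N, ∫ ω,
            (∑ i ∈ Finset.range jj, (ξ (N + i) ω - ξ ((s + i) % N) ω))^4 ∂P := by
          rw [integral_const_mul, integral_finset_sum _ fun s _ => hYint s]
      _ ≤ (N:ℝ)^3 * ((N:ℝ) * (48 * (jj:ℝ)^2 * ∫ ω, |ξ 0 ω|^4 ∂P)) := by
          apply mul_le_mul_of_nonneg_left _ (by positivity)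
          calc ∑ s ∈ Finset.range N, ∫ ω,
              (∑ i ∈ Finset.range jj, (ξ (N + i) ω - ξ ((s + i) % N) ω))^4 ∂P
              ≤ ∑ s ∈ Finset.range N, 48 * (jj:ℝ)^2 * ∫ ω, |ξ 0 ω|^4 ∂P :=
                Finset.sum_le_sum fun s _ => hYbound s
            _ = (N:ℝ) * (48 * (jj:ℝ)^2 * ∫ ω, |ξ 0 ω|^4 ∂P) := by
                rw [Finset.sum_const, Finset.card_range, nsmul_eq_mul]
  rw [hfeq, integral_const_mul]
  calc c^4 * ∫ ω, (X ω)^4 ∂P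
      ≤ c^4 * ((N:ℝ)^3 * ((N:ℝ) * (48 * (jj:ℝ)^2 * ∫ ω, |ξ 0 ω|^4 ∂P))) := by
        apply mul_le_mul_of_nonneg_left hXbound (by positivity)
    _ = 48 * (jj:ℝ)^2 * (∫ ω, |ξ 0 ω|^4 ∂P) / (n:ℝ)^4 := by
        rw [hcdef, ← hn]
        have hNn : (N:ℝ) ≠ 0 := Nat.cast_ne_zero.mpr hN0.ne'
        have hnn : (n:ℝ) ≠ 0 := Nat.cast_ne_zero.mpr hn0.ne'
        field_simp
    _ ≤ 48 * (∫ ω, |ξ 0 ω|^4 ∂P) / (n:ℝ)^2 := by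
        rw [div_le_div_iff₀ (by positivity) (by positivity)]
        have hjn : (jj:ℝ) ≤ (n:ℝ) := Nat.cast_le.mpr (by omega)
        have hjnn : (0:ℝ) ≤ (jj:ℝ) := Nat.cast_nonneg _
        have hj2 : (jj:ℝ)^2 ≤ (n:ℝ)^2 := pow_le_pow_left₀ hjnn hjn 2
        have key := mul_le_mul_of_nonneg_left hj2
          (mul_nonneg (mul_nonneg (by norm_num : (0:ℝ) ≤ 48) hm4nn) (sq_nonneg (n:ℝ)))
        nlinarith [key]
lemma ae_tendsto_Am :
    ∃ L : Ω → ℝ, Measurable L ∧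
      ∀ᵐ ω ∂P, Tendsto (fun n => Am ξ n ω) atTop (𝓝 (L ω)) := by
  classical
  have hm4nn : 0 ≤ ∫ ω, |ξ 0 ω|^4 ∂P := integral_nonneg fun ω => by positivity
  set m4 : ℝ := ∫ ω, |ξ 0 ω|^4 ∂P with hm4def
  have hAmeas : ∀ n, Measurable (Am ξ n) := fun n =>
    (Finset.measurable_sum _ fun i _ => hmeas i).div_const _
  have hAint : ∀ n, Integrable (Am ξ n) P := fun n =>
    (integrable_finset_sum _ fun i _ => int_base P ξ hmeas hexch hmom4 i).div_const _
  -- dyadic differences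
  set D : ℕ → Ω → ℝ := fun k ω => Am ξ (2^(k+1)) ω - Am ξ (2^k) ω with hDdef
  have hDmeas : ∀ k, Measurable (D k) := fun k => (hAmeas _).sub (hAmeas _)
  have hDint : ∀ k, Integrable (D k) P := fun k => (hAint _).sub (hAint _)
  have hMB : ∀ k : ℕ, Integrable (fun ω => (D k ω)^4) P ∧
      ∫ ω, (D k ω)^4 ∂P ≤ 48 * m4 / ((2:ℝ)^(k+1))^2 := by
    intro k
    have h := momentBound P ξ hmeas hexch hmom4 (2^k) (2^(k+1))
      Nat.one_le_two_pow (Nat.pow_le_pow_right (by norm_num) (by omega))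
      (le_of_eq (by rw [pow_succ, Nat.mul_comm]))
    refine ⟨h.1, ?_⟩
    have h2 := h.2
    have hcast : ((2^(k+1) : ℕ) : ℝ) = (2:ℝ)^(k+1) := by push_cast; ring
    rw [hcast] at h2
    exact h2
  have hDabs : ∀ k : ℕ, ∫ ω, |D k ω| ∂P ≤ (1 + 48 * m4) * (3/4 : ℝ)^k := by
    intro k
    have ha : (0:ℝ) < (3/4:ℝ)^k := by positivity
    have hbd : ∀ ω, |D k ω| ≤ (3/4:ℝ)^k + (D k ω)^4 / ((3/4:ℝ)^k)^3 :=
      fun ω => abs_le_pow4 ha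
    have hint : Integrable (fun ω => (3/4:ℝ)^k + (D k ω)^4 / ((3/4:ℝ)^k)^3) P :=
      (integrable_const _).add ((hMB k).1.div_const _)
    calc ∫ ω, |D k ω| ∂P
        ≤ ∫ ω, ((3/4:ℝ)^k + (D k ω)^4 / ((3/4:ℝ)^k)^3) ∂P :=
          integral_mono (hDint k).abs hint hbd
      _ = (3/4:ℝ)^k + (∫ ω, (D k ω)^4 ∂P) / ((3/4:ℝ)^k)^3 := by
          rw [integral_add (integrable_const _) ((hMB k).1.div_const _), integral_const,
            integral_div]
          simp
      _ ≤ (3/4:ℝ)^k + (48 * m4 / ((2:ℝ)^(k+1))^2) / ((3/4:ℝ)^k)^3 := by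
          have := (hMB k).2
          have h3 : (0:ℝ) < ((3/4:ℝ)^k)^3 := by positivity
          gcongr
      _ ≤ (3/4:ℝ)^k + 48 * m4 * (3/4:ℝ)^k := by
          have key : (48 * m4 / ((2:ℝ)^(k+1))^2) / ((3/4:ℝ)^k)^3
              = 48 * m4 * (16/27 : ℝ)^k / 4 := by
            have e1 : ((2:ℝ)^(k+1))^2 = 4 * (4:ℝ)^k := by
              rw [← pow_mul]
              rw [show (k+1)*2 = 2*k + 2 by ring]
              rw [pow_add, pow_mul]
              norm_num [mul_comm]
            have e2 : ((3/4:ℝ)^k)^3 = (27/64 : ℝ)^k := by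
              rw [← pow_mul, mul_comm, pow_mul]
              norm_num
            rw [e1, e2]
            rw [div_div]
            have e3 : 4 * (4:ℝ)^k * (27/64:ℝ)^k = 4 * (27/16:ℝ)^k := by
              rw [mul_assoc, ← mul_pow]
              norm_num
            rw [e3]
            rw [div_eq_mul_inv, mul_inv, ← inv_pow]
            have : ((27:ℝ)/16)⁻¹ = 16/27 := by norm_num
            rw [this]
            ring
          rw [key]
          have h16 : (16/27:ℝ)^k ≤ (3/4:ℝ)^k := by
            apply pow_le_pow_left₀ (by norm_num) (by norm_num)
          have : 48 * m4 * (16/27:ℝ)^k / 4 ≤ 48 * m4 * (3/4:ℝ)^k := by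
            have h1 : 48 * m4 * (16/27:ℝ)^k ≤ 48 * m4 * (3/4:ℝ)^k := by
              apply mul_le_mul_of_nonneg_left h16 (by linarith)
            have h2 : (0:ℝ) ≤ 48 * m4 * (16/27:ℝ)^k := by positivity
            linarith
          linarith
      _ = (1 + 48 * m4) * (3/4:ℝ)^k := by ring
  -- a.e. summability of dyadic increments
  have hsumD : ∀ᵐ ω ∂P, Summable (fun k => D k ω) := by
    have hmble : ∀ k, Measurable fun ω => (‖D k ω‖₊ : ℝ≥0∞) := fun k =>
      (hDmeas k).nnnorm.coe_nnreal_ennreal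
    have h1 : ∫⁻ ω, ∑' k, (‖D k ω‖₊ : ℝ≥0∞) ∂P = ∑' k, ∫⁻ ω, (‖D k ω‖₊ : ℝ≥0∞) ∂P :=
      lintegral_tsum fun k => (hmble k).aemeasurable
    have h2 : ∀ k, ∫⁻ ω, (‖D k ω‖₊ : ℝ≥0∞) ∂P ≤ ENNReal.ofReal ((1 + 48*m4) * (3/4:ℝ)^k) := by
      intro k
      rw [show (∫⁻ ω, (‖D k ω‖₊ : ℝ≥0∞) ∂P) = ENNReal.ofReal (∫ ω, ‖D k ω‖ ∂P) from
        (ofReal_integral_norm_eq_lintegral_enorm (hDint k)).symm]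
      apply ENNReal.ofReal_le_ofReal
      calc ∫ ω, ‖D k ω‖ ∂P = ∫ ω, |D k ω| ∂P := by
            apply integral_congr_ae (ae_of_all _ fun ω => Real.norm_eq_abs _)
        _ ≤ _ := hDabs k
    have hgeo : Summable (fun k : ℕ => (1 + 48*m4) * (3/4:ℝ)^k) :=
      (summable_geometric_of_lt_one (by norm_num) (by norm_num)).mul_left _
    have h3 : ∑' k, ∫⁻ ω, (‖D k ω‖₊ : ℝ≥0∞) ∂P
        ≤ ENNReal.ofReal (∑' k, (1 + 48*m4) * (3/4:ℝ)^k) := by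
      rw [ENNReal.ofReal_tsum_of_nonneg (fun k => by positivity) hgeo]
      exact ENNReal.tsum_le_tsum h2
    have h5 : ∫⁻ ω, ∑' k, (‖D k ω‖₊ : ℝ≥0∞) ∂P < ⊤ :=
      lt_of_le_of_lt (h1 ▸ h3) ENNReal.ofReal_lt_top
    have h6 := ae_lt_top (Measurable.ennreal_tsum hmble) h5.ne
    filter_upwards [h6] with ω hω
    have hnn : Summable (fun k => ‖D k ω‖₊) :=
      ENNReal.tsum_coe_ne_top_iff_summable.mp hω.ne
    apply Summable.of_norm
    have := NNReal.summable_coe.mpr hnn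
    simpa [coe_nnnorm] using this
  -- block control
  set E : ℕ → Ω → ℝ := fun n ω => Am ξ n ω - Am ξ (2^(Nat.log 2 n)) ω with hEdef
  have hEMB : ∀ n : ℕ, 1 ≤ n → Integrable (fun ω => (E n ω)^4) P ∧
      ∫ ω, (E n ω)^4 ∂P ≤ 48 * m4 / (n:ℝ)^2 := by
    intro n hn
    have hle : 2^(Nat.log 2 n) ≤ n := Nat.pow_log_le_self 2 (by omega)
    have hlt : n < 2^(Nat.log 2 n + 1) := Nat.lt_pow_succ_log_self (by norm_num) n
    have h := momentBound P ξ hmeas hexch hmom4 (2^(Nat.log 2 n)) n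
      Nat.one_le_two_pow hle (by rw [pow_succ] at hlt; omega)
    exact h
  have hblock : ∀ᵐ ω ∂P, ∀ m : ℕ, ∀ᶠ i in atTop, |E (i+1) ω| ≤ 1/((m:ℝ)+1) := by
    rw [ae_all_iff]
    intro m
    set δ : ℝ := 1/((m:ℝ)+1) with hδdef
    have hδpos : 0 < δ := by positivity
    have hcheb : ∀ i : ℕ, P {ω | δ < |E (i+1) ω|}
        ≤ ENNReal.ofReal ((48 * m4 / ((i:ℝ)+1)^2) / δ^4) := by
      intro i
      have hEint := (hEMB (i+1) (by omega)).1
      have hEb := (hEMB (i+1) (by omega)).2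
      have hmE : Measurable (E (i+1)) := (hAmeas _).sub (hAmeas _)
      have hsub : {ω | δ < |E (i+1) ω|} ⊆
          {ω | ENNReal.ofReal (δ^4) ≤ ENNReal.ofReal ((E (i+1) ω)^4)} := by
        intro ω hω
        simp only [Set.mem_setOf_eq] at hω ⊢
        apply ENNReal.ofReal_le_ofReal
        have h4 : (E (i+1) ω)^4 = |E (i+1) ω|^4 := (pow4_abs _).symm
        rw [h4]
        exact pow_le_pow_left₀ hδpos.le hω.le 4
      calc P {ω | δ < |E (i+1) ω|}
          ≤ P {ω | ENNReal.ofReal (δ^4) ≤ ENNReal.ofReal ((E (i+1) ω)^4)} :=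
            measure_mono hsub
        _ ≤ (∫⁻ ω, ENNReal.ofReal ((E (i+1) ω)^4) ∂P) / ENNReal.ofReal (δ^4) :=
            meas_ge_le_lintegral_div
              (hmE.pow_const 4).ennreal_ofReal.aemeasurable
              (ENNReal.ofReal_pos.mpr (by positivity)).ne'
              ENNReal.ofReal_ne_top
        _ = ENNReal.ofReal (∫ ω, (E (i+1) ω)^4 ∂P) / ENNReal.ofReal (δ^4) := by
            rw [ofReal_integral_eq_lintegral_ofReal hEint
              (ae_of_all _ fun ω => by positivity)]
        _ ≤ ENNReal.ofReal (48 * m4 / (((i:ℕ):ℝ)+1)^2) / ENNReal.ofReal (δ^4) := by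
            apply ENNReal.div_le_div_right
            apply ENNReal.ofReal_le_ofReal
            have hcast : (((i+1:ℕ)):ℝ) = ((i:ℝ)+1) := by push_cast; ring
            rw [← hcast]
            exact hEb
        _ = ENNReal.ofReal ((48 * m4 / ((i:ℝ)+1)^2) / δ^4) :=
            (ENNReal.ofReal_div_of_pos (by positivity)).symm
    have hsummable : Summable (fun i : ℕ => (48 * m4 / ((i:ℝ)+1)^2) / δ^4) := by
      have hbase : Summable (fun i : ℕ => 1 / ((i:ℝ)+1)^2) := by
        have := (summable_nat_add_iff (f := fun n : ℕ => 1 / (n:ℝ)^2) 1).mpr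
          (Real.summable_one_div_nat_pow.mpr (by norm_num))
        apply this.congr
        intro i
        push_cast
        ring
      have : Summable (fun i : ℕ => (48 * m4 / δ^4) * (1 / ((i:ℝ)+1)^2)) :=
        hbase.mul_left _
      apply this.congr
      intro i
      ring
    have htsum : ∑' i, P {ω | δ < |E (i+1) ω|} ≠ ⊤ := by
      apply ne_top_of_le_ne_top _ (ENNReal.tsum_le_tsum hcheb)
      rw [← ENNReal.ofReal_tsum_of_nonneg (fun i => by positivity) hsummable]
      exact ENNReal.ofReal_ne_top
    have hBC := measure_setOf_frequently_eq_zero (μ := P)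
      (p := fun i ω => δ < |E (i+1) ω|) htsum
    have hae : ∀ᵐ ω ∂P, ¬ ∃ᶠ i in atTop, δ < |E (i+1) ω| := by
      rw [ae_iff]
      simpa only [not_not] using hBC
    filter_upwards [hae] with ω hω
    rw [Filter.not_frequently] at hω
    filter_upwards [hω] with i hi
    exact not_lt.mp hi
  -- final assembly
  have hae : ∀ᵐ ω ∂P, ∃ l : ℝ, Tendsto (fun n => Am ξ n ω) atTop (𝓝 l) := by
    filter_upwards [hsumD, hblock] with ω hs hb
    have hpart : ∀ K : ℕ, Am ξ (2^K) ω = Am ξ 1 ω + ∑ k ∈ Finset.range K, D k ω := by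
      intro K
      induction K with
      | zero => simp
      | succ K ih =>
        rw [Finset.sum_range_succ]
        simp only [hDdef]
        simp only [hDdef] at ih
        linarith [ih]
    have hBtend : Tendsto (fun K => Am ξ (2^K) ω) atTop (𝓝 (Am ξ 1 ω + ∑' k, D k ω)) := by
      have h := hs.hasSum.tendsto_sum_nat
      have h2 := (tendsto_const_nhds (x := Am ξ 1 ω) (f := atTop)).add h
      refine Tendsto.congr ?_ h2
      intro K
      exact (hpart K).symm
    have hE0 : Tendsto (fun n => E n ω) atTop (𝓝 0) := by
      rw [NormedAddCommGroup.tendsto_nhds_zero]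
      intro ε hε
      obtain ⟨m, hm⟩ := exists_nat_one_div_lt hε
      obtain ⟨N0, hN0⟩ := Filter.eventually_atTop.mp (hb m)
      rw [Filter.eventually_atTop]
      refine ⟨N0 + 1, fun n hn => ?_⟩
      have h1 : |E ((n-1)+1) ω| ≤ 1/((m:ℝ)+1) := hN0 (n-1) (by omega)
      rw [show (n-1)+1 = n from by omega] at h1
      rw [Real.norm_eq_abs]
      exact lt_of_le_of_lt h1 hm
    have hlog : Tendsto (fun n : ℕ => Nat.log 2 n) atTop atTop := by
      rw [tendsto_atTop_atTop]
      intro b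
      refine ⟨2^b, fun n hn => ?_⟩
      have hb0 : (1:ℕ) ≤ 2^b := Nat.one_le_two_pow
      exact (Nat.le_log_iff_pow_le (by norm_num) (by omega)).mpr hn
    have hcomp : Tendsto (fun n => Am ξ (2^(Nat.log 2 n)) ω) atTop
        (𝓝 (Am ξ 1 ω + ∑' k, D k ω)) := hBtend.comp hlog
    refine ⟨Am ξ 1 ω + ∑' k, D k ω, ?_⟩
    have heq : (fun n => Am ξ n ω) = fun n => Am ξ (2^(Nat.log 2 n)) ω + E n ω := by
      funext n
      simp only [hEdef]
      ring
    rw [heq]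
    simpa using hcomp.add hE0
  obtain ⟨L, hL1, hL2⟩ := measurable_limit_of_tendsto_metrizable_ae
    (fun n => (hAmeas n).aemeasurable) hae
  exact ⟨L, hL1, hL2⟩
end Ctx

/-- For an exchangeable sequence the empirical variances
`V_n = (1/n) Σ ξ_i² - ((1/n) Σ ξ_i)²` converge `P`-almost surely to a random variable `V`,
and `V ≥ 0` almost surely. -/
theorem stmt11 {Ω : Type*} [MeasurableSpace Ω] (P : Measure Ω) [IsProbabilityMeasure P]
    (ξ : ℕ → Ω → ℝ) (hmeas : ∀ i, Measurable (ξ i)) (hexch : Exchangeable P ξ)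
    (hmom : ∀ p : ℕ, Integrable (fun ω => |ξ 0 ω| ^ p) P) :
    ∃ V : Ω → ℝ, Measurable V ∧
      (∀ᵐ ω ∂P,
        Tendsto (fun n : ℕ =>
            (∑ i ∈ Finset.range n, (ξ i ω) ^ 2) / n -
              ((∑ i ∈ Finset.range n, ξ i ω) / n) ^ 2)
          atTop (𝓝 (V ω))) ∧
      (∀ᵐ ω ∂P, 0 ≤ V ω) := by
  classical
  set ξsq : ℕ → Ω → ℝ := fun i ω => (ξ i ω)^2 with hξsqdef
  have hmeas' : ∀ i, Measurable (ξsq i) := fun i => (hmeas i).pow_const 2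
  have hexch' : Exchangeable P ξsq := by
    intro n π
    have hsq : Measurable (fun x : Fin n → ℝ => fun i => (x i)^2) :=
      measurable_pi_lambda _ fun i => (measurable_pi_apply i).pow_const 2
    have h1 : Measurable (fun ω (i : Fin n) => ξ (π i).val ω) :=
      measurable_pi_lambda _ fun i => hmeas _
    have h2 : Measurable (fun ω (i : Fin n) => ξ i.val ω) :=
      measurable_pi_lambda _ fun i => hmeas _
    have e1 : (fun ω (i : Fin n) => ξsq (π i).val ω)
        = (fun x : Fin n → ℝ => fun i => (x i)^2) ∘ (fun ω (i : Fin n) => ξ (π i).val ω) := rfl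
    have e2 : (fun ω (i : Fin n) => ξsq i.val ω)
        = (fun x : Fin n → ℝ => fun i => (x i)^2) ∘ (fun ω (i : Fin n) => ξ i.val ω) := rfl
    rw [e1, e2, ← Measure.map_map hsq h1, ← Measure.map_map hsq h2, hexch n π]
  have hmom4 : Integrable (fun ω => |ξ 0 ω| ^ 4) P := hmom 4
  have hmom4' : Integrable (fun ω => |ξsq 0 ω| ^ 4) P := by
    have heq : (fun ω => |ξsq 0 ω| ^ 4) = fun ω => |ξ 0 ω| ^ 8 := by
      funext ω
      simp only [hξsqdef]
      rw [abs_pow, ← pow_mul]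
    rw [heq]
    exact hmom 8
  obtain ⟨L, hLmeas, hLt⟩ := ae_tendsto_Am P ξ hmeas hexch hmom4
  obtain ⟨W, hWmeas, hWt⟩ := ae_tendsto_Am P ξsq hmeas' hexch' hmom4'
  refine ⟨fun ω => W ω - (L ω)^2, hWmeas.sub (hLmeas.pow_const 2), ?_, ?_⟩
  · filter_upwards [hLt, hWt] with ω h2 h1
    have h3 := h1.sub (h2.pow 2)
    refine h3.congr fun n => ?_
    simp only [Am, hξsqdef]
  · filter_upwards [hLt, hWt] with ω h2 h1
    have h3 := h1.sub (h2.pow 2)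
    refine ge_of_tendsto h3 ?_
    rw [Filter.eventually_atTop]
    refine ⟨1, fun n hn => ?_⟩
    have hn0 : (0:ℝ) < (n:ℝ) := by exact_mod_cast hn
    have hcs : (∑ i ∈ Finset.range n, ξ i ω)^2
        ≤ (n:ℝ) * ∑ i ∈ Finset.range n, (ξ i ω)^2 := by
      have := sq_sum_le_card_mul_sum_sq (s := Finset.range n) (f := fun i => ξ i ω)
      rwa [Finset.card_range] at this
    simp only [Am, hξsqdef]
    rw [sub_nonneg, div_pow, div_le_div_iff₀ (by positivity) hn0]
    nlinarith [mul_le_mul_of_nonneg_right hcs hn0.le]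
end
end
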